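/- arXiv:1003.2010 — 5 statements merged into one kernel-verified Lean document; each statement's English description precedes it below -/
import Mathlib

section
/- Fix an integer n ≥ 1 and let μ_n be the limiting spectral measure, i.e., the unique probability measure on ℝ whose k-th moment is M_{k,n} = lim_{N→∞} M_{k,n;N} for every k ≥ 1. Then μ_n has unbounded support: for every B > 0, μ_n(ℝ \ [−B, B]) > 0. -/
open MeasureTheory Filter Finset

noncomputable section

/-- The link function `ψ_N(i,j) = min(r, P-1-r)` where `P = N/2^n` and
`r` is the residue of `|i-j|` modulo `P`. -/
def psi (n N i j : ℕ) : ℕ :=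
  min ((((i : ℤ) - (j : ℤ)).natAbs) % (N / 2 ^ n))
    (N / 2 ^ n - 1 - (((i : ℤ) - (j : ℤ)).natAbs) % (N / 2 ^ n))

/-- Cyclic successor on `Fin k`. -/
def cycSucc {k : ℕ} (j : Fin k) : Fin k := ⟨(j.val + 1) % k, Nat.mod_lt _ j.pos⟩

/-- The value of the link function on the `j`-th edge of the cyclic tuple `i`,
where indices in `{1,…,N}` are represented by `Fin N` shifted by one. -/
def edgePsi (n N : ℕ) {k : ℕ} (i : Fin k → Fin N) (j : Fin k) : ℕ :=
  psi n N ((i j : ℕ) + 1) ((i (cycSucc j) : ℕ) + 1)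

/-- The average `k`-th moment
`M_{k,n;N} = N^{-(k/2+1)} ∑_{i₁,…,i_k} E[b_{ψ(i₁,i₂)} ⋯ b_{ψ(i_k,i₁)}]`,
with expectation over `b ∈ ℝ^ℕ` w.r.t. the measure `μ`. -/
def avgMoment (μ : Measure (ℕ → ℝ)) (n N k : ℕ) : ℝ :=
  ((N : ℝ) ^ ((k : ℝ) / 2 + 1))⁻¹ *
    ∑ i : Fin k → Fin N, ∫ b : ℕ → ℝ, ∏ j : Fin k, b (edgePsi n N i j) ∂μ

/-- The `N×N` real symmetric Toeplitz matrix whose first row is `2^n` copies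
of a palindrome, built from the sequence `b`. -/
def toepMat (n N : ℕ) (b : ℕ → ℝ) : Matrix (Fin N) (Fin N) ℝ :=
  Matrix.of fun i j => b (psi n N ((i : ℕ) + 1) ((j : ℕ) + 1))

/-- The empirical `m`-th moment `X_{m,n;N}(b) = N^{-(m/2+1)} Tr(A_N(b)^m)`. -/
def empMoment (n N m : ℕ) (b : ℕ → ℝ) : ℝ :=
  ((N : ℝ) ^ ((m : ℝ) / 2 + 1))⁻¹ * Matrix.trace (toepMat n N b ^ m)


-- ===== auxiliary development =====

lemma map_eval_pi (p : Measure ℝ) [IsProbabilityMeasure p]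
    (μprod : Measure (ℕ → ℝ)) [IsProbabilityMeasure μprod]
    (hprod : ∀ (s : Finset ℕ) (A : ℕ → Set ℝ), (∀ i, MeasurableSet (A i)) →
      μprod {b | ∀ i ∈ s, b i ∈ A i} = ∏ i ∈ s, p (A i)) (s : Finset ℕ) :
    Measure.map (fun (b : ℕ → ℝ) (v : ↥s) => b ↑v) μprod = Measure.pi (fun _ : ↥s => p) := by
  have hF : Measurable (fun (b : ℕ → ℝ) (v : ↥s) => b ↑v) :=
    measurable_pi_lambda _ (fun v => measurable_pi_apply (↑v : ℕ))
  refine (Measure.pi_eq fun A hA => ?_).symm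
  rw [Measure.map_apply hF (MeasurableSet.univ_pi hA)]
  set A' : ℕ → Set ℝ := fun i => if h : i ∈ s then A ⟨i, h⟩ else Set.univ with hA'
  have hpre : (fun (b : ℕ → ℝ) (v : ↥s) => b ↑v) ⁻¹' (Set.pi Set.univ A)
      = {b | ∀ i ∈ s, b i ∈ A' i} := by
    ext b
    simp only [Set.mem_preimage, Set.mem_pi, Set.mem_univ, forall_true_left, Set.mem_setOf_eq]
    constructor
    · intro h i hi
      simp only [hA', dif_pos hi]
      exact h ⟨i, hi⟩
    · intro h v
      have := h v.1 v.2
      simpa only [hA', dif_pos v.2] using this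
  rw [hpre, hprod s A' (by
    intro i
    by_cases h : i ∈ s
    · simp only [hA', dif_pos h]; exact hA _
    · simp only [hA', dif_neg h]; exact MeasurableSet.univ)]
  rw [← Finset.prod_attach s (fun i => p (A' i))]
  rw [Finset.univ_eq_attach]
  refine Finset.prod_congr rfl fun x _ => ?_
  simp only [hA', dif_pos x.2]

lemma integral_prod_pow (p : Measure ℝ) [IsProbabilityMeasure p]
    (μprod : Measure (ℕ → ℝ)) [IsProbabilityMeasure μprod]
    (hprod : ∀ (s : Finset ℕ) (A : ℕ → Set ℝ), (∀ i, MeasurableSet (A i)) →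
      μprod {b | ∀ i ∈ s, b i ∈ A i} = ∏ i ∈ s, p (A i))
    {m : ℕ} (e : Fin m → ℕ) :
    ∫ b : ℕ → ℝ, ∏ j : Fin m, b (e j) ∂μprod
      = ∏ v ∈ Finset.image e Finset.univ,
          ∫ x : ℝ, x ^ (Finset.univ.filter fun j => e j = v).card ∂p := by
  classical
  set s := Finset.image e Finset.univ with hs
  set c : ℕ → ℕ := fun v => (Finset.univ.filter fun j => e j = v).card with hc
  have h1 : ∀ b : ℕ → ℝ, ∏ j : Fin m, b (e j) = ∏ v ∈ s, (b v) ^ (c v) := by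
    intro b
    exact Finset.prod_comp (fun x => b x) e
  simp_rw [h1]
  have hF : Measurable (fun (b : ℕ → ℝ) (v : ↥s) => b ↑v) :=
    measurable_pi_lambda _ (fun v => measurable_pi_apply (↑v : ℕ))
  have h2 : ∀ b : ℕ → ℝ, ∏ v ∈ s, (b v) ^ (c v)
      = ∏ v : ↥s, ((fun (w : ↥s) => b ↑w) v) ^ (c ↑v) := by
    intro b
    rw [Finset.univ_eq_attach, Finset.prod_attach s (fun v => (b v) ^ (c v))]
  simp_rw [h2]
  have hmeas : Measurable (fun (y : ↥s → ℝ) => ∏ v : ↥s, (y v) ^ (c ↑v)) := by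
    exact Finset.measurable_prod _ (fun v _ => (measurable_pi_apply v).pow_const _)
  rw [← integral_map hF.aemeasurable hmeas.aestronglyMeasurable]
  rw [map_eval_pi p μprod hprod s]
  letI : MeasureSpace ℝ := ⟨p⟩
  haveI : SigmaFinite (volume : Measure ℝ) := inferInstanceAs (SigmaFinite p)
  have hvol : Measure.pi (fun _ : ↥s => p) = (volume : Measure (↥s → ℝ)) := rfl
  rw [hvol]
  rw [← hvol, MeasureTheory.integral_fintype_prod_eq_prod (fun (v : ↥s) (x : ℝ) => x ^ (c ↑v))]
  exact Finset.prod_attach s (fun v => ∫ x : ℝ, x ^ (c v) ∂p)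

lemma psi_fiber_card (n N : ℕ) (hdiv : N = 2 ^ n * (N / 2 ^ n)) (hP : 0 < N / 2 ^ n)
    (a : Fin N) (v : ℕ) :
    (Finset.univ.filter fun m : Fin N => psi n N ((a : ℕ) + 1) ((m : ℕ) + 1) = v).card
      ≤ 2 ^ (n + 2) := by
  classical
  set P := N / 2 ^ n with hPdef
  have hd : ∀ m : Fin N, ((((a : ℕ) + 1 : ℕ) : ℤ) - (((m : ℕ) + 1 : ℕ) : ℤ)).natAbs
      = if (m : ℕ) ≤ (a : ℕ) then (a : ℕ) - (m : ℕ) else (m : ℕ) - (a : ℕ) := by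
    intro m
    rcases le_or_gt (m : ℕ) (a : ℕ) with h | h
    · rw [if_pos h]; omega
    · rw [if_neg (by omega)]; omega
  set d : Fin N → ℕ := fun m =>
    ((((a : ℕ) + 1 : ℕ) : ℤ) - (((m : ℕ) + 1 : ℕ) : ℤ)).natAbs with hddef
  have hdlt : ∀ m : Fin N, d m < N := by
    intro m
    have h1 := hd m
    have := a.isLt; have := m.isLt
    simp only [hddef]; omega
  have hdivlt : ∀ m : Fin N, d m / P < 2 ^ n := by
    intro m
    have h2 := hdlt m
    rw [Nat.div_lt_iff_lt_mul hP]
    rw [Nat.mul_comm] at hdiv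
    have h3 : P * 2 ^ n = 2 ^ n * P := Nat.mul_comm _ _
    omega
  have hcard : Fintype.card (Bool × Fin (2 ^ n) × Bool) = 2 ^ (n + 2) := by
    simp [Fintype.card_prod]; ring
  rw [← hcard]
  rw [← Finset.card_univ]
  refine Finset.card_le_card_of_injOn
      (fun m : Fin N => ((decide ((m : ℕ) ≤ (a : ℕ))), (⟨d m / P, hdivlt m⟩ : Fin (2 ^ n)),
        (decide (d m % P = v)))) (fun m _ => Finset.mem_univ _) ?_
  · intro m1 h1 m2 h2 heq
    simp only [Finset.mem_coe, Finset.mem_filter, Finset.mem_univ, true_and] at h1 h2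
    simp only [Prod.mk.injEq, Fin.mk.injEq, decide_eq_decide] at heq
    obtain ⟨hb1, hq, hb3⟩ := heq
    -- recover remainders
    have hr1 : d m1 % P < P := Nat.mod_lt _ hP
    have hr2 : d m2 % P < P := Nat.mod_lt _ hP
    have hpsi1 : min (d m1 % P) (P - 1 - d m1 % P) = v := h1
    have hpsi2 : min (d m2 % P) (P - 1 - d m2 % P) = v := h2
    have hrr : d m1 % P = d m2 % P := by
      by_cases hcase : d m1 % P = v
      · have : d m2 % P = v := hb3.mp hcase
        omega
      · have h2c : ¬ (d m2 % P = v) := fun hc => hcase (hb3.mpr hc)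
        omega
    have hdd : d m1 = d m2 := by
      have e1 := Nat.div_add_mod (d m1) P
      have e2 := Nat.div_add_mod (d m2) P
      rw [hq] at e1
      omega
    have hd1 := hd m1; have hd2 := hd m2
    have : (m1 : ℕ) = (m2 : ℕ) := by
      simp only [hddef] at hdd hd1 hd2
      by_cases hc : (m1 : ℕ) ≤ (a : ℕ)
      · have hc2 : (m2 : ℕ) ≤ (a : ℕ) := hb1.mp hc
        omega
      · have hc2 : ¬ ((m2 : ℕ) ≤ (a : ℕ)) := fun h => hc (hb1.mpr h)
        omega
    exact Fin.ext this

namespace BadCount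

variable (n N : ℕ) {K : ℕ}

/-- multiplicity of the value of edge `j`. -/
def multE (i : Fin K → Fin N) (j : Fin K) : ℕ :=
  (Finset.univ.filter fun j' => edgePsi n N i j' = edgePsi n N i j).card

/-- first edge with the same value as edge `j`. -/
def firstIdx (i : Fin K → Fin N) (j : Fin K) : Fin K :=
  (Finset.univ.filter fun j' => edgePsi n N i j' = edgePsi n N i j).min'
    ⟨j, by simp⟩

lemma firstIdx_le (i : Fin K → Fin N) (j : Fin K) : firstIdx n N i j ≤ j :=
  Finset.min'_le _ _ (by simp)

lemma edgePsi_firstIdx (i : Fin K → Fin N) (j : Fin K) :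
    edgePsi n N i (firstIdx n N i j) = edgePsi n N i j := by
  have := Finset.min'_mem (Finset.univ.filter fun j' => edgePsi n N i j' = edgePsi n N i j)
    ⟨j, by simp⟩
  simpa [firstIdx] using this

lemma firstIdx_congr (i : Fin K → Fin N) {j1 j2 : Fin K}
    (h : edgePsi n N i j1 = edgePsi n N i j2) : firstIdx n N i j1 = firstIdx n N i j2 := by
  unfold firstIdx
  congr 1
  rw [h]

lemma firstIdx_idem (i : Fin K → Fin N) (j : Fin K) :
    firstIdx n N i (firstIdx n N i j) = firstIdx n N i j := by
  exact firstIdx_congr n N i (edgePsi_firstIdx n N i j)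

/-- The number of fixed points of `firstIdx` equals the number of distinct edge values. -/
lemma card_fixed_eq_card_image (i : Fin K → Fin N) :
    (Finset.univ.filter fun j => firstIdx n N i j = j).card
      = (Finset.univ.image (edgePsi n N i)).card := by
  classical
  apply Finset.card_bij (fun j _ => edgePsi n N i j)
  · intro j hj
    exact Finset.mem_image_of_mem _ (Finset.mem_univ j)
  · intro j1 h1 j2 h2 h
    simp only [Finset.mem_filter] at h1 h2
    have := firstIdx_congr n N i h
    rw [h1.2, h2.2] at this
    exact this
  · intro v hv
    rcases Finset.mem_image.mp hv with ⟨j, _, rfl⟩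
    exact ⟨firstIdx n N i j, Finset.mem_filter.mpr ⟨Finset.mem_univ _, firstIdx_idem n N i j⟩,
      edgePsi_firstIdx n N i j⟩

lemma card_image_le_of_bad {k : ℕ} (i : Fin (2 * k) → Fin N)
    (hbad : (∀ j, 2 ≤ multE n N i j) ∧ ∃ j, 3 ≤ multE n N i j) :
    (Finset.univ.image (edgePsi n N i)).card + 1 ≤ k := by
  classical
  set S := Finset.univ.image (edgePsi n N i) with hS
  have hsum : ∑ v ∈ S, (Finset.univ.filter fun j => edgePsi n N i j = v).card = 2 * k := by
    rw [← Finset.card_eq_sum_card_image]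
    simp
  obtain ⟨j0, hj0⟩ := hbad.2
  set v0 := edgePsi n N i j0 with hv0
  have hv0S : v0 ∈ S := Finset.mem_image_of_mem _ (Finset.mem_univ j0)
  have hsplit : ∑ v ∈ S, (Finset.univ.filter fun j => edgePsi n N i j = v).card
      = (Finset.univ.filter fun j => edgePsi n N i j = v0).card
        + ∑ v ∈ S.erase v0, (Finset.univ.filter fun j => edgePsi n N i j = v).card :=
    (Finset.add_sum_erase _ _ hv0S).symm
  have h3 : 3 ≤ (Finset.univ.filter fun j => edgePsi n N i j = v0).card := hj0
  have h2 : ∀ v ∈ S.erase v0, 2 ≤ (Finset.univ.filter fun j => edgePsi n N i j = v).card := by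
    intro v hv
    rcases Finset.mem_image.mp (Finset.mem_of_mem_erase hv) with ⟨j, _, rfl⟩
    exact hbad.1 j
  have hge : 2 * (S.erase v0).card ≤ ∑ v ∈ S.erase v0,
      (Finset.univ.filter fun j => edgePsi n N i j = v).card := by
    calc 2 * (S.erase v0).card = ∑ _v ∈ S.erase v0, 2 := by
          rw [Finset.sum_const, smul_eq_mul, Nat.mul_comm]
    _ ≤ _ := Finset.sum_le_sum h2
  have hcerase : (S.erase v0).card = S.card - 1 := Finset.card_erase_of_mem hv0S
  have hScard : 1 ≤ S.card := Finset.card_pos.mpr ⟨v0, hv0S⟩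
  omega

/-- rank of an element in a finset -/
def rank (S : Finset (Fin N)) (x : Fin N) : ℕ := (S.filter fun y => y < x).card

lemma rank_lt_card {S : Finset (Fin N)} {x : Fin N} (hx : x ∈ S) : rank N S x < S.card := by
  have hsub : S.filter (fun y => y < x) ⊆ S.erase x := by
    intro y hy
    simp only [Finset.mem_filter] at hy
    exact Finset.mem_erase.mpr ⟨ne_of_lt hy.2, hy.1⟩
  calc rank N S x ≤ (S.erase x).card := Finset.card_le_card hsub
  _ < S.card := by
      have := Finset.card_erase_of_mem hx
      have := Finset.card_pos.mpr ⟨x, hx⟩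
      omega

lemma rank_injOn {S : Finset (Fin N)} {x y : Fin N} (hx : x ∈ S) (hy : y ∈ S)
    (h : rank N S x = rank N S y) : x = y := by
  by_contra hne
  wlog hlt : x < y generalizing x y
  · exact this hy hx h.symm (Ne.symm hne) (by omega)
  have hss : S.filter (fun z => z < x) ⊂ S.filter (fun z => z < y) := by
    constructor
    · intro z hz
      simp only [Finset.mem_filter] at hz ⊢
      exact ⟨hz.1, lt_trans hz.2 hlt⟩
    · intro hsub
      have : x ∈ S.filter (fun z => z < y) := Finset.mem_filter.mpr ⟨hx, hlt⟩
      have := hsub this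
      simp only [Finset.mem_filter] at this
      exact absurd this.2 (lt_irrefl x)
  have := Finset.card_lt_card hss
  unfold rank at h
  omega


section Enc
variable {n N : ℕ} {k : ℕ} (hk : 0 < 2 * k)

/-- the solution set for following an old edge -/
def solSet (n N : ℕ) {k : ℕ} (i : Fin (2 * k) → Fin N) (f : Fin (2 * k) → Fin (2 * k))
    (j : Fin (2 * k)) : Finset (Fin N) :=
  Finset.univ.filter fun m : Fin N =>
    psi n N ((i j : ℕ) + 1) ((m : ℕ) + 1) = edgePsi n N i (f j)

/-- the encoding of a tuple -/
def enc (n N : ℕ) {k : ℕ} (hk : 0 < 2 * k) (f : Fin (2 * k) → Fin (2 * k))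
    (i : Fin (2 * k) → Fin N) : Fin N × (Fin (2 * k) → ℕ) :=
  (i ⟨0, hk⟩, fun j => if f j = j then (i (cycSucc j) : ℕ)
    else rank N (solSet n N i f j) (i (cycSucc j)))

lemma mem_solSet (i : Fin (2 * k) → Fin N) (f : Fin (2 * k) → Fin (2 * k))
    (hf : ∀ j, edgePsi n N i (f j) = edgePsi n N i j) (j : Fin (2 * k)) :
    i (cycSucc j) ∈ solSet n N i f j := by
  simp only [solSet, Finset.mem_filter, Finset.mem_univ, true_and]
  rw [hf j]
  rfl

lemma enc_injOn (f : Fin (2 * k) → Fin (2 * k)) (i1 i2 : Fin (2 * k) → Fin N)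
    (h1 : BadCount.firstIdx n N i1 = f) (h2 : BadCount.firstIdx n N i2 = f)
    (henc : enc n N hk f i1 = enc n N hk f i2) : i1 = i2 := by
  have hf1 : ∀ j, edgePsi n N i1 (f j) = edgePsi n N i1 j := by
    intro j; rw [← h1]; exact BadCount.edgePsi_firstIdx n N i1 j
  have hf2 : ∀ j, edgePsi n N i2 (f j) = edgePsi n N i2 j := by
    intro j; rw [← h2]; exact BadCount.edgePsi_firstIdx n N i2 j
  have hfle : ∀ j, f j ≤ j := by
    intro j; rw [← h1]; exact BadCount.firstIdx_le n N i1 j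
  have h0 : i1 ⟨0, hk⟩ = i2 ⟨0, hk⟩ := congrArg Prod.fst henc
  have hsnd : ∀ j, (if f j = j then (i1 (cycSucc j) : ℕ)
      else rank N (solSet n N i1 f j) (i1 (cycSucc j)))
      = (if f j = j then (i2 (cycSucc j) : ℕ)
      else rank N (solSet n N i2 f j) (i2 (cycSucc j))) :=
    fun j => congrFun (congrArg Prod.snd henc) j
  have key : ∀ m : ℕ, ∀ hm : m < 2 * k, i1 ⟨m, hm⟩ = i2 ⟨m, hm⟩ := by
    intro m
    induction m using Nat.strong_induction_on with
    | _ m IH =>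
      intro hm
      cases m with
      | zero => exact h0
      | succ m' =>
        have hm' : m' < 2 * k := by omega
        set j : Fin (2 * k) := ⟨m', hm'⟩ with hjdef
        have hsucc : cycSucc j = ⟨m' + 1, hm⟩ := by
          simp only [cycSucc, hjdef]
          exact Fin.ext (by simp [Nat.mod_eq_of_lt hm])
        have hj : i1 j = i2 j := IH m' (by omega) hm'
        have hs := hsnd j
        by_cases hfj : f j = j
        · rw [if_pos hfj, if_pos hfj] at hs
          rw [← hsucc]
          exact Fin.ext hs
        · rw [if_neg hfj, if_neg hfj] at hs
          have hflt : (f j : ℕ) < m' := by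
            have h5 : (f j : ℕ) ≤ (j : ℕ) := Fin.le_def.mp (hfle j)
            have hjv : (j : ℕ) = m' := rfl
            have hne : (f j : ℕ) ≠ (j : ℕ) := fun hc => hfj (Fin.ext hc)
            omega
          have hcs : cycSucc (f j) = ⟨(f j : ℕ) + 1, by omega⟩ := by
            exact Fin.ext (by simp [cycSucc, Nat.mod_eq_of_lt (show (f j : ℕ) + 1 < 2*k by omega)])
          have e1 : i1 (f j) = i2 (f j) := by
            have := IH (f j : ℕ) (by omega) (f j).isLt
            simpa using this
          have e2 : i1 (cycSucc (f j)) = i2 (cycSucc (f j)) := by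
            rw [hcs]
            exact IH ((f j : ℕ) + 1) (by omega) (by omega)
          have hval : edgePsi n N i1 (f j) = edgePsi n N i2 (f j) := by
            unfold edgePsi
            rw [e1, e2]
          have hSeq : solSet n N i1 f j = solSet n N i2 f j := by
            unfold solSet
            rw [hj, hval]
          rw [hSeq] at hs
          have hmem1 : i1 (cycSucc j) ∈ solSet n N i2 f j := by
            rw [← hSeq]; exact mem_solSet i1 f hf1 j
          have hmem2 : i2 (cycSucc j) ∈ solSet n N i2 f j := mem_solSet i2 f hf2 j
          have := rank_injOn N hmem1 hmem2 hs
          rw [← hsucc]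
          exact this
  funext j
  have := key j.val j.isLt
  simpa using this

lemma enc_mem (hdiv : N = 2 ^ n * (N / 2 ^ n)) (hP : 0 < N / 2 ^ n)
    (f : Fin (2 * k) → Fin (2 * k)) (i : Fin (2 * k) → Fin N)
    (h1 : BadCount.firstIdx n N i = f) :
    enc n N hk f i ∈ (Finset.univ : Finset (Fin N)) ×ˢ
      Fintype.piFinset (fun j : Fin (2 * k) =>
        Finset.range (if f j = j then N else 2 ^ (n + 2))) := by
  rw [Finset.mem_product]
  refine ⟨Finset.mem_univ _, ?_⟩
  rw [Fintype.mem_piFinset]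
  intro j
  rw [Finset.mem_range]
  simp only [enc]
  by_cases hfj : f j = j
  · rw [if_pos hfj, if_pos hfj]
    exact (i (cycSucc j)).isLt
  · rw [if_neg hfj, if_neg hfj]
    have hf : ∀ j, edgePsi n N i (f j) = edgePsi n N i j := by
      intro j; rw [← h1]; exact BadCount.edgePsi_firstIdx n N i j
    have hmem := mem_solSet i f hf j
    have hlt := rank_lt_card N hmem
    have hcard : (solSet n N i f j).card ≤ 2 ^ (n + 2) :=
      psi_fiber_card n N hdiv hP (i j) (edgePsi n N i (f j))
    omega

lemma target_card (hN : 0 < N) (hkk : 1 ≤ k) (f : Fin (2 * k) → Fin (2 * k))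
    (hfix : (Finset.univ.filter fun j => f j = j).card + 1 ≤ k) :
    ((Finset.univ : Finset (Fin N)) ×ˢ
      Fintype.piFinset (fun j : Fin (2 * k) =>
        Finset.range (if f j = j then N else 2 ^ (n + 2)))).card
      ≤ N ^ k * (2 ^ (n + 2)) ^ (2 * k) := by
  classical
  rw [Finset.card_product, Fintype.card_piFinset]
  simp only [Finset.card_range, Finset.card_univ, Fintype.card_fin]
  have hsplit : (∏ x : Fin (2 * k), if f x = x then N else 2 ^ (n + 2))
      = N ^ (Finset.univ.filter fun j => f j = j).card
        * (2 ^ (n + 2)) ^ (Finset.univ.filter fun j => ¬ (f j = j)).card := by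
    rw [Finset.prod_ite (fun _ => N) (fun _ => 2 ^ (n + 2))]
    rw [Finset.prod_const, Finset.prod_const]
  rw [hsplit, ← Nat.mul_assoc]
  have h1 : N * N ^ (Finset.univ.filter fun j => f j = j).card ≤ N ^ k := by
    rw [← Nat.pow_succ']
    exact Nat.pow_le_pow_right hN (by omega)
  have h2 : (2 ^ (n + 2)) ^ (Finset.univ.filter fun j => ¬ (f j = j)).card
      ≤ (2 ^ (n + 2)) ^ (2 * k) := by
    apply Nat.pow_le_pow_right (Nat.pow_pos (by norm_num))
    calc (Finset.univ.filter fun j => ¬ (f j = j)).card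
        ≤ (Finset.univ : Finset (Fin (2 * k))).card := Finset.card_le_card (Finset.filter_subset _ _)
    _ = 2 * k := by simp
  exact Nat.mul_le_mul h1 h2

end Enc

lemma bad_card (n N k : ℕ) (hkk : 1 ≤ k) (hN : 0 < N)
    (hdiv : N = 2 ^ n * (N / 2 ^ n)) (hP : 0 < N / 2 ^ n) :
    (Finset.univ.filter fun i : Fin (2 * k) → Fin N =>
        (∀ j, 2 ≤ multE n N i j) ∧ ∃ j, 3 ≤ multE n N i j).card
      ≤ (2 * k) ^ (2 * k) * (N ^ k * (2 ^ (n + 2)) ^ (2 * k)) := by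
  classical
  have hk : 0 < 2 * k := by omega
  set Bad := Finset.univ.filter fun i : Fin (2 * k) → Fin N =>
    (∀ j, 2 ≤ multE n N i j) ∧ ∃ j, 3 ≤ multE n N i j with hBad
  have hcover : Bad ⊆ Finset.univ.biUnion
      (fun f : Fin (2 * k) → Fin (2 * k) =>
        Bad.filter fun i => firstIdx n N i = f) := by
    intro i hi
    exact Finset.mem_biUnion.mpr ⟨firstIdx n N i, Finset.mem_univ _,
      Finset.mem_filter.mpr ⟨hi, rfl⟩⟩
  calc Bad.card ≤ (Finset.univ.biUnion
      (fun f : Fin (2 * k) → Fin (2 * k) =>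
        Bad.filter fun i => firstIdx n N i = f)).card := Finset.card_le_card hcover
  _ ≤ ∑ f : Fin (2 * k) → Fin (2 * k), (Bad.filter fun i => firstIdx n N i = f).card :=
      Finset.card_biUnion_le
  _ ≤ ∑ _f : Fin (2 * k) → Fin (2 * k), N ^ k * (2 ^ (n + 2)) ^ (2 * k) := by
      apply Finset.sum_le_sum
      intro f _
      rcases Finset.eq_empty_or_nonempty (Bad.filter fun i => firstIdx n N i = f) with he | hne
      · rw [he]; simp
      · obtain ⟨i0, hi0⟩ := hne
        rw [Finset.mem_filter] at hi0
        have hbad0 : (∀ j, 2 ≤ multE n N i0 j) ∧ ∃ j, 3 ≤ multE n N i0 j :=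
          (Finset.mem_filter.mp hi0.1).2
        have hfix : (Finset.univ.filter fun j => f j = j).card + 1 ≤ k := by
          have h1 : (Finset.univ.filter fun j => f j = j).card
              = (Finset.univ.image (edgePsi n N i0)).card := by
            rw [← hi0.2]
            exact card_fixed_eq_card_image n N i0
          rw [h1]
          exact card_image_le_of_bad n N i0 hbad0
        calc (Bad.filter fun i => firstIdx n N i = f).card
            ≤ ((Finset.univ : Finset (Fin N)) ×ˢ
              Fintype.piFinset (fun j : Fin (2 * k) =>
                Finset.range (if f j = j then N else 2 ^ (n + 2)))).card := by
              apply Finset.card_le_card_of_injOn (enc n N hk f)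
              · intro i hi
                rw [Finset.mem_coe, Finset.mem_filter] at hi
                exact enc_mem hk hdiv hP f i hi.2
              · intro i1 h1 i2 h2 heq
                rw [Finset.mem_coe, Finset.mem_filter] at h1 h2
                exact enc_injOn hk f i1 i2 h1.2 h2.2 heq
        _ ≤ N ^ k * (2 ^ (n + 2)) ^ (2 * k) := target_card hN hkk f hfix
  _ = (2 * k) ^ (2 * k) * (N ^ k * (2 ^ (n + 2)) ^ (2 * k)) := by
      rw [Finset.sum_const, Finset.card_univ, smul_eq_mul]
      congr 1
      simp [Fintype.card_fun]

end BadCount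

namespace Good

lemma div_pow_eq (n u : ℕ) : 2 ^ (n + 1) * u / 2 ^ n = 2 * u := by
  have h : 2 ^ (n + 1) * u = 2 ^ n * (2 * u) := by ring
  rw [h]
  exact Nat.mul_div_cancel_left _ (Nat.pow_pos (by norm_num))

lemma psi_val (n u N x y v : ℕ) (hN : N = 2 ^ (n + 1) * u) (hu : 2 ≤ u)
    (hv : 1 ≤ v) (hv2 : v ≤ u - 1)
    (hcase : x + v = y ∨ y + v = x ∨ x + (2 * u - 1 - v) = y ∨ y + (2 * u - 1 - v) = x) :
    psi n N x y = v := by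
  have hP : N / 2 ^ n = 2 * u := by rw [hN]; exact div_pow_eq n u
  unfold psi
  rw [hP]
  have hd : ((x : ℤ) - y).natAbs = v ∨ ((x : ℤ) - y).natAbs = 2 * u - 1 - v := by omega
  have hdlt : ((x : ℤ) - y).natAbs < 2 * u := by omega
  rw [Nat.mod_eq_of_lt hdlt]
  omega

/-- step up by `v` (staying in the window `[2u+1, 4u-1]`) -/
def stepP (u x v : ℕ) : ℕ := if x + v ≤ 4 * u - 1 then x + v else x + v - (2 * u - 1)

/-- step down by `v` (staying in the window `[2u+1, 4u-1]`) -/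
def stepM (u x v : ℕ) : ℕ := if 2 * u + v < x then x - v else x + (2 * u - 1) - v

lemma stepP_spec (u x v : ℕ) (hu : 2 ≤ u) (hx1 : 2 * u + 1 ≤ x) (hx2 : x ≤ 4 * u - 1)
    (hv1 : 1 ≤ v) (hv2 : v ≤ u - 1) :
    (2 * u + 1 ≤ stepP u x v ∧ stepP u x v ≤ 4 * u - 1)
      ∧ (stepP u x v = x + v ∨ stepP u x v + (2 * u - 1) = x + v) := by
  unfold stepP
  split_ifs with h
  · exact ⟨⟨by omega, h⟩, Or.inl rfl⟩
  · constructor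
    · constructor <;> omega
    · right; omega

lemma stepM_spec (u x v : ℕ) (hu : 2 ≤ u) (hx1 : 2 * u + 1 ≤ x) (hx2 : x ≤ 4 * u - 1)
    (hv1 : 1 ≤ v) (hv2 : v ≤ u - 1) :
    (2 * u + 1 ≤ stepM u x v ∧ stepM u x v ≤ 4 * u - 1)
      ∧ (stepM u x v + v = x ∨ stepM u x v + v = x + (2 * u - 1)) := by
  unfold stepM
  split_ifs with h
  · exact ⟨⟨by omega, by omega⟩, Or.inl (by omega)⟩
  · exact ⟨⟨by omega, by omega⟩, Or.inr (by omega)⟩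

lemma psi_stepP (n u N x v : ℕ) (hN : N = 2 ^ (n + 1) * u) (hu : 2 ≤ u)
    (hx1 : 2 * u + 1 ≤ x) (hx2 : x ≤ 4 * u - 1) (hv1 : 1 ≤ v) (hv2 : v ≤ u - 1) :
    psi n N x (stepP u x v) = v := by
  obtain ⟨_, hcase⟩ := stepP_spec u x v hu hx1 hx2 hv1 hv2
  apply psi_val n u N x (stepP u x v) v hN hu hv1 hv2
  rcases hcase with h | h
  · left; omega
  · right; right; right; omega

lemma psi_stepM (n u N x v : ℕ) (hN : N = 2 ^ (n + 1) * u) (hu : 2 ≤ u)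
    (hx1 : 2 * u + 1 ≤ x) (hx2 : x ≤ 4 * u - 1) (hv1 : 1 ≤ v) (hv2 : v ≤ u - 1) :
    psi n N x (stepM u x v) = v := by
  obtain ⟨_, hcase⟩ := stepM_spec u x v hu hx1 hx2 hv1 hv2
  apply psi_val n u N x (stepM u x v) v hN hu hv1 hv2
  rcases hcase with h | h
  · right; left; omega
  · right; right; left; omega


def vIdx (k : ℕ) (hk : 0 < k) (j : ℕ) : Fin k := ⟨j / 2 % k, Nat.mod_lt _ hk⟩

/-- the value of edge `j` -/
def Vnat (k u : ℕ) (hk : 0 < k) (σ : Equiv.Perm (Fin k)) (vv : Fin k ↪ Fin (u - 1))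
    (j : ℕ) : ℕ :=
  if j % 2 = 0 then (vv (vIdx k hk j)).val + 1 else (vv (σ (vIdx k hk j))).val + 1

lemma Vnat_bounds (k u : ℕ) (hk : 0 < k) (σ : Equiv.Perm (Fin k)) (vv : Fin k ↪ Fin (u - 1))
    (j : ℕ) : 1 ≤ Vnat k u hk σ vv j ∧ Vnat k u hk σ vv j ≤ u - 1 := by
  unfold Vnat
  split_ifs
  · exact ⟨by omega, by have := (vv (vIdx k hk j)).isLt; omega⟩
  · exact ⟨by omega, by have := (vv (σ (vIdx k hk j))).isLt; omega⟩

/-- the walk -/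
def pos (k u : ℕ) (hk : 0 < k) (σ : Equiv.Perm (Fin k)) (vv : Fin k ↪ Fin (u - 1))
    (w : ℕ) : ℕ → ℕ
  | 0 => 2 * u + 1 + w
  | j + 1 => if j % 2 = 0 then stepP u (pos k u hk σ vv w j) (Vnat k u hk σ vv j)
      else stepM u (pos k u hk σ vv w j) (Vnat k u hk σ vv j)

variable {k u : ℕ} (hk : 0 < k) (σ : Equiv.Perm (Fin k)) (vv : Fin k ↪ Fin (u - 1)) {w : ℕ}

lemma pos_window (hu : 2 ≤ u) (hw : w ≤ 2 * u - 2) :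
    ∀ j, 2 * u + 1 ≤ pos k u hk σ vv w j ∧ pos k u hk σ vv w j ≤ 4 * u - 1 := by
  intro j
  induction j with
  | zero => simp only [pos]; omega
  | succ j IH =>
    have hV := Vnat_bounds k u hk σ vv j
    simp only [pos]
    split_ifs
    · exact (stepP_spec u _ _ hu IH.1 IH.2 hV.1 hV.2).1
    · exact (stepM_spec u _ _ hu IH.1 IH.2 hV.1 hV.2).1

lemma psi_pos_step (n N : ℕ) (hN : N = 2 ^ (n + 1) * u) (hu : 2 ≤ u) (hw : w ≤ 2 * u - 2)
    (j : ℕ) : psi n N (pos k u hk σ vv w j) (pos k u hk σ vv w (j + 1))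
      = Vnat k u hk σ vv j := by
  have hwin := pos_window hk σ vv hu hw j
  have hV := Vnat_bounds k u hk σ vv j
  show psi n N _ (if j % 2 = 0 then _ else _) = _
  split_ifs
  · exact psi_stepP n u N _ _ hN hu hwin.1 hwin.2 hV.1 hV.2
  · exact psi_stepM n u N _ _ hN hu hwin.1 hwin.2 hV.1 hV.2

lemma pos_zmod (hu : 2 ≤ u) (hw : w ≤ 2 * u - 2) :
    ∀ m, (pos k u hk σ vv w (2 * m) : ZMod (2 * u - 1))
      = (pos k u hk σ vv w 0 : ℕ)
        + ∑ a ∈ Finset.range m,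
            ((Vnat k u hk σ vv (2 * a) : ZMod (2 * u - 1)) - Vnat k u hk σ vv (2 * a + 1)) := by
  intro m
  induction m with
  | zero => simp
  | succ m IH =>
    have h1 : 2 * (m + 1) = (2 * m + 1) + 1 := by ring
    rw [h1]
    have hwin1 := pos_window hk σ vv hu hw (2 * m)
    have hwin2 := pos_window hk σ vv hu hw (2 * m + 1)
    have hV1 := Vnat_bounds k u hk σ vv (2 * m)
    have hV2 := Vnat_bounds k u hk σ vv (2 * m + 1)
    have hcast : ∀ x y v : ℕ, (x = y + v ∨ x + (2 * u - 1) = y + v) →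
        (x : ZMod (2 * u - 1)) = (y : ℕ) + (v : ℕ) := by
      intro x y v h
      rcases h with h | h
      · rw [h]; push_cast; ring
      · have : ((x + (2 * u - 1) : ℕ) : ZMod (2 * u - 1)) = ((y + v : ℕ) : ZMod (2 * u - 1)) := by
          rw [h]
        push_cast at this
        rw [ZMod.natCast_self] at this
        push_cast
        linear_combination this
    -- step 2m : stepP
    have hstep1 : (pos k u hk σ vv w (2 * m + 1) : ZMod (2 * u - 1))
        = (pos k u hk σ vv w (2 * m) : ℕ) + (Vnat k u hk σ vv (2 * m) : ℕ) := by
      have hspec := (stepP_spec u (pos k u hk σ vv w (2 * m)) (Vnat k u hk σ vv (2 * m))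
        hu hwin1.1 hwin1.2 hV1.1 hV1.2).2
      have hdef : pos k u hk σ vv w (2 * m + 1)
          = stepP u (pos k u hk σ vv w (2 * m)) (Vnat k u hk σ vv (2 * m)) := by
        show (if (2 * m) % 2 = 0 then _ else _) = _
        rw [if_pos (by omega)]
      rw [hdef]
      apply hcast
      rcases hspec with h | h
      · left; omega
      · right; omega
    -- step 2m+1 : stepM
    have hstep2 : (pos k u hk σ vv w (2 * m + 1 + 1) : ZMod (2 * u - 1))
        = (pos k u hk σ vv w (2 * m + 1) : ZMod (2 * u - 1))
          - (Vnat k u hk σ vv (2 * m + 1) : ℕ) := by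
      have hspec := (stepM_spec u (pos k u hk σ vv w (2 * m + 1)) (Vnat k u hk σ vv (2 * m + 1))
        hu hwin2.1 hwin2.2 hV2.1 hV2.2).2
      have hdef : pos k u hk σ vv w (2 * m + 1 + 1)
          = stepM u (pos k u hk σ vv w (2 * m + 1)) (Vnat k u hk σ vv (2 * m + 1)) := by
        show (if (2 * m + 1) % 2 = 0 then _ else _) = _
        rw [if_neg (by omega)]
      rw [hdef]
      have := hcast (pos k u hk σ vv w (2 * m + 1))
        (stepM u (pos k u hk σ vv w (2 * m + 1)) (Vnat k u hk σ vv (2 * m + 1)))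
        (Vnat k u hk σ vv (2 * m + 1)) (by rcases hspec with h | h; exacts [Or.inl (by omega), Or.inr (by omega)])
      rw [this]
      push_cast
      ring
    rw [hstep2, hstep1, IH]
    rw [Finset.sum_range_succ]
    push_cast
    ring


lemma sum_alt_zero :
    ∑ a ∈ Finset.range k,
      ((Vnat k u hk σ vv (2 * a) : ZMod (2 * u - 1)) - Vnat k u hk σ vv (2 * a + 1)) = 0 := by
  have hterm : ∀ i : Fin k,
      ((Vnat k u hk σ vv (2 * (i : ℕ)) : ZMod (2 * u - 1)) - Vnat k u hk σ vv (2 * (i : ℕ) + 1))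
      = (((vv i).val + 1 : ℕ) : ZMod (2 * u - 1)) - (((vv (σ i)).val + 1 : ℕ) : ZMod (2 * u - 1)) := by
    intro i
    have h1 : vIdx k hk (2 * (i : ℕ)) = i := by
      unfold vIdx
      exact Fin.ext (by simp [Nat.mul_div_cancel_left, Nat.mod_eq_of_lt i.isLt])
    have h2 : vIdx k hk (2 * (i : ℕ) + 1) = i := by
      unfold vIdx
      refine Fin.ext ?_
      simp only [Fin.val_mk]
      have : (2 * (i : ℕ) + 1) / 2 = (i : ℕ) := by omega
      rw [this, Nat.mod_eq_of_lt i.isLt]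
    unfold Vnat
    rw [if_pos (by omega), if_neg (by omega), h1, h2]
  rw [← Fin.sum_univ_eq_sum_range]
  rw [Finset.sum_congr rfl (fun i _ => hterm i)]
  rw [Finset.sum_sub_distrib]
  rw [Equiv.sum_comp σ (fun i => (((vv i).val + 1 : ℕ) : ZMod (2 * u - 1)))]
  ring

lemma pos_closure (hu : 2 ≤ u) (hw : w ≤ 2 * u - 2) :
    pos k u hk σ vv w (2 * k) = pos k u hk σ vv w 0 := by
  have hz := pos_zmod hk σ vv hu hw k
  rw [sum_alt_zero hk σ vv, add_zero] at hz
  have hwin1 := pos_window hk σ vv hu hw (2 * k)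
  have hwin2 := pos_window hk σ vv hu hw 0
  set x := pos k u hk σ vv w (2 * k)
  set y := pos k u hk σ vv w 0
  have hmod : x ≡ y [MOD 2 * u - 1] := (ZMod.natCast_eq_natCast_iff _ _ _).mp hz
  rcases le_total x y with h | h
  · have hdvd : (2 * u - 1) ∣ y - x := (Nat.modEq_iff_dvd' h).mp hmod
    rcases Nat.eq_zero_or_pos (y - x) with h0 | hpos
    · omega
    · have := Nat.le_of_dvd hpos hdvd
      omega
  · have hdvd : (2 * u - 1) ∣ x - y := (Nat.modEq_iff_dvd' h).mp hmod.symm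
    rcases Nat.eq_zero_or_pos (x - y) with h0 | hpos
    · omega
    · have := Nat.le_of_dvd hpos hdvd
      omega


lemma vIdx_even (a : Fin k) : vIdx k hk (2 * a.val) = a := by
  unfold vIdx
  exact Fin.ext (by simp [Nat.mul_div_cancel_left, Nat.mod_eq_of_lt a.isLt])

lemma vIdx_odd (a : Fin k) : vIdx k hk (2 * a.val + 1) = a := by
  unfold vIdx
  refine Fin.ext ?_
  simp only [Fin.val_mk]
  have h : (2 * a.val + 1) / 2 = a.val := by omega
  rw [h, Nat.mod_eq_of_lt a.isLt]

lemma Vnat_even (a : Fin k) : Vnat k u hk σ vv (2 * a.val) = (vv a).val + 1 := by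
  unfold Vnat
  rw [if_pos (by omega), vIdx_even hk a]

lemma Vnat_odd (a : Fin k) : Vnat k u hk σ vv (2 * a.val + 1) = (vv (σ a)).val + 1 := by
  unfold Vnat
  rw [if_neg (by omega), vIdx_odd hk a]

lemma Vnat_mult_two (j : Fin (2 * k)) :
    (Finset.univ.filter fun j' : Fin (2 * k) =>
      Vnat k u hk σ vv j'.val = Vnat k u hk σ vv j.val).card = 2 := by
  classical
  have hdiv2 : ∀ j' : Fin (2 * k), j'.val / 2 < k := fun j' => by have := j'.isLt; omega
  set a : Fin k := if j.val % 2 = 0 then vIdx k hk j.val else σ (vIdx k hk j.val) with ha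
  have hVj : Vnat k u hk σ vv j.val = (vv a).val + 1 := by
    unfold Vnat
    rw [ha]
    split_ifs <;> rfl
  set j1 : Fin (2 * k) := ⟨2 * a.val, by have := a.isLt; omega⟩ with hj1
  set j2 : Fin (2 * k) := ⟨2 * (σ.symm a).val + 1, by have := (σ.symm a).isLt; omega⟩ with hj2
  have hchar : ∀ j' : Fin (2 * k),
      Vnat k u hk σ vv j'.val = (vv a).val + 1 ↔ (j' = j1 ∨ j' = j2) := by
    intro j'
    constructor
    · intro h
      unfold Vnat at h
      by_cases hp : j'.val % 2 = 0
      · rw [if_pos hp] at h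
        have hinj : vIdx k hk j'.val = a := vv.injective (Fin.ext (by omega))
        have hval : j'.val / 2 % k = a.val := congrArg Fin.val hinj
        rw [Nat.mod_eq_of_lt (hdiv2 j')] at hval
        left
        exact Fin.ext (by simp only [hj1, Fin.val_mk]; omega)
      · rw [if_neg hp] at h
        have hinj : σ (vIdx k hk j'.val) = a := vv.injective (Fin.ext (by omega))
        have hinv : vIdx k hk j'.val = σ.symm a := by
          rw [← hinj, Equiv.symm_apply_apply]
        have hval : j'.val / 2 % k = (σ.symm a).val := congrArg Fin.val hinv
        rw [Nat.mod_eq_of_lt (hdiv2 j')] at hval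
        right
        exact Fin.ext (by simp only [hj2, Fin.val_mk]; omega)
    · intro h
      rcases h with rfl | rfl
      · have : (j1 : ℕ) = 2 * a.val := rfl
        rw [this, Vnat_even hk σ vv a]
      · have : (j2 : ℕ) = 2 * (σ.symm a).val + 1 := rfl
        rw [this, Vnat_odd hk σ vv (σ.symm a), Equiv.apply_symm_apply]
  have hset : (Finset.univ.filter fun j' : Fin (2 * k) =>
      Vnat k u hk σ vv j'.val = Vnat k u hk σ vv j.val) = {j1, j2} := by
    ext j'
    simp only [Finset.mem_filter, Finset.mem_univ, true_and, Finset.mem_insert,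
      Finset.mem_singleton, hVj]
    exact hchar j'
  rw [hset]
  rw [Finset.card_insert_of_notMem (by
    simp only [Finset.mem_singleton]
    intro hc
    have := congrArg Fin.val hc
    simp only [hj1, hj2, Fin.val_mk] at this
    omega)]
  simp


lemma four_le (n u : ℕ) (hn : 1 ≤ n) : 4 * u ≤ 2 ^ (n + 1) * u := by
  apply Nat.mul_le_mul_right
  calc (4 : ℕ) = 2 ^ 2 := by norm_num
  _ ≤ 2 ^ (n + 1) := Nat.pow_le_pow_right (by norm_num) (by omega)

variable {n : ℕ} (hu2 : 2 ≤ u) (hn : 1 ≤ n) (w' : Fin (2 * u - 1))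

/-- the good tuple associated to parameters -/
def tup (j : Fin (2 * k)) : Fin (2 ^ (n + 1) * u) :=
  ⟨pos k u hk σ vv w'.val j.val - 1, by
    have hwin := pos_window (w := w'.val) hk σ vv hu2 (by have := w'.isLt; omega) j.val
    have h4 := four_le n u hn
    omega⟩

lemma tup_pos (j : Fin (2 * k)) :
    ((tup hk σ vv hu2 hn w' j : ℕ) + 1) = pos k u hk σ vv w'.val j.val := by
  have hwin := pos_window (w := w'.val) hk σ vv hu2 (by have := w'.isLt; omega) j.val
  show pos k u hk σ vv w'.val j.val - 1 + 1 = _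
  omega

lemma tup_edge (j : Fin (2 * k)) :
    edgePsi n (2 ^ (n + 1) * u) (tup hk σ vv hu2 hn w') j = Vnat k u hk σ vv j.val := by
  have hw : w'.val ≤ 2 * u - 2 := by have := w'.isLt; omega
  unfold edgePsi
  rw [tup_pos hk σ vv hu2 hn w' j, tup_pos hk σ vv hu2 hn w' (cycSucc j)]
  have hcyc : (cycSucc j).val = (j.val + 1) % (2 * k) := rfl
  by_cases hlast : j.val + 1 < 2 * k
  · have h1 : (cycSucc j).val = j.val + 1 := by rw [hcyc, Nat.mod_eq_of_lt hlast]
    rw [h1]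
    exact psi_pos_step (w := w'.val) hk σ vv n _ rfl hu2 hw j.val
  · have hj2k : j.val + 1 = 2 * k := by have := j.isLt; omega
    have h1 : (cycSucc j).val = 0 := by rw [hcyc, hj2k, Nat.mod_self]
    rw [h1]
    have hstep := psi_pos_step (w := w'.val) hk σ vv n _ rfl hu2 hw j.val
    rw [hj2k, pos_closure (w := w'.val) hk σ vv hu2 hw] at hstep
    exact hstep

lemma tup_mult (j : Fin (2 * k)) :
    (Finset.univ.filter fun j' : Fin (2 * k) =>
      edgePsi n (2 ^ (n + 1) * u) (tup hk σ vv hu2 hn w') j'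
        = edgePsi n (2 ^ (n + 1) * u) (tup hk σ vv hu2 hn w') j).card = 2 := by
  have hcongr : (Finset.univ.filter fun j' : Fin (2 * k) =>
      edgePsi n (2 ^ (n + 1) * u) (tup hk σ vv hu2 hn w') j'
        = edgePsi n (2 ^ (n + 1) * u) (tup hk σ vv hu2 hn w') j)
      = (Finset.univ.filter fun j' : Fin (2 * k) =>
        Vnat k u hk σ vv j'.val = Vnat k u hk σ vv j.val) := by
    apply Finset.filter_congr
    intro j' _
    rw [tup_edge hk σ vv hu2 hn w' j', tup_edge hk σ vv hu2 hn w' j]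
  rw [hcongr]
  exact Vnat_mult_two hk σ vv j

lemma tup_inj {σ' : Equiv.Perm (Fin k)} {vv' : Fin k ↪ Fin (u - 1)} {w'' : Fin (2 * u - 1)}
    (heq : tup hk σ vv hu2 hn w' = tup hk σ' vv' hu2 hn w'') :
    σ = σ' ∧ vv = vv' ∧ w' = w'' := by
  have hposeq : ∀ j : Fin (2 * k), pos k u hk σ vv w'.val j.val = pos k u hk σ' vv' w''.val j.val := by
    intro j
    have h1 := tup_pos hk σ vv hu2 hn w' j
    have h2 := tup_pos hk σ' vv' hu2 hn w'' j
    rw [heq] at h1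
    omega
  have hVeq : ∀ j : Fin (2 * k), Vnat k u hk σ vv j.val = Vnat k u hk σ' vv' j.val := by
    intro j
    have h1 := tup_edge hk σ vv hu2 hn w' j
    have h2 := tup_edge hk σ' vv' hu2 hn w'' j
    rw [heq] at h1
    rw [← h1, h2]
  have hvv : vv = vv' := by
    apply DFunLike.ext
    intro a
    have h := hVeq ⟨2 * a.val, by have := a.isLt; omega⟩
    simp only [Fin.val_mk] at h
    rw [Vnat_even hk σ vv a, Vnat_even hk σ' vv' a] at h
    exact Fin.ext (by omega)
  have hσ : σ = σ' := by
    apply Equiv.ext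
    intro a
    have h := hVeq ⟨2 * a.val + 1, by have := a.isLt; omega⟩
    simp only [Fin.val_mk] at h
    rw [Vnat_odd hk σ vv a, Vnat_odd hk σ' vv' a, hvv] at h
    exact vv'.injective (Fin.ext (by omega))
  have hw : w' = w'' := by
    have h := hposeq ⟨0, by omega⟩
    simp only [Fin.val_mk] at h
    unfold pos at h
    exact Fin.ext (by omega)
  exact ⟨hσ, hvv, hw⟩


lemma good_card (n k u : ℕ) (hn : 1 ≤ n) (hk0 : 0 < k) (hu : 2 ≤ u) :
    k.factorial * ((u - 1).descFactorial k) * (2 * u - 1)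
      ≤ (Finset.univ.filter fun i : Fin (2 * k) → Fin (2 ^ (n + 1) * u) =>
          ∀ j, (Finset.univ.filter fun j' =>
            edgePsi n (2 ^ (n + 1) * u) i j' = edgePsi n (2 ^ (n + 1) * u) i j).card = 2).card := by
  classical
  have hcardT : Fintype.card (Equiv.Perm (Fin k) × (Fin k ↪ Fin (u - 1)) × Fin (2 * u - 1))
      = k.factorial * ((u - 1).descFactorial k) * (2 * u - 1) := by
    rw [Fintype.card_prod, Fintype.card_prod, Fintype.card_perm, Fintype.card_embedding_eq,
      Fintype.card_fin, Fintype.card_fin, Fintype.card_fin, Nat.mul_assoc]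
  rw [← hcardT, ← Finset.card_univ]
  apply Finset.card_le_card_of_injOn
    (fun t : Equiv.Perm (Fin k) × (Fin k ↪ Fin (u - 1)) × Fin (2 * u - 1) =>
      tup hk0 t.1 t.2.1 hu hn t.2.2)
  · intro t _
    rw [Finset.mem_coe, Finset.mem_filter]
    exact ⟨Finset.mem_univ _, fun j => tup_mult hk0 t.1 t.2.1 hu hn t.2.2 j⟩
  · intro t1 _ t2 _ heq
    obtain ⟨h1, h2, h3⟩ := tup_inj hk0 t1.1 t1.2.1 hu hn t1.2.2 heq
    exact Prod.ext h1 (Prod.ext h2 h3)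

end Good


section Values
variable (p : Measure ℝ) [IsProbabilityMeasure p]
  (μprod : Measure (ℕ → ℝ)) [IsProbabilityMeasure μprod]

lemma integral_zero_of_single (hprod : ∀ (s : Finset ℕ) (A : ℕ → Set ℝ), (∀ i, MeasurableSet (A i)) →
      μprod {b | ∀ i ∈ s, b i ∈ A i} = ∏ i ∈ s, p (A i)) (hmean : ∫ x, x ∂p = 0) {m : ℕ} (e : Fin m → ℕ)
    (h : ∃ j, (Finset.univ.filter fun j' => e j' = e j).card = 1) :
    ∫ b : ℕ → ℝ, ∏ j : Fin m, b (e j) ∂μprod = 0 := by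
  rw [integral_prod_pow p μprod hprod e]
  obtain ⟨j, hj⟩ := h
  apply Finset.prod_eq_zero (Finset.mem_image_of_mem e (Finset.mem_univ j))
  rw [hj]
  simpa using hmean

lemma integral_one_of_pair (hprod : ∀ (s : Finset ℕ) (A : ℕ → Set ℝ), (∀ i, MeasurableSet (A i)) →
      μprod {b | ∀ i ∈ s, b i ∈ A i} = ∏ i ∈ s, p (A i)) (hvar : ∫ x, x ^ 2 ∂p = 1) {m : ℕ} (e : Fin m → ℕ)
    (h : ∀ j, (Finset.univ.filter fun j' => e j' = e j).card = 2) :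
    ∫ b : ℕ → ℝ, ∏ j : Fin m, b (e j) ∂μprod = 1 := by
  rw [integral_prod_pow p μprod hprod e]
  apply Finset.prod_eq_one
  intro v hv
  rcases Finset.mem_image.mp hv with ⟨j, _, rfl⟩
  rw [h j]
  exact hvar

lemma integral_abs_le (hprod : ∀ (s : Finset ℕ) (A : ℕ → Set ℝ), (∀ i, MeasurableSet (A i)) →
      μprod {b | ∀ i ∈ s, b i ∈ A i} = ∏ i ∈ s, p (A i))
    (hfin : ∀ k : ℕ, Integrable (fun x => x ^ k) p)
    {k : ℕ} (e : Fin (2 * k) → ℕ) :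
    |∫ b : ℕ → ℝ, ∏ j : Fin (2 * k), b (e j) ∂μprod|
      ≤ (1 + ∫ x, x ^ (2 * k) ∂p) ^ (2 * k) := by
  have hm2k : 0 ≤ ∫ x, x ^ (2 * k) ∂p :=
    integral_nonneg fun x => (even_two_mul k).pow_nonneg x
  set D1 := 1 + ∫ x, x ^ (2 * k) ∂p with hD1def
  have hD1 : 1 ≤ D1 := by simp only [hD1def]; linarith
  have hfac : ∀ m, m ≤ 2 * k → |∫ x, x ^ m ∂p| ≤ D1 := by
    intro m hm
    have hptw : ∀ x : ℝ, |x| ^ m ≤ 1 + x ^ (2 * k) := by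
      intro x
      have hxe : x ^ (2 * k) = |x| ^ (2 * k) := by
        rw [← abs_pow, abs_of_nonneg ((even_two_mul k).pow_nonneg x)]
      rcases le_or_gt (|x|) 1 with h | h
      · have h1 : |x| ^ m ≤ 1 := pow_le_one₀ (abs_nonneg x) h
        have h2 : (0:ℝ) ≤ x ^ (2 * k) := (even_two_mul k).pow_nonneg x
        linarith
      · have h1 : |x| ^ m ≤ |x| ^ (2 * k) := pow_le_pow_right₀ h.le hm
        rw [hxe]
        linarith
    have hint1 : Integrable (fun x => |x| ^ m) p := by
      have := (hfin m).abs
      simpa [abs_pow] using this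
    have hint2 : Integrable (fun x : ℝ => 1 + x ^ (2 * k)) p :=
      (integrable_const 1).add (hfin (2 * k))
    calc |∫ x, x ^ m ∂p| ≤ ∫ x, |x ^ m| ∂p := by
          simpa [Real.norm_eq_abs] using
            norm_integral_le_integral_norm (μ := p) (fun x : ℝ => x ^ m)
    _ = ∫ x, |x| ^ m ∂p := by simp [abs_pow]
    _ ≤ ∫ x, (1 + x ^ (2 * k)) ∂p := integral_mono hint1 hint2 hptw
    _ = D1 := by
        rw [integral_add (integrable_const 1) (hfin (2 * k)), integral_const]
        simp [hD1def]
  rw [integral_prod_pow p μprod hprod e]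
  have himgcard : (Finset.univ.image e).card ≤ 2 * k := by
    calc (Finset.univ.image e).card ≤ (Finset.univ : Finset (Fin (2 * k))).card :=
      Finset.card_image_le
    _ = 2 * k := by simp
  calc |∏ v ∈ Finset.univ.image e, ∫ x, x ^ (Finset.univ.filter fun j => e j = v).card ∂p|
      = ∏ v ∈ Finset.univ.image e, |∫ x, x ^ (Finset.univ.filter fun j => e j = v).card ∂p| :=
        Finset.abs_prod _ _
  _ ≤ ∏ _v ∈ Finset.univ.image e, D1 := by
      apply Finset.prod_le_prod (fun v _ => abs_nonneg _)
      intro v _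
      apply hfac
      calc (Finset.univ.filter fun j => e j = v).card
          ≤ (Finset.univ : Finset (Fin (2 * k))).card := Finset.card_filter_le _ _
      _ = 2 * k := by simp
  _ = D1 ^ (Finset.univ.image e).card := Finset.prod_const D1
  _ ≤ D1 ^ (2 * k) := pow_le_pow_right₀ hD1 himgcard

end Values


section MainBound
variable (p : Measure ℝ) [IsProbabilityMeasure p]
  (μprod : Measure (ℕ → ℝ)) [IsProbabilityMeasure μprod]

lemma sum_lower (hprod : ∀ (s : Finset ℕ) (A : ℕ → Set ℝ), (∀ i, MeasurableSet (A i)) →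
      μprod {b | ∀ i ∈ s, b i ∈ A i} = ∏ i ∈ s, p (A i))
    (hmean : ∫ x, x ∂p = 0) (hvar : ∫ x, x ^ 2 ∂p = 1)
    (hfin : ∀ k : ℕ, Integrable (fun x => x ^ k) p)
    (n k u : ℕ) (hn : 1 ≤ n) (hk : 0 < k) (hu : 2 ≤ u) :
    ((k.factorial * ((u - 1).descFactorial k) * (2 * u - 1) : ℕ) : ℝ)
      - (1 + ∫ x, x ^ (2 * k) ∂p) ^ (2 * k)
        * (((2 * k) ^ (2 * k) * ((2 ^ (n + 1) * u) ^ k * (2 ^ (n + 2)) ^ (2 * k)) : ℕ) : ℝ)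
      ≤ ∑ i : Fin (2 * k) → Fin (2 ^ (n + 1) * u),
          ∫ b : ℕ → ℝ, ∏ j : Fin (2 * k), b (edgePsi n (2 ^ (n + 1) * u) i j) ∂μprod := by
  classical
  set N := 2 ^ (n + 1) * u with hN
  have hNP : N / 2 ^ n = 2 * u := Good.div_pow_eq n u
  have hdiv : N = 2 ^ n * (N / 2 ^ n) := by rw [hNP, hN]; ring
  have hP : 0 < N / 2 ^ n := by rw [hNP]; omega
  have hN0 : 0 < N := by
    have : 0 < 2 ^ (n + 1) := Nat.pow_pos (by norm_num)
    exact Nat.mul_pos this (by omega)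
  set X : (Fin (2 * k) → Fin N) → ℝ :=
    fun i => ∫ b : ℕ → ℝ, ∏ j : Fin (2 * k), b (edgePsi n N i j) ∂μprod with hX
  set Z : (Fin (2 * k) → Fin N) → Prop := fun i => ∃ j,
    (Finset.univ.filter fun j' => edgePsi n N i j' = edgePsi n N i j).card = 1 with hZ
  set P2 : (Fin (2 * k) → Fin N) → Prop := fun i => ∀ j,
    (Finset.univ.filter fun j' => edgePsi n N i j' = edgePsi n N i j).card = 2 with hP2
  have hsplit1 : ∑ i : Fin (2 * k) → Fin N, X i
      = ∑ i ∈ Finset.univ.filter Z, X i + ∑ i ∈ Finset.univ.filter (fun i => ¬ Z i), X i :=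
    (Finset.sum_filter_add_sum_filter_not Finset.univ Z X).symm
  have hsplit2 : ∑ i ∈ Finset.univ.filter (fun i => ¬ Z i), X i
      = ∑ i ∈ (Finset.univ.filter (fun i => ¬ Z i)).filter P2, X i
        + ∑ i ∈ (Finset.univ.filter (fun i => ¬ Z i)).filter (fun i => ¬ P2 i), X i :=
    (Finset.sum_filter_add_sum_filter_not _ P2 X).symm
  -- Z part is zero
  have hZ0 : ∑ i ∈ Finset.univ.filter Z, X i = 0 := by
    apply Finset.sum_eq_zero
    intro i hi
    rw [Finset.mem_filter] at hi
    exact integral_zero_of_single p μprod hprod hmean (edgePsi n N i) hi.2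
  -- P2 part is a cardinality
  have hP21 : ∑ i ∈ (Finset.univ.filter (fun i => ¬ Z i)).filter P2, X i
      = ((Finset.univ.filter (fun i => ¬ Z i)).filter P2).card := by
    rw [Finset.sum_congr rfl (fun i hi => ?_), Finset.sum_const, nsmul_eq_mul, mul_one]
    rw [Finset.mem_filter] at hi
    exact integral_one_of_pair p μprod hprod hvar (edgePsi n N i) hi.2
  -- P2 implies not Z
  have hfilterP2 : (Finset.univ.filter (fun i => ¬ Z i)).filter P2
      = Finset.univ.filter P2 := by
    rw [Finset.filter_filter]
    apply Finset.filter_congr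
    intro i _
    constructor
    · exact fun h => h.2
    · intro h
      refine ⟨?_, h⟩
      rintro ⟨j, hj⟩
      have := h j
      omega
  -- good lower bound
  have hgood : (k.factorial * ((u - 1).descFactorial k) * (2 * u - 1) : ℕ)
      ≤ ((Finset.univ.filter (fun i => ¬ Z i)).filter P2).card := by
    rw [hfilterP2]
    exact Good.good_card n k u hn hk hu
  -- bad part bound
  set D : ℝ := (1 + ∫ x, x ^ (2 * k) ∂p) ^ (2 * k) with hD
  have hm2k : 0 ≤ ∫ x, x ^ (2 * k) ∂p :=
    integral_nonneg fun x => (even_two_mul k).pow_nonneg x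
  have hD0 : 0 ≤ D := by positivity
  set SB := (Finset.univ.filter (fun i => ¬ Z i)).filter (fun i => ¬ P2 i) with hSB
  have hSBsub : SB ⊆ Finset.univ.filter fun i : Fin (2 * k) → Fin N =>
      (∀ j, 2 ≤ BadCount.multE n N i j) ∧ ∃ j, 3 ≤ BadCount.multE n N i j := by
    intro i hi
    simp only [hSB, Finset.mem_filter, Finset.mem_univ, true_and] at hi ⊢
    obtain ⟨hnz, hnp⟩ := hi
    have hge1 : ∀ j, 1 ≤ BadCount.multE n N i j := by
      intro j
      apply Finset.card_pos.mpr
      exact ⟨j, Finset.mem_filter.mpr ⟨Finset.mem_univ _, rfl⟩⟩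
    have hge2 : ∀ j, 2 ≤ BadCount.multE n N i j := by
      intro j
      have h1 := hge1 j
      have : ¬ (BadCount.multE n N i j = 1) := fun hc => hnz ⟨j, hc⟩
      unfold BadCount.multE at *
      omega
    refine ⟨hge2, ?_⟩
    simp only [hP2] at hnp
    push_neg at hnp
    obtain ⟨j, hj⟩ := hnp
    have := hge2 j
    unfold BadCount.multE at *
    exact ⟨j, by omega⟩
  have hSBcard : SB.card ≤ (2 * k) ^ (2 * k) * (N ^ k * (2 ^ (n + 2)) ^ (2 * k)) := by
    calc SB.card ≤ (Finset.univ.filter fun i : Fin (2 * k) → Fin N =>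
        (∀ j, 2 ≤ BadCount.multE n N i j) ∧ ∃ j, 3 ≤ BadCount.multE n N i j).card :=
        Finset.card_le_card hSBsub
    _ ≤ _ := BadCount.bad_card n N k (by omega) hN0 hdiv hP
  have hSBbound : |∑ i ∈ SB, X i| ≤ D * SB.card := by
    calc |∑ i ∈ SB, X i| ≤ ∑ i ∈ SB, |X i| := Finset.abs_sum_le_sum_abs _ _
    _ ≤ ∑ _i ∈ SB, D := by
        apply Finset.sum_le_sum
        intro i _
        exact integral_abs_le p μprod hprod hfin (edgePsi n N i)
    _ = SB.card * D := by rw [Finset.sum_const, nsmul_eq_mul]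
    _ = D * SB.card := by ring
  have hSBlow : -(D * ((2 * k) ^ (2 * k) * (N ^ k * (2 ^ (n + 2)) ^ (2 * k)) : ℕ))
      ≤ ∑ i ∈ SB, X i := by
    have h1 : D * (SB.card : ℝ) ≤ D * (((2 * k) ^ (2 * k) * (N ^ k * (2 ^ (n + 2)) ^ (2 * k)) : ℕ) : ℝ) := by
      apply mul_le_mul_of_nonneg_left _ hD0
      exact_mod_cast hSBcard
    have h2 := neg_abs_le (∑ i ∈ SB, X i)
    linarith
  have hcast : ((k.factorial * ((u - 1).descFactorial k) * (2 * u - 1) : ℕ) : ℝ)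
      ≤ (((Finset.univ.filter (fun i => ¬ Z i)).filter P2).card : ℝ) := by
    exact_mod_cast hgood
  show _ ≤ ∑ i : Fin (2 * k) → Fin N, X i
  rw [hsplit1, hsplit2, hZ0, hP21]
  push_cast
  push_cast at hcast hSBlow
  linarith

end MainBound


lemma nat_key (k u : ℕ) (hk : 0 < k) (hu : 2 * k + 2 ≤ u) :
    k.factorial * u ^ (k + 1)
      ≤ 2 ^ k * (k.factorial * ((u - 1).descFactorial k) * (2 * u - 1)) := by
  have h1 : (u - k) ^ k ≤ (u - 1).descFactorial k := by
    have := Nat.pow_sub_le_descFactorial (u - 1) k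
    have heq : u - 1 + 1 - k = u - k := by omega
    rwa [heq] at this
  have h2 : u ^ k ≤ (2 * (u - k)) ^ k := Nat.pow_le_pow_left (by omega) k
  have h3 : (2 * (u - k)) ^ k = 2 ^ k * (u - k) ^ k := Nat.mul_pow 2 (u - k) k
  calc k.factorial * u ^ (k + 1) = k.factorial * (u ^ k * u) := by rw [Nat.pow_succ]
  _ ≤ k.factorial * ((2 ^ k * (u - k) ^ k) * (2 * u - 1)) := by
      apply Nat.mul_le_mul_left
      apply Nat.mul_le_mul
      · rw [← h3]; exact h2
      · omega
  _ ≤ k.factorial * ((2 ^ k * (u - 1).descFactorial k) * (2 * u - 1)) := by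
      apply Nat.mul_le_mul_left
      apply Nat.mul_le_mul_right
      exact Nat.mul_le_mul_left _ h1
  _ = 2 ^ k * (k.factorial * ((u - 1).descFactorial k) * (2 * u - 1)) := by ring

lemma moment_lower (p : Measure ℝ) [IsProbabilityMeasure p]
    (μprod : Measure (ℕ → ℝ)) [IsProbabilityMeasure μprod]
    (hprod : ∀ (s : Finset ℕ) (A : ℕ → Set ℝ), (∀ i, MeasurableSet (A i)) →
      μprod {b | ∀ i ∈ s, b i ∈ A i} = ∏ i ∈ s, p (A i))
    (hmean : ∫ x, x ∂p = 0) (hvar : ∫ x, x ^ 2 ∂p = 1)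
    (hfin : ∀ k : ℕ, Integrable (fun x => x ^ k) p)
    (n k : ℕ) (hn : 1 ≤ n) (hk : 0 < k) (L : ℝ)
    (htend : Tendsto (fun t : ℕ => avgMoment μprod n (2 ^ (n + 1) * (t + 1)) (2 * k))
      atTop (nhds L)) :
    (k.factorial : ℝ) / 2 ^ ((n + 2) * (k + 1)) ≤ L := by
  set c : ℝ := (k.factorial : ℝ) / 2 ^ ((n + 2) * (k + 1)) with hc
  have hfacpos : (0:ℝ) < (k.factorial : ℝ) := by exact_mod_cast Nat.factorial_pos k
  have hcpos : 0 < c := by rw [hc]; positivity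
  set D : ℝ := (1 + ∫ x, x ^ (2 * k) ∂p) ^ (2 * k) with hD
  have hm2k : 0 ≤ ∫ x, x ^ (2 * k) ∂p :=
    integral_nonneg fun x => (even_two_mul k).pow_nonneg x
  have hD0 : 0 ≤ D := by rw [hD]; positivity
  set C : ℝ := (((2 * k) ^ (2 * k) * (2 ^ (n + 2)) ^ (2 * k) : ℕ) : ℝ) with hC
  have hC0 : 0 ≤ C := by rw [hC]; positivity
  set E : ℝ := D * C with hE
  have hE0 : 0 ≤ E := mul_nonneg hD0 hC0
  apply ge_of_tendsto htend
  rw [Filter.eventually_atTop]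
  refine ⟨2 * k + 2 + ⌈E / (c * 2 ^ (n + 1))⌉₊, fun t ht => ?_⟩
  set u := t + 1 with hu
  have hu2k : 2 * k + 2 ≤ u := by omega
  have hu2 : 2 ≤ u := by omega
  have huceil : (⌈E / (c * 2 ^ (n + 1))⌉₊ : ℝ) ≤ (u : ℝ) := by
    have : ⌈E / (c * 2 ^ (n + 1))⌉₊ ≤ u := by omega
    exact_mod_cast this
  have huE : E ≤ c * 2 ^ (n + 1) * u := by
    have h1 : E / (c * 2 ^ (n + 1)) ≤ (u : ℝ) := le_trans (Nat.le_ceil _) huceil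
    rw [div_le_iff₀ (by positivity)] at h1
    linarith [h1]
  set N : ℕ := 2 ^ (n + 1) * u with hNdef
  have hN0 : 0 < N := by
    have : 0 < 2 ^ (n + 1) := Nat.pow_pos (by norm_num)
    exact Nat.mul_pos this (by omega)
  have hNR : (0:ℝ) < (N : ℝ) := by exact_mod_cast hN0
  -- rewrite avgMoment
  have havg : avgMoment μprod n N (2 * k)
      = (((N : ℝ) ^ (k + 1 : ℕ))⁻¹) * ∑ i : Fin (2 * k) → Fin N,
          ∫ b : ℕ → ℝ, ∏ j : Fin (2 * k), b (edgePsi n N i j) ∂μprod := by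
    unfold avgMoment
    congr 2
    rw [show (((2 * k : ℕ) : ℝ)) / 2 + 1 = ((k + 1 : ℕ) : ℝ) by push_cast; ring]
    rw [Real.rpow_natCast]
  have hS := sum_lower p μprod hprod hmean hvar hfin n k u hn hk hu2
  rw [← hNdef] at hS
  set S : ℝ := ∑ i : Fin (2 * k) → Fin N,
      ∫ b : ℕ → ℝ, ∏ j : Fin (2 * k), b (edgePsi n N i j) ∂μprod with hSdef
  -- A bound
  set A : ℝ := ((k.factorial * ((u - 1).descFactorial k) * (2 * u - 1) : ℕ) : ℝ) with hA
  have hNpow : ((N : ℝ)) ^ (k + 1) = (2:ℝ) ^ ((n + 1) * (k + 1)) * (u : ℝ) ^ (k + 1) := by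
    rw [hNdef]
    push_cast
    rw [mul_pow, ← pow_mul]
  have hid : 2 * c * (2:ℝ) ^ ((n + 1) * (k + 1)) = (k.factorial : ℝ) / 2 ^ k := by
    rw [hc, show (n + 2) * (k + 1) = (n + 1) * (k + 1) + (k + 1) by ring, pow_add]
    have h2 : ((2:ℝ) ^ ((n + 1) * (k + 1))) ≠ 0 := by positivity
    field_simp
    ring
  have hAnat := nat_key k u hk hu2k
  have hAcast : (k.factorial : ℝ) * (u : ℝ) ^ (k + 1) ≤ 2 ^ k * A := by
    rw [hA]
    exact_mod_cast hAnat
  have hAge : 2 * c * ((N : ℝ)) ^ (k + 1) ≤ A := by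
    rw [hNpow, show 2 * c * ((2:ℝ) ^ ((n + 1) * (k + 1)) * (u : ℝ) ^ (k + 1))
      = (2 * c * (2:ℝ) ^ ((n + 1) * (k + 1))) * (u : ℝ) ^ (k + 1) by ring, hid]
    rw [div_mul_eq_mul_div, div_le_iff₀ (by positivity : (0:ℝ) < 2 ^ k)]
    calc (k.factorial : ℝ) * (u : ℝ) ^ (k + 1) ≤ 2 ^ k * A := hAcast
    _ = A * 2 ^ k := by ring
  -- B bound
  have hBeq : D * (((2 * k) ^ (2 * k) * (N ^ k * (2 ^ (n + 2)) ^ (2 * k)) : ℕ) : ℝ)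
      = E * ((N : ℝ)) ^ k := by
    rw [hE, hC]
    push_cast
    ring
  have hBle : E * ((N : ℝ)) ^ k ≤ c * ((N : ℝ)) ^ (k + 1) := by
    have hNval : (N : ℝ) = 2 ^ (n + 1) * u := by rw [hNdef]; push_cast; ring
    calc E * ((N : ℝ)) ^ k ≤ (c * 2 ^ (n + 1) * u) * ((N : ℝ)) ^ k := by
          apply mul_le_mul_of_nonneg_right huE (by positivity)
    _ = c * ((N : ℝ)) ^ (k + 1) := by
        rw [pow_succ, hNval]
        ring
  -- combine
  have hSge : c * ((N : ℝ)) ^ (k + 1) ≤ S := by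
    have := hS
    rw [hBeq] at this
    linarith
  show c ≤ avgMoment μprod n (2 ^ (n + 1) * u) (2 * k)
  rw [← hNdef, havg]
  have hNp : (0:ℝ) < ((N : ℝ)) ^ (k + 1) := by positivity
  calc c = (((N : ℝ)) ^ (k + 1))⁻¹ * (c * ((N : ℝ)) ^ (k + 1)) := by
        field_simp
  _ ≤ (((N : ℝ)) ^ (k + 1))⁻¹ * S := by
      apply mul_le_mul_of_nonneg_left hSge (by positivity)

/-- for `n ≥ 1`, the limiting spectral measure (the probability
measure whose `k`-th moments are the limits `M_{k,n}`) has unbounded support: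
`μ_n(ℝ \ [-B,B]) > 0` for every `B > 0`. -/
theorem stmt3 (n : ℕ) (hn : 1 ≤ n) (p : Measure ℝ) [IsProbabilityMeasure p]
    (hmean : ∫ x, x ∂p = 0) (hvar : ∫ x, x ^ 2 ∂p = 1)
    (hfin : ∀ k : ℕ, Integrable (fun x => x ^ k) p)
    (μprod : Measure (ℕ → ℝ)) [IsProbabilityMeasure μprod]
    (hprod : ∀ (s : Finset ℕ) (A : ℕ → Set ℝ), (∀ i, MeasurableSet (A i)) →
      μprod {b | ∀ i ∈ s, b i ∈ A i} = ∏ i ∈ s, p (A i))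
    (μ : Measure ℝ) [IsProbabilityMeasure μ]
    (hμ : ∀ k : ℕ, 1 ≤ k → Integrable (fun x => x ^ k) μ ∧
      Tendsto (fun t : ℕ => avgMoment μprod n (2 ^ (n + 1) * (t + 1)) k) atTop
        (nhds (∫ x, x ^ k ∂μ))) :
    ∀ B : ℝ, 0 < B → 0 < μ (Set.Icc (-B) B)ᶜ := by
  intro B hB
  by_contra hcon
  have hzero : μ (Set.Icc (-B) B)ᶜ = 0 := by
    rcases Nat.eq_zero_or_pos 0 with _ | _
    · exact le_antisymm (le_of_not_gt hcon) (zero_le)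
    · exact le_antisymm (le_of_not_gt hcon) (zero_le)
  -- all even moments of μ are bounded by powers of B
  have hbdd : ∀ k : ℕ, 0 < k → ∫ x, x ^ (2 * k) ∂μ ≤ B ^ (2 * k) := by
    intro k hk
    have hae : ∀ᵐ x ∂μ, x ∈ Set.Icc (-B) B := by
      rw [MeasureTheory.ae_iff]
      exact hzero
    have hae2 : ∀ᵐ x ∂μ, x ^ (2 * k) ≤ B ^ (2 * k) := by
      filter_upwards [hae] with x hx
      have habs : |x| ≤ B := abs_le.mpr ⟨hx.1, hx.2⟩
      calc x ^ (2 * k) ≤ |x ^ (2 * k)| := le_abs_self _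
      _ = |x| ^ (2 * k) := abs_pow x (2 * k)
      _ ≤ B ^ (2 * k) := pow_le_pow_left₀ (abs_nonneg x) habs (2 * k)
    have hint := (hμ (2 * k) (by omega)).1
    calc ∫ x, x ^ (2 * k) ∂μ ≤ ∫ _x, B ^ (2 * k) ∂μ :=
      integral_mono_ae hint (integrable_const _) hae2
    _ = B ^ (2 * k) := by simp
  -- choose k with factorial growth beating B
  have hgrow : ∃ k : ℕ, 0 < k ∧ B ^ (2 * k)
      < (k.factorial : ℝ) / 2 ^ ((n + 2) * (k + 1)) := by
    set a : ℝ := B ^ 2 * 2 ^ (n + 2) with ha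
    have ha0 : 0 < a := by positivity
    have htend0 := FloorSemiring.tendsto_pow_div_factorial_atTop (K := ℝ) a
    have hev := htend0.eventually (gt_mem_nhds (show (0:ℝ) < 1 / 2 ^ (n + 2) by positivity))
    obtain ⟨k, hk1, hk2⟩ := (hev.and (Filter.eventually_ge_atTop 1)).exists
    refine ⟨k, by omega, ?_⟩
    have hfacpos : (0:ℝ) < (k.factorial : ℝ) := by exact_mod_cast Nat.factorial_pos k
    rw [div_lt_div_iff₀ hfacpos (by positivity : (0:ℝ) < 2 ^ (n + 2))] at hk1
    rw [lt_div_iff₀ (by positivity : (0:ℝ) < 2 ^ ((n + 2) * (k + 1)))]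
    calc B ^ (2 * k) * 2 ^ ((n + 2) * (k + 1)) = a ^ k * 2 ^ (n + 2) := by
          rw [ha, mul_pow, ← pow_mul, ← pow_mul,
            show (n + 2) * (k + 1) = (n + 2) * k + (n + 2) by ring, pow_add]
          ring
    _ < 1 * (k.factorial : ℝ) := hk1
    _ = (k.factorial : ℝ) := by ring
  obtain ⟨k, hkpos, hkgrow⟩ := hgrow
  have hlow := moment_lower p μprod hprod hmean hvar hfin n k hn hkpos
    (∫ x, x ^ (2 * k) ∂μ) (hμ (2 * k) (by omega)).2
  have := hbdd k hkpos
  linarith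
end
end

section
/- Fix integers n ≥ 0 and m ≥ 1. There is a constant c_{n,m} (independent of N) such that for every positive multiple N of 2^{n+1}, the number of tuples (i_1,…,i_{2m}) ∈ {1,…,N}^{2m} with the property that in the cyclic list of values ψ_N(i_1,i_2), ψ_N(i_2,i_3), …, ψ_N(i_{2m},i_1) every value that occurs occurs at least twice and at least one value occurs at least three times, is at most c_{n,m} N^m. Consequently such tuples contribute nothing to the average 2m-th moment M_{2m,n;N} in the limit N → ∞. -/
open MeasureTheory Filter Finset

noncomputable section

def decodeRes (P a v : ℕ) : Fin 4 → ℕ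
  | 0 => (((a : ℤ) + v) % P).toNat
  | 1 => (((a : ℤ) - v) % P).toNat
  | 2 => (((a : ℤ) + ((P : ℤ) - 1 - v)) % P).toNat
  | 3 => (((a : ℤ) - ((P : ℤ) - 1 - v)) % P).toNat

lemma psi_lt_of (n N a b : ℕ) (hP : 0 < N / 2 ^ n) : psi n N a b < N / 2 ^ n :=
  lt_of_le_of_lt (min_le_left _ _) (Nat.mod_lt _ hP)

lemma psi_residue (n N a x v : ℕ) (hP : 0 < N / 2 ^ n)
    (h : psi n N (a + 1) (x + 1) = v) :
    ∃ s : Fin 4, x % (N / 2 ^ n) = decodeRes (N / 2 ^ n) a v s := by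
  set P := N / 2 ^ n with hPdef
  unfold psi at h
  have hD' : ((((a+1 : ℕ)) : ℤ) - (((x+1 : ℕ)) : ℤ)).natAbs = ((a : ℤ) - x).natAbs := by
    congr 1; push_cast; ring
  rw [hD'] at h
  set D := ((a : ℤ) - x).natAbs with hDdef
  set r := D % P with hrdef
  have hrP : r < P := Nat.mod_lt _ hP
  -- x % P viewed in ℤ
  have hxint : ((x % P : ℕ) : ℤ) = (x : ℤ) % P := by push_cast; ring
  have hDr : Int.ModEq (P : ℤ) (D : ℤ) (r : ℤ) := by
    unfold Int.ModEq
    rw [hrdef]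
    push_cast
    rw [Int.emod_emod_of_dvd _ dvd_rfl]
  have habs := Int.natAbs_eq ((a : ℤ) - x)
  -- x ≡ a - r or a + r  mod P
  have hkey : (x : ℤ) % P = ((a : ℤ) - r) % P ∨ (x : ℤ) % P = ((a : ℤ) + r) % P := by
    rcases habs with h1 | h1
    · left
      have : (x : ℤ) = (a : ℤ) - D := by omega
      rw [this]; exact Int.ModEq.sub_left _ hDr
    · right
      have : (x : ℤ) = (a : ℤ) + D := by omega
      rw [this]; exact Int.ModEq.add_left _ hDr
  have hxnat : ∀ z : ℤ, (x : ℤ) % P = z % P → x % P = (z % P).toNat := by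
    intro z hz
    have : ((x % P : ℕ) : ℤ) = z % P := by rw [hxint, hz]
    omega
  rcases min_cases (D % P) (P - 1 - D % P) with ⟨h1, h2⟩ | ⟨h1, h2⟩ <;>
    rw [h1] at h
  · -- v = r
    subst h
    rcases hkey with hk | hk
    · exact ⟨1, hxnat _ hk⟩
    · exact ⟨0, hxnat _ hk⟩
  · -- v = P - 1 - r
    have hvr : (v : ℤ) = (P : ℤ) - 1 - r := by omega
    have hrv : (r : ℤ) = (P : ℤ) - 1 - v := by omega
    rcases hkey with hk | hk
    · refine ⟨3, hxnat _ ?_⟩; rw [← hrv]; exact hk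
    · refine ⟨2, hxnat _ ?_⟩; rw [← hrv]; exact hk

lemma image_card_le (n m N : ℕ) (i : Fin (2 * m) → Fin N)
    (h2 : ∀ j, 2 ≤ (Finset.univ.filter fun j' : Fin (2 * m) =>
        edgePsi n N i j' = edgePsi n N i j).card)
    (h3 : ∃ j, 3 ≤ (Finset.univ.filter fun j' : Fin (2 * m) =>
        edgePsi n N i j' = edgePsi n N i j).card) :
    (Finset.univ.image (edgePsi n N i)).card ≤ m - 1 := by
  classical
  set V := Finset.univ.image (edgePsi n N i) with hV
  have hfib : (Finset.univ : Finset (Fin (2 * m))).card =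
      ∑ v ∈ V, (Finset.univ.filter fun j => edgePsi n N i j = v).card :=
    Finset.card_eq_sum_card_fiberwise (fun j _ => Finset.mem_image_of_mem _ (Finset.mem_univ j))
  obtain ⟨j0, hj0⟩ := h3
  have hlt : ∑ _v ∈ V, 2 < ∑ v ∈ V, (Finset.univ.filter fun j => edgePsi n N i j = v).card := by
    refine Finset.sum_lt_sum (fun v hv => ?_)
      ⟨edgePsi n N i j0, Finset.mem_image_of_mem _ (Finset.mem_univ j0), by omega⟩
    obtain ⟨j, -, rfl⟩ := Finset.mem_image.mp hv
    exact h2 j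
  rw [← hfib, Finset.sum_const, Finset.card_univ, Fintype.card_fin, smul_eq_mul] at hlt
  omega

def selF (n N P : ℕ) {k : ℕ} (i : Fin k → Fin N) (j : Fin k) : Fin 4 :=
  if (i (cycSucc j) : ℕ) % P = decodeRes P (i j : ℕ) (edgePsi n N i j) 0 then 0
  else if (i (cycSucc j) : ℕ) % P = decodeRes P (i j : ℕ) (edgePsi n N i j) 1 then 1
  else if (i (cycSucc j) : ℕ) % P = decodeRes P (i j : ℕ) (edgePsi n N i j) 2 then 2
  else 3

lemma selF_spec (n N P : ℕ) (hPdef : P = N / 2 ^ n) (hP : 0 < P) {k : ℕ}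
    (i : Fin k → Fin N) (j : Fin k) :
    (i (cycSucc j) : ℕ) % P = decodeRes P (i j : ℕ) (edgePsi n N i j) (selF n N P i j) := by
  subst hPdef
  obtain ⟨s, hs⟩ := psi_residue n N (i j) (i (cycSucc j)) (edgePsi n N i j) hP rfl
  unfold selF
  split_ifs with h0 h1 h2
  · exact h0
  · exact h1
  · exact h2
  · fin_cases s
    · exact absurd hs h0
    · exact absurd hs h1
    · exact absurd hs h2
    · exact hs

/-- sorted list of edge values. -/
def sortedIm (n N : ℕ) {k : ℕ} (i : Fin k → Fin N) : List ℕ :=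
  (Finset.univ.image (edgePsi n N i)).sort (· ≤ ·)

def wcomp (N : ℕ) (hN : 0 < N) (L : List ℕ) (p : ℕ) : Fin N :=
  if h : p < L.length then ⟨L.get ⟨p, h⟩ % N, Nat.mod_lt _ hN⟩ else ⟨0, hN⟩

lemma wcomp_indexOf (N : ℕ) (hN : 0 < N) (L : List ℕ) (a : ℕ) (ha : a ∈ L) (haN : a < N) :
    wcomp N hN L (L.idxOf a) = ⟨a, haN⟩ := by
  unfold wcomp
  rw [dif_pos (List.idxOf_lt_length_iff.mpr ha)]
  simp only [Fin.mk.injEq, List.get_eq_getElem, List.getElem_idxOf, Nat.mod_eq_of_lt haN]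

def encode (n m N P : ℕ) (hN : 0 < N) (hm2 : 0 < 2 * m) (h2n : 0 < 2 ^ n)
    (i : Fin (2 * m) → Fin N) :
    Fin N × (Fin (2 * m) → Fin (2 * m)) × (Fin (m - 1) → Fin N) ×
      (Fin (2 * m) → Fin 4 × Fin (2 ^ n)) :=
  (i ⟨0, hm2⟩,
   fun j => ⟨(sortedIm n N i).idxOf (edgePsi n N i j) % (2 * m), Nat.mod_lt _ hm2⟩,
   fun p => wcomp N hN (sortedIm n N i) p.val,
   fun j => (selF n N P i j, ⟨(i (cycSucc j) : ℕ) / P % 2 ^ n, Nat.mod_lt _ h2n⟩))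

set_option maxHeartbeats 1000000 in
lemma countBound (n m : ℕ) (hm : 1 ≤ m) (N : ℕ) (hN : 0 < N) (hdvd : 2 ^ (n + 1) ∣ N) :
    (Finset.univ.filter fun i : Fin (2 * m) → Fin N =>
        (∀ j : Fin (2 * m), 2 ≤ (Finset.univ.filter fun j' : Fin (2 * m) =>
            edgePsi n N i j' = edgePsi n N i j).card) ∧
        (∃ j : Fin (2 * m), 3 ≤ (Finset.univ.filter fun j' : Fin (2 * m) =>
            edgePsi n N i j' = edgePsi n N i j).card)).card
      ≤ (2 * m) ^ (2 * m) * (2 ^ (n + 2)) ^ (2 * m) * N ^ m := by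
  classical
  obtain ⟨k, hk⟩ := hdvd
  have hk1 : 1 ≤ k := by
    rcases Nat.eq_zero_or_pos k with h | h
    · subst h; simp at hk; omega
    · exact h
  have h2n : 0 < 2 ^ n := Nat.pow_pos (by norm_num)
  set P := N / 2 ^ n with hPdef
  have hP2 : P = 2 * k := by
    have h1 : (2 : ℕ) ^ (n + 1) * k = 2 ^ n * (2 * k) := by rw [pow_succ]; ring
    rw [hPdef, hk, h1, Nat.mul_div_cancel_left _ h2n]
  have hP : 0 < P := by omega
  have hNP : 2 ^ n * P = N := by rw [hP2, hk, pow_succ]; ring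
  have hPN : P ≤ N := Nat.div_le_self _ _
  have hElt : ∀ (i : Fin (2 * m) → Fin N) j, edgePsi n N i j < N :=
    fun i j => lt_of_lt_of_le (psi_lt_of n N _ _ hP) hPN
  have hm2 : 0 < 2 * m := by omega
  have hinj : Set.InjOn (encode n m N P hN hm2 h2n)
      ((Finset.univ.filter fun i : Fin (2 * m) → Fin N =>
        (∀ j : Fin (2 * m), 2 ≤ (Finset.univ.filter fun j' : Fin (2 * m) =>
            edgePsi n N i j' = edgePsi n N i j).card) ∧
        (∃ j : Fin (2 * m), 3 ≤ (Finset.univ.filter fun j' : Fin (2 * m) =>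
            edgePsi n N i j' = edgePsi n N i j).card)) : Finset _) := by
    intro i hi i' hi' heq
    simp only [Finset.coe_filter, Set.mem_setOf_eq, Finset.mem_filter, Finset.mem_univ,
      true_and] at hi hi'
    obtain ⟨hi2, hi3⟩ := hi
    obtain ⟨hi2', hi3'⟩ := hi'
    have hcard : (Finset.univ.image (edgePsi n N i)).card ≤ m - 1 :=
      image_card_le n m N i hi2 hi3
    have hcard' : (Finset.univ.image (edgePsi n N i')).card ≤ m - 1 :=
      image_card_le n m N i' hi2' hi3'
    unfold encode at heq
    rw [Prod.mk.injEq, Prod.mk.injEq, Prod.mk.injEq] at heq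
    obtain ⟨h0, hσ, hw, hc⟩ := heq
    have hlen : (sortedIm n N i).length = (Finset.univ.image (edgePsi n N i)).card :=
      Finset.length_sort _
    have hlen' : (sortedIm n N i').length = (Finset.univ.image (edgePsi n N i')).card :=
      Finset.length_sort _
    -- step 1 : edge values agree
    have hEE : ∀ j, edgePsi n N i j = edgePsi n N i' j := by
      intro j
      have hmem : edgePsi n N i j ∈ sortedIm n N i :=
        (Finset.mem_sort _).mpr (Finset.mem_image_of_mem _ (Finset.mem_univ j))
      have hmem' : edgePsi n N i' j ∈ sortedIm n N i' :=
        (Finset.mem_sort _).mpr (Finset.mem_image_of_mem _ (Finset.mem_univ j))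
      have hidx : (sortedIm n N i).idxOf (edgePsi n N i j) < (sortedIm n N i).length :=
        List.idxOf_lt_length_iff.mpr hmem
      have hidx' : (sortedIm n N i').idxOf (edgePsi n N i' j) < (sortedIm n N i').length :=
        List.idxOf_lt_length_iff.mpr hmem'
      have hσj := congrFun hσ j
      simp only [Fin.mk.injEq] at hσj
      have hidxeq : (sortedIm n N i).idxOf (edgePsi n N i j)
          = (sortedIm n N i').idxOf (edgePsi n N i' j) := by
        rw [Nat.mod_eq_of_lt (by omega), Nat.mod_eq_of_lt (by omega)] at hσj
        exact hσj
      have hd2 : (sortedIm n N i).idxOf (edgePsi n N i j) < m - 1 := by omega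
      have hwp := congrFun hw (⟨(sortedIm n N i).idxOf (edgePsi n N i j), hd2⟩ : Fin (m - 1))
      have hwp' : wcomp N hN (sortedIm n N i) ((sortedIm n N i).idxOf (edgePsi n N i j))
          = wcomp N hN (sortedIm n N i') ((sortedIm n N i).idxOf (edgePsi n N i j)) := hwp
      have q1 : wcomp N hN (sortedIm n N i) ((sortedIm n N i).idxOf (edgePsi n N i j))
          = ⟨edgePsi n N i j, hElt i j⟩ := wcomp_indexOf N hN _ _ hmem (hElt i j)
      have q2 : wcomp N hN (sortedIm n N i') ((sortedIm n N i').idxOf (edgePsi n N i' j))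
          = ⟨edgePsi n N i' j, hElt i' j⟩ := wcomp_indexOf N hN _ _ hmem' (hElt i' j)
      have hfin : (⟨edgePsi n N i j, hElt i j⟩ : Fin N) = ⟨edgePsi n N i' j, hElt i' j⟩ := by
        rw [← q1, ← q2, ← hidxeq]
        exact hwp'
      simpa using hfin
    -- step 2 : vertices agree
    have hvert : ∀ t, ∀ ht : t < 2 * m, i ⟨t, ht⟩ = i' ⟨t, ht⟩ := by
      intro t
      induction t with
      | zero => intro ht; exact h0
      | succ t ih =>
        intro ht
        have ht' : t < 2 * m := by omega
        have ha : i ⟨t, ht'⟩ = i' ⟨t, ht'⟩ := ih ht'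
        have hcyc : cycSucc (⟨t, ht'⟩ : Fin (2 * m)) = ⟨t + 1, ht⟩ := by
          simp [cycSucc, Nat.mod_eq_of_lt ht]
        have hs := selF_spec n N P hPdef hP i ⟨t, ht'⟩
        have hs' := selF_spec n N P hPdef hP i' ⟨t, ht'⟩
        have hcj := congrFun hc ⟨t, ht'⟩
        rw [Prod.mk.injEq] at hcj
        obtain ⟨hcs, hcq⟩ := hcj
        simp only [Fin.mk.injEq] at hcq
        have hdiv : (i (cycSucc ⟨t, ht'⟩) : ℕ) / P < 2 ^ n := by
          rw [Nat.div_lt_iff_lt_mul hP, hNP]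
          exact (i _).isLt
        have hdiv' : (i' (cycSucc ⟨t, ht'⟩) : ℕ) / P < 2 ^ n := by
          rw [Nat.div_lt_iff_lt_mul hP, hNP]
          exact (i' _).isLt
        have hq : (i (cycSucc ⟨t, ht'⟩) : ℕ) / P = (i' (cycSucc ⟨t, ht'⟩) : ℕ) / P := by
          rwa [Nat.mod_eq_of_lt hdiv, Nat.mod_eq_of_lt hdiv'] at hcq
        have d1 := Nat.div_add_mod (i (cycSucc ⟨t, ht'⟩) : ℕ) P
        have d2 := Nat.div_add_mod (i' (cycSucc ⟨t, ht'⟩) : ℕ) P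
        rw [hs] at d1
        rw [hs'] at d2
        rw [ha, hEE ⟨t, ht'⟩, hcs, hq] at d1
        have hxv : (i (cycSucc ⟨t, ht'⟩) : ℕ) = (i' (cycSucc ⟨t, ht'⟩) : ℕ) := by omega
        have hfin : i (cycSucc ⟨t, ht'⟩) = i' (cycSucc ⟨t, ht'⟩) := Fin.ext hxv
        rwa [hcyc] at hfin
    funext j
    exact hvert j.val j.isLt
  have hle := Finset.card_le_card_of_injOn (encode n m N P hN hm2 h2n)
    (fun a _ => Finset.mem_univ _) hinj
  rw [Finset.card_univ] at hle
  have hcardβ : Fintype.card (Fin N × (Fin (2 * m) → Fin (2 * m)) × (Fin (m - 1) → Fin N) ×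
      (Fin (2 * m) → Fin 4 × Fin (2 ^ n)))
      = N * ((2 * m) ^ (2 * m) * (N ^ (m - 1) * (4 * 2 ^ n) ^ (2 * m))) := by
    simp [Fintype.card_fun]
  rw [hcardβ] at hle
  refine le_trans hle (le_of_eq ?_)
  have h42 : (4 * 2 ^ n) = 2 ^ (n + 2) := by rw [pow_succ, pow_succ]; ring
  have hNm : N * N ^ (m - 1) = N ^ m := by
    conv_rhs => rw [show m = (m - 1) + 1 by omega]
    rw [pow_succ]; ring
  rw [h42]
  calc N * ((2 * m) ^ (2 * m) * (N ^ (m - 1) * (2 ^ (n + 2)) ^ (2 * m)))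
      = (2 * m) ^ (2 * m) * (2 ^ (n + 2)) ^ (2 * m) * (N * N ^ (m - 1)) := by ring
    _ = (2 * m) ^ (2 * m) * (2 ^ (n + 2)) ^ (2 * m) * N ^ m := by rw [hNm]

/-- the number of tuples `(i₁,…,i_{2m}) ∈ {1,…,N}^{2m}` such that in
the cyclic list of values `ψ_N(i₁,i₂),…,ψ_N(i_{2m},i₁)` every value occurring
occurs at least twice and some value occurs at least three times is `O_{n,m}(N^m)`;
consequently such tuples contribute nothing to the average `2m`-th moment in
the limit. -/
theorem stmt7 (n m : ℕ) (hm : 1 ≤ m) :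
    ∃ c : ℝ, ∀ N : ℕ, 0 < N → 2 ^ (n + 1) ∣ N →
      (((Finset.univ.filter fun i : Fin (2 * m) → Fin N =>
          (∀ j : Fin (2 * m),
            2 ≤ (Finset.univ.filter fun j' : Fin (2 * m) =>
              edgePsi n N i j' = edgePsi n N i j).card) ∧
          (∃ j : Fin (2 * m),
            3 ≤ (Finset.univ.filter fun j' : Fin (2 * m) =>
              edgePsi n N i j' = edgePsi n N i j).card)).card : ℝ)
        ≤ c * (N : ℝ) ^ m) ∧
    Tendsto (fun t : ℕ =>
        ((Finset.univ.filter fun i : Fin (2 * m) → Fin (2 ^ (n + 1) * (t + 1)) =>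
          (∀ j : Fin (2 * m),
            2 ≤ (Finset.univ.filter fun j' : Fin (2 * m) =>
              edgePsi n (2 ^ (n + 1) * (t + 1)) i j' =
                edgePsi n (2 ^ (n + 1) * (t + 1)) i j).card) ∧
          (∃ j : Fin (2 * m),
            3 ≤ (Finset.univ.filter fun j' : Fin (2 * m) =>
              edgePsi n (2 ^ (n + 1) * (t + 1)) i j' =
                edgePsi n (2 ^ (n + 1) * (t + 1)) i j).card)).card : ℝ) /
          ((2 ^ (n + 1) * (t + 1) : ℕ) : ℝ) ^ (m + 1))
      atTop (nhds 0) := by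
  classical
  have part1 : ∀ N : ℕ, 0 < N → 2 ^ (n + 1) ∣ N →
      (((Finset.univ.filter fun i : Fin (2 * m) → Fin N =>
          (∀ j : Fin (2 * m),
            2 ≤ (Finset.univ.filter fun j' : Fin (2 * m) =>
              edgePsi n N i j' = edgePsi n N i j).card) ∧
          (∃ j : Fin (2 * m),
            3 ≤ (Finset.univ.filter fun j' : Fin (2 * m) =>
              edgePsi n N i j' = edgePsi n N i j).card)).card : ℝ)
        ≤ (((2 * m) ^ (2 * m) * (2 ^ (n + 2)) ^ (2 * m) : ℕ) : ℝ) * (N : ℝ) ^ m) := by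
    intro N hN hdvd
    have h := countBound n m hm N hN hdvd
    refine le_trans (Nat.cast_le.mpr h) (le_of_eq ?_)
    push_cast
    ring
  have htend : Tendsto (fun t : ℕ =>
        ((Finset.univ.filter fun i : Fin (2 * m) → Fin (2 ^ (n + 1) * (t + 1)) =>
          (∀ j : Fin (2 * m),
            2 ≤ (Finset.univ.filter fun j' : Fin (2 * m) =>
              edgePsi n (2 ^ (n + 1) * (t + 1)) i j' =
                edgePsi n (2 ^ (n + 1) * (t + 1)) i j).card) ∧
          (∃ j : Fin (2 * m),
            3 ≤ (Finset.univ.filter fun j' : Fin (2 * m) =>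
              edgePsi n (2 ^ (n + 1) * (t + 1)) i j' =
                edgePsi n (2 ^ (n + 1) * (t + 1)) i j).card)).card : ℝ) /
          ((2 ^ (n + 1) * (t + 1) : ℕ) : ℝ) ^ (m + 1))
      atTop (nhds 0) := by
    have hNt : ∀ t : ℕ, 0 < 2 ^ (n + 1) * (t + 1) := by
      intro t; positivity
    refine squeeze_zero (g := fun t => (((2 * m) ^ (2 * m) * (2 ^ (n + 2)) ^ (2 * m) : ℕ) : ℝ) /
        ((2 ^ (n + 1) * (t + 1) : ℕ) : ℝ)) (fun t => by positivity) (fun t => ?_) ?_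
    case refine_1 =>
      set Nt := 2 ^ (n + 1) * (t + 1) with hNtdef
      have hb := part1 Nt (hNt t) ⟨t + 1, rfl⟩
      have hpos : (0 : ℝ) < ((Nt : ℕ) : ℝ) := by exact_mod_cast hNt t
      show _ ≤ (((2 * m) ^ (2 * m) * (2 ^ (n + 2)) ^ (2 * m) : ℕ) : ℝ) / ((Nt : ℕ) : ℝ)
      rw [div_le_div_iff₀ (by positivity) hpos]
      calc (((Finset.univ.filter fun i : Fin (2 * m) → Fin Nt =>
            (∀ j : Fin (2 * m),
              2 ≤ (Finset.univ.filter fun j' : Fin (2 * m) =>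
                edgePsi n Nt i j' = edgePsi n Nt i j).card) ∧
            (∃ j : Fin (2 * m),
              3 ≤ (Finset.univ.filter fun j' : Fin (2 * m) =>
                edgePsi n Nt i j' = edgePsi n Nt i j).card)).card : ℝ)) * ((Nt : ℕ) : ℝ)
          ≤ ((((2 * m) ^ (2 * m) * (2 ^ (n + 2)) ^ (2 * m) : ℕ) : ℝ) * ((Nt : ℕ) : ℝ) ^ m)
              * ((Nt : ℕ) : ℝ) := mul_le_mul_of_nonneg_right hb (le_of_lt hpos)
        _ = (((2 * m) ^ (2 * m) * (2 ^ (n + 2)) ^ (2 * m) : ℕ) : ℝ) * ((Nt : ℕ) : ℝ) ^ (m + 1) := by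
            ring
    case refine_2 =>
      have h1 : Tendsto (fun t : ℕ => 2 ^ (n + 1) * (t + 1)) atTop atTop := by
        refine tendsto_atTop_mono (fun t => ?_) tendsto_id
        have h2 : 1 * (t + 1) ≤ 2 ^ (n + 1) * (t + 1) :=
          Nat.mul_le_mul_right _ Nat.one_le_two_pow
        simp only [id_eq]
        omega
      have h2 : Tendsto (fun t : ℕ => ((2 ^ (n + 1) * (t + 1) : ℕ) : ℝ)) atTop atTop :=
        tendsto_natCast_atTop_atTop.comp h1
      exact Tendsto.div_atTop tendsto_const_nhds h2
  exact ⟨(((2 * m) ^ (2 * m) * (2 ^ (n + 2)) ^ (2 * m) : ℕ) : ℝ),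
    fun N hN hdvd => ⟨part1 N hN hdvd, htend⟩⟩

end
end

section
/- Fix an integer m ≥ 1 and a perfect matching π of {1,…,2m} into m unordered pairs, and for each pair {q,l} ∈ π (with q < l) choose a sign ε_{ql} ∈ {+1,−1} and an integer C_{ql}, such that at least one of the signs equals +1. Then there is a constant c_m depending only on m (not on N or on the constants C_{ql}) such that for every N ≥ 1, the number of tuples (i_1,…,i_{2m}) ∈ {1,…,N}^{2m} satisfying i_q − i_{q+1} = ε_{ql}(i_l − i_{l+1}) + C_{ql} for every pair {q,l} ∈ π (indices read cyclically, i_{2m+1} = i_1) is at most c_m N^m. -/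
open Filter Finset

noncomputable section

def dd {m N : ℕ} (i : Fin m → Fin N) (j : Fin m) : ℤ :=
  ((i j : ℕ) : ℤ) - ((i (cycSucc j) : ℕ) : ℤ)

lemma cycSucc_injective {k : ℕ} : Function.Injective (cycSucc (k := k)) := by
  intro a b h
  have ha := a.isLt; have hb := b.isLt
  have h' : (a.val + 1) % k = (b.val + 1) % k := congrArg Fin.val h
  have e : ∀ x : ℕ, x < k → (x + 1) % k = if x + 1 = k then 0 else x + 1 := by
    intro x hx
    split
    · simp [*]
    · exact Nat.mod_eq_of_lt (by omega)
  rw [e a.val ha, e b.val hb] at h'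
  apply Fin.ext
  split_ifs at h' <;> omega

lemma sum_dd {m N : ℕ} (i : Fin m → Fin N) : ∑ j, dd i j = 0 := by
  unfold dd
  rw [Finset.sum_sub_distrib]
  rw [Fintype.sum_bijective cycSucc
    (Finite.injective_iff_bijective.mp cycSucc_injective)
    (fun j => ((i (cycSucc j) : ℕ) : ℤ)) (fun j => ((i j : ℕ) : ℤ)) (fun _ => rfl)]
  ring

lemma union_A {k : ℕ} (π : Fin k → Fin k) (hπ : Function.Involutive π)
    (hfp : ∀ j, π j ≠ j) : (univ.filter fun j => j < π j) ∪ ((univ.filter fun j => j < π j).image π)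
    = (univ : Finset (Fin k)) := by
  apply Finset.eq_univ_of_forall
  intro j
  rcases lt_trichotomy j (π j) with h | h | h
  · exact Finset.mem_union_left _ (by simp [h])
  · exact absurd h.symm (hfp j)
  · refine Finset.mem_union_right _ ?_
    refine Finset.mem_image.2 ⟨π j, ?_, hπ j⟩
    simp only [Finset.mem_filter, Finset.mem_univ, true_and]
    rw [hπ j]; exact h

lemma disj_A {k : ℕ} (π : Fin k → Fin k) (hπ : Function.Involutive π) : Disjoint (univ.filter fun j => j < π j)
    ((univ.filter fun j => j < π j).image π) := by
  rw [Finset.disjoint_left]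
  intro j hj hj'
  simp only [Finset.mem_filter, Finset.mem_univ, true_and] at hj
  rcases Finset.mem_image.1 hj' with ⟨a, ha, rfl⟩
  simp only [Finset.mem_filter, Finset.mem_univ, true_and] at ha
  rw [hπ a] at hj
  exact absurd (hj.trans ha) (lt_irrefl _)

lemma card_A {m : ℕ} (π : Fin (2*m) → Fin (2*m)) (hπ : Function.Involutive π)
    (hfp : ∀ j, π j ≠ j) : (univ.filter fun j => j < π j).card = m := by
  have h1 : ((univ.filter fun j => j < π j).image π).card
      = (univ.filter fun j => j < π j).card :=
    Finset.card_image_of_injective _ hπ.injective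
  have h2 := Finset.card_union_of_disjoint (disj_A π hπ)
  rw [union_A π hπ hfp] at h2
  simp only [Finset.card_univ, Fintype.card_fin] at h2
  omega


lemma dd_rev {m N : ℕ} (π : Fin (2*m) → Fin (2*m)) (ε C : Fin (2*m) → ℤ)
    (hε : ∀ j, ε j = 1 ∨ ε j = -1) (x : Fin (2*m) → Fin N)
    (hx : ∀ j, j < π j → dd x j = ε j * dd x (π j) + C j)
    {j : Fin (2*m)} (hj : j < π j) : dd x (π j) = ε j * (dd x j - C j) := by
  have h := hx j hj
  rcases hε j with h1 | h1 <;> rw [h1] at h ⊢ <;> linarith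

lemma recover_d {m N : ℕ} (π : Fin (2*m) → Fin (2*m)) (hπ : Function.Involutive π)
    (hfp : ∀ j, π j ≠ j) (ε C : Fin (2*m) → ℤ) (hε : ∀ j, ε j = 1 ∨ ε j = -1)
    (j0 : Fin (2*m)) (hj0 : j0 < π j0) (hε0 : ε j0 = 1)
    (i i' : Fin (2*m) → Fin N)
    (hi : ∀ j, j < π j → dd i j = ε j * dd i (π j) + C j)
    (hi' : ∀ j, j < π j → dd i' j = ε j * dd i' (π j) + C j)
    (hS : ∀ j, j < π j → j ≠ j0 → dd i j = dd i' j) :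
    ∀ j, dd i j = dd i' j := by
  set A := (univ.filter fun j => j < π j) with hA
  -- split of the telescoping sum
  have hsplit : ∀ x : Fin (2*m) → Fin N, ∑ j ∈ A, (dd x j + dd x (π j)) = 0 := by
    intro x
    rw [Finset.sum_add_distrib]
    rw [show ∑ j ∈ A, dd x (π j) = ∑ j ∈ A.image π, dd x j from
      (Finset.sum_image (fun a _ b _ h => hπ.injective h)).symm]
    rw [← Finset.sum_union (disj_A π hπ), union_A π hπ hfp]
    exact sum_dd x
  -- rewrite each term using the constraints
  have hterm : ∀ (x : Fin (2*m) → Fin N)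
      (hx : ∀ j, j < π j → dd x j = ε j * dd x (π j) + C j),
      ∑ j ∈ A, ((ε j + 1) * dd x (π j) + C j) = 0 := by
    intro x hx
    rw [← hsplit x]
    apply Finset.sum_congr rfl
    intro j hj
    simp only [hA, Finset.mem_filter] at hj
    have := hx j hj.2
    ring_nf
    linarith
  -- difference of sums
  have hdiff : ∑ j ∈ A, (ε j + 1) * (dd i (π j) - dd i' (π j)) = 0 := by
    have h1 := hterm i hi
    have h2 := hterm i' hi'
    have : ∑ j ∈ A, (ε j + 1) * (dd i (π j) - dd i' (π j))
        = ∑ j ∈ A, ((ε j + 1) * dd i (π j) + C j)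
          - ∑ j ∈ A, ((ε j + 1) * dd i' (π j) + C j) := by
      rw [← Finset.sum_sub_distrib]
      exact Finset.sum_congr rfl fun j _ => by ring
    rw [this, h1, h2]; ring
  have hj0A : j0 ∈ A := by simp [hA, hj0]
  -- vanishing of all other terms
  have hAS : ∀ j, j < π j → j ≠ j0 → dd i (π j) = dd i' (π j) := by
    intro j hj hne
    rw [dd_rev π ε C hε i hi hj, dd_rev π ε C hε i' hi' hj, hS j hj hne]
  have hsingle : ∑ j ∈ A, (ε j + 1) * (dd i (π j) - dd i' (π j))
      = (ε j0 + 1) * (dd i (π j0) - dd i' (π j0)) := by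
    apply Finset.sum_eq_single_of_mem j0 hj0A
    intro b hb hne
    simp only [hA, Finset.mem_filter] at hb
    rw [hAS b hb.2 hne]
    ring
  rw [hsingle, hε0] at hdiff
  have hpij0 : dd i (π j0) = dd i' (π j0) := by linarith
  have hdj0 : dd i j0 = dd i' j0 := by
    rw [hi j0 hj0, hi' j0 hj0, hpij0]
  -- conclusion for all j in A
  have hAall : ∀ j, j < π j → dd i j = dd i' j := by
    intro j hj
    by_cases hne : j = j0
    · rw [hne]; exact hdj0
    · exact hS j hj hne
  intro j
  rcases lt_trichotomy j (π j) with h | h | h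
  · exact hAall j h
  · exact absurd h.symm (hfp j)
  · have hπj : π j < π (π j) := by rw [hπ j]; exact h
    have := hAall (π j) hπj
    have h1 := dd_rev π ε C hε i hi hπj
    have h2 := dd_rev π ε C hε i' hi' hπj
    rw [hπ j] at h1 h2
    rw [h1, h2, this]

lemma recover_i {m N : ℕ} (hm : 1 ≤ m) (i i' : Fin (2*m) → Fin N)
    (h0 : i ⟨0, by omega⟩ = i' ⟨0, by omega⟩) (hd : ∀ j, dd i j = dd i' j) :
    i = i' := by
  have key : ∀ k : ℕ, ∀ h : k < 2*m, i ⟨k, h⟩ = i' ⟨k, h⟩ := by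
    intro k
    induction k with
    | zero => intro h; exact h0
    | succ n ih =>
      intro h
      have hn : n < 2*m := by omega
      have hcs : cycSucc (⟨n, hn⟩ : Fin (2*m)) = ⟨n+1, h⟩ := by
        simp [cycSucc, Nat.mod_eq_of_lt h]
      have hdn := hd ⟨n, hn⟩
      rw [dd, dd, hcs, ih hn] at hdn
      have : ((i ⟨n+1, h⟩ : ℕ) : ℤ) = ((i' ⟨n+1, h⟩ : ℕ) : ℤ) := by linarith
      exact Fin.ext (by exact_mod_cast this)
  funext j
  have := key j.val j.isLt
  simpa using this

/-- for a perfect matching `π` of the `2m` cyclic differences, signs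
`ε` with at least one `+1`, and integer constants `C`, the number of tuples
`(i₁,…,i_{2m}) ∈ {1,…,N}^{2m}` satisfying
`i_q - i_{q+1} = ε_{ql}(i_l - i_{l+1}) + C_{ql}` for every pair `{q,l} ∈ π`
is at most `c_m N^m`, with `c_m` depending only on `m`. -/
theorem stmt8 (m : ℕ) (hm : 1 ≤ m) :
    ∃ c : ℝ, ∀ N : ℕ, 1 ≤ N → ∀ π : Fin (2 * m) → Fin (2 * m),
      Function.Involutive π → (∀ j, π j ≠ j) →
      ∀ ε C : Fin (2 * m) → ℤ,
      (∀ j, ε j = 1 ∨ ε j = -1) → (∃ j, j < π j ∧ ε j = 1) →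
      ((Finset.univ.filter fun i : Fin (2 * m) → Fin N =>
          ∀ j, j < π j →
            (((i j : ℕ) + 1 : ℤ) - ((i (cycSucc j) : ℕ) + 1 : ℤ)) =
              ε j * (((i (π j) : ℕ) + 1 : ℤ) - ((i (cycSucc (π j)) : ℕ) + 1 : ℤ))
                + C j).card : ℝ)
        ≤ c * (N : ℝ) ^ m := by
  refine ⟨(3 : ℝ) ^ m, ?_⟩
  intro N hN π hπ hfp ε C hε hex
  obtain ⟨j0, hj0, hε0⟩ := hex
  set T := (Finset.univ.filter fun i : Fin (2 * m) → Fin N =>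
      ∀ j, j < π j →
        (((i j : ℕ) + 1 : ℤ) - ((i (cycSucc j) : ℕ) + 1 : ℤ)) =
          ε j * (((i (π j) : ℕ) + 1 : ℤ) - ((i (cycSucc (π j)) : ℕ) + 1 : ℤ)) + C j)
    with hT
  set S := ((univ.filter fun j => j < π j).erase j0) with hSdef
  set target := ((univ : Finset (Fin N)) ×ˢ Fintype.piFinset
      (fun j : Fin (2*m) => if j ∈ S then Finset.Icc (-(N:ℤ)) (N:ℤ) else {0})) with htgt
  have hmpos : 0 < 2 * m := by omega
  set f : (Fin (2 * m) → Fin N) → Fin N × (Fin (2*m) → ℤ) :=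
    fun i => (i ⟨0, hmpos⟩, fun j => if j ∈ S then dd i j else 0) with hf
  -- translate the filter condition into `dd` form
  have hmemT : ∀ i ∈ T, ∀ j, j < π j → dd i j = ε j * dd i (π j) + C j := by
    intro i hi j hj
    have := (Finset.mem_filter.1 hi).2 j hj
    simp only [add_sub_add_right_eq_sub] at this
    exact this
  -- maps to
  have hmaps : ∀ i ∈ T, f i ∈ target := by
    intro i _
    simp only [htgt, hf, Finset.mem_product, Finset.mem_univ, true_and,
      Fintype.mem_piFinset]
    intro j
    split_ifs with h
    · have h1 := (i j).isLt
      have h2 := (i (cycSucc j)).isLt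
      rw [Finset.mem_Icc]
      unfold dd
      omega
    · simp
  -- injectivity
  have hinj : Set.InjOn f T := by
    intro i hi i' hi' hfe
    have h0 : i ⟨0, hmpos⟩ = i' ⟨0, hmpos⟩ := congrArg Prod.fst hfe
    have hfun := congrArg Prod.snd hfe
    have hS : ∀ j, j < π j → j ≠ j0 → dd i j = dd i' j := by
      intro j hj hne
      have hjS : j ∈ S := by
        simp only [hSdef, Finset.mem_erase, Finset.mem_filter, Finset.mem_univ,
          true_and]
        exact ⟨hne, hj⟩
      have := congrFun hfun j
      simpa only [hf, if_pos hjS] using this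
    have hd := recover_d π hπ hfp ε C hε j0 hj0 hε0 i i' (hmemT i hi) (hmemT i' hi')
      hS
    exact recover_i hm i i' h0 hd
  have hcard := Finset.card_le_card_of_injOn f hmaps hinj
  -- card of the target
  have hj0mem : j0 ∈ (univ.filter fun j => j < π j) := by
    simp [hj0]
  have hcardS : S.card = m - 1 := by
    rw [hSdef, Finset.card_erase_of_mem hj0mem, card_A π hπ hfp]
  have htc : target.card = N * (2*N+1)^(m-1) := by
    rw [htgt, Finset.card_product, Finset.card_univ, Fintype.card_fin,
      Fintype.card_piFinset]
    congr 1
    have : ∀ j : Fin (2*m),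
        (if j ∈ S then Finset.Icc (-(N:ℤ)) (N:ℤ) else ({0} : Finset ℤ)).card
        = if j ∈ S then 2*N+1 else 1 := by
      intro j
      split_ifs
      · rw [Int.card_Icc]; omega
      · simp
    rw [Finset.prod_congr rfl fun j _ => this j, Finset.prod_ite_mem,
      Finset.univ_inter, Finset.prod_const, hcardS]
  -- numeric bound
  have hnat : T.card ≤ 3^m * N^m := by
    refine le_trans (htc ▸ hcard) ?_
    calc N * (2*N+1)^(m-1) ≤ N * (3*N)^(m-1) :=
          Nat.mul_le_mul_left _ (Nat.pow_le_pow_left (by omega) _)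
      _ = 3^(m-1) * N^m := by
          rw [mul_pow]
          rw [show N^m = N^(m-1+1) by rw [Nat.sub_add_cancel hm]]
          ring
      _ ≤ 3^m * N^m :=
          Nat.mul_le_mul_right _ (Nat.pow_le_pow_right (by norm_num) (by omega))
  calc (T.card : ℝ) ≤ ((3^m * N^m : ℕ) : ℝ) := by exact_mod_cast hnat
    _ = (3:ℝ)^m * (N:ℝ)^m := by push_cast; ring
end
end

section
/- Fix an integer n ≥ 0 and write P = N/2^n for N a positive multiple of 2^{n+1}. For each c ∈ {0,1,…,2^n − 1}, the number of triples (i,j,l) ∈ {1,…,N}^3 with i + cP ≤ N such that ψ_N(i,j) = ψ_N(j, i + cP) and ψ_N(i + cP, l) = ψ_N(l, i) equals ((2^n − c)/2^n)^3 N^3 + O_n(N^2); and for each c ∈ {1,…,2^n − 1}, the number of triples (i,j,l) ∈ {1,…,N}^3 with i + cP − 1 ≤ N such that ψ_N(i,j) = ψ_N(j, i + cP − 1) and ψ_N(i + cP − 1, l) = ψ_N(l, i) equals ((2^n c² − c³)/2^{3n}) N^3 + O_n(N^2), where the implied constants depend only on n. -/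
open Filter Finset

noncomputable section

/-- Number of triples `(i,j,l) ∈ {1,…,N}³` with `i + s ≤ N` such that
`ψ_N(i,j) = ψ_N(j,i+s)` and `ψ_N(i+s,l) = ψ_N(l,i)` (the adjacent fourth-moment
matchings with third index `k = i + s`). -/
def tripleCount (n N s : ℕ) : ℕ :=
  ((Finset.Icc 1 N ×ˢ Finset.Icc 1 N ×ˢ Finset.Icc 1 N).filter
    fun x : ℕ × ℕ × ℕ =>
      x.1 + s ≤ N ∧
      psi n N x.1 x.2.1 = psi n N x.2.1 (x.1 + s) ∧
      psi n N (x.1 + s) x.2.2 = psi n N x.2.2 x.1).card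


lemma submod (P m u : ℕ) (hP : 0 < P) (hu : u ≤ m * P) :
    (m * P - u) % P = (P - u % P) % P := by
  obtain ⟨q, w, hw, rfl⟩ : ∃ q w, w < P ∧ u = P * q + w :=
    ⟨u / P, u % P, Nat.mod_lt _ hP, (Nat.div_add_mod u P).symm⟩
  have hmod : (P * q + w) % P = w := by rw [Nat.mul_add_mod, Nat.mod_eq_of_lt hw]
  rw [hmod]
  rcases Nat.eq_zero_or_pos w with rfl | hw1
  · have h1 : m * P - (P * q + 0) = (m - q) * P := by
      rw [Nat.sub_mul, mul_comm P q]; omega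
    rw [h1, Nat.mul_mod_left, Nat.sub_zero, Nat.mod_self]
  · have hqm : q < m := by
      by_contra h
      have h1 : m * P ≤ q * P := Nat.mul_le_mul_right P (by omega)
      have h2 : q * P = P * q := mul_comm _ _
      omega
    obtain ⟨k, rfl⟩ : ∃ k, m = q + 1 + k := ⟨m - q - 1, by omega⟩
    have h1 : (q + 1 + k) * P = q * P + P + k * P := by ring
    have h2 : q * P = P * q := mul_comm _ _
    have h3 : (q + 1 + k) * P - (P * q + w) = (P - w) + k * P := by omega
    rw [h3, Nat.add_mul_mod_self_right]

lemma psi_symm (n N i j : ℕ) : psi n N i j = psi n N j i := by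
  unfold psi
  rw [show ((i:ℤ) - j).natAbs = ((j:ℤ) - i).natAbs by omega]

lemma psi_eq_iff {n N P Q : ℕ} (hP : N / 2 ^ n = P) (hPQ : P = 2 * Q) (hQ : 0 < Q)
    (a b c d : ℕ) :
    psi n N a b = psi n N c d ↔
      (((a:ℤ) - b).natAbs % P = ((c:ℤ) - d).natAbs % P ∨
       ((a:ℤ) - b).natAbs % P + ((c:ℤ) - d).natAbs % P = P - 1) := by
  unfold psi
  rw [hP]
  have h1 : ((a:ℤ) - b).natAbs % P < P := Nat.mod_lt _ (by omega)
  have h2 : ((c:ℤ) - d).natAbs % P < P := Nat.mod_lt _ (by omega)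
  omega

section char
variable {n N P Q : ℕ}

lemma charA (hP : N / 2 ^ n = P) (hPQ : P = 2 * Q) (hQ : 0 < Q)
    (c i j : ℕ) :
    psi n N i j = psi n N j (i + c * P) ↔
      ¬(i < j ∧ j ≤ i + c * P ∧ (j - i) % P ≠ 0 ∧ (j - i) % P ≠ Q) := by
  rw [psi_eq_iff hP hPQ hQ]
  rcases le_or_gt j i with hji | hij
  · have hu : ((i:ℤ) - j).natAbs = i - j := by omega
    have hv : ((j:ℤ) - ((i + c * P : ℕ) : ℤ)).natAbs = (i - j) + c * P := by omega
    rw [hu, hv, Nat.add_mul_mod_self_right]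
    omega
  · rcases le_or_gt j (i + c * P) with hle | hgt
    · have hu : ((i:ℤ) - j).natAbs = j - i := by omega
      have hv : ((j:ℤ) - ((i + c * P : ℕ) : ℤ)).natAbs = c * P - (j - i) := by omega
      rw [hu, hv, submod P c (j - i) (by omega) (by omega)]
      set w := (j - i) % P with hw
      have hwP : w < P := Nat.mod_lt _ (by omega)
      rcases Nat.eq_zero_or_pos w with hw0 | hw1
      · rw [hw0, Nat.sub_zero, Nat.mod_self]; omega
      · rw [Nat.mod_eq_of_lt (by omega : P - w < P)]; omega
    · have hu : ((i:ℤ) - j).natAbs = j - i := by omega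
      have hv : ((j:ℤ) - ((i + c * P : ℕ) : ℤ)).natAbs = (j - i) - c * P := by omega
      have h3 : j - i = ((j - i) - c * P) + c * P := by omega
      rw [hu, hv]
      rw [show ((j - i) - c * P) % P = (j - i) % P by
        conv_rhs => rw [h3]
        rw [Nat.add_mul_mod_self_right]]
      omega

lemma charB (hP : N / 2 ^ n = P) (hPQ : P = 2 * Q) (hQ : 0 < Q)
    (c i j : ℕ) (hc : 1 ≤ c) (hi : 1 ≤ i) :
    psi n N i j = psi n N j (i + (c * P - 1)) ↔
      ((j ≤ i ∧ ((i - j) % P = 0 ∨ (i - j) % P = Q)) ∨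
       (i < j ∧ j ≤ i + (c * P - 1)) ∨
       (i + (c * P - 1) < j ∧ ((j + 1 - i) % P = 0 ∨ (j + 1 - i) % P = Q))) := by
  obtain ⟨c', rfl⟩ : ∃ c', c = c' + 1 := ⟨c - 1, by omega⟩
  have hcP : (c' + 1) * P = c' * P + P := by ring
  rw [psi_eq_iff hP hPQ hQ]
  rcases le_or_gt j i with hji | hij
  · have hu : ((i:ℤ) - j).natAbs = i - j := by omega
    have hv : ((j:ℤ) - ((i + ((c' + 1) * P - 1) : ℕ) : ℤ)).natAbs
        = ((i - j) + P - 1) + c' * P := by omega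
    rw [hu, hv, Nat.add_mul_mod_self_right]
    set d := i - j with hd
    have hdm := Nat.div_add_mod d P
    set w := d % P with hw
    have hwP : w < P := Nat.mod_lt _ (by omega)
    have he : d + P - 1 = (w + P - 1) + P * (d / P) := by omega
    rw [he, mul_comm P (d / P), Nat.add_mul_mod_self_right]
    rcases Nat.eq_zero_or_pos w with hw0 | hw1
    · rw [hw0, Nat.mod_eq_of_lt (by omega : 0 + P - 1 < P)]
      omega
    · have h1 : w + P - 1 = (w - 1) + P := by omega
      rw [h1, Nat.add_mod_right, Nat.mod_eq_of_lt (by omega : w - 1 < P)]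
      omega
  · rcases le_or_gt j (i + ((c' + 1) * P - 1)) with hle | hgt
    · have hu : ((i:ℤ) - j).natAbs = j - i := by omega
      have hv : ((j:ℤ) - ((i + ((c' + 1) * P - 1) : ℕ) : ℤ)).natAbs
          = (c' + 1) * P - ((j - i) + 1) := by omega
      rw [hu, hv, submod P (c' + 1) ((j - i) + 1) (by omega) (by omega)]
      set e := j - i with hde
      have hdm := Nat.div_add_mod e P
      set w := e % P with hw
      have hwP : w < P := Nat.mod_lt _ (by omega)
      have he1 : e + 1 = (w + 1) + P * (e / P) := by omega
      rw [he1, mul_comm P (e / P), Nat.add_mul_mod_self_right]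
      rcases eq_or_lt_of_le (by omega : w + 1 ≤ P) with hw1 | hw1
      · rw [hw1, Nat.mod_self, Nat.sub_zero, Nat.mod_self]
        omega
      · rw [Nat.mod_eq_of_lt hw1, Nat.mod_eq_of_lt (by omega : P - (w + 1) < P)]
        omega
    · have hu : ((i:ℤ) - j).natAbs = j - i := by omega
      have hv : ((j:ℤ) - ((i + ((c' + 1) * P - 1) : ℕ) : ℤ)).natAbs
          = ((j + 1 - i) - (c' + 1) * P) := by omega
      have h3 : j + 1 - i = ((j + 1 - i) - (c' + 1) * P) + (c' + 1) * P := by omega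
      rw [hu, hv]
      rw [show ((j + 1 - i) - (c' + 1) * P) % P = (j + 1 - i) % P by
        conv_rhs => rw [h3]
        rw [Nat.add_mul_mod_self_right]]
      set e := j - i with hde
      have hee : j + 1 - i = e + 1 := by omega
      rw [hee]
      have hdm := Nat.div_add_mod e P
      set w := e % P with hw
      have hwP : w < P := Nat.mod_lt _ (by omega)
      have he1 : e + 1 = (w + 1) + P * (e / P) := by omega
      rw [he1, mul_comm P (e / P), Nat.add_mul_mod_self_right]
      rcases eq_or_lt_of_le (by omega : w + 1 ≤ P) with hw1 | hw1
      · rw [hw1, Nat.mod_self]; omega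
      · rw [Nat.mod_eq_of_lt hw1]; omega

end char

lemma count_one (P r a b : ℕ) (hP : 0 < P) (hr : r < P) (hab : a ≤ b)
    (hd : P ∣ b - a) :
    ((Finset.Ioc b (b + P)).filter (fun e => (e - a) % P = r)).card = 1 := by
  obtain ⟨k, hk⟩ := hd
  rw [Finset.card_eq_one]
  refine ⟨b + (if r = 0 then P else r), ?_⟩
  ext e
  simp only [Finset.mem_filter, Finset.mem_Ioc, Finset.mem_singleton]
  constructor
  · rintro ⟨⟨h1, h2⟩, h3⟩
    have he : e - a = (e - b) + P * k := by omega
    rw [he, Nat.add_mul_mod_self_left] at h3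
    rcases (by omega : e - b = P ∨ e - b < P) with h4 | h4
    · rw [h4, Nat.mod_self] at h3
      simp [← h3]
      omega
    · rw [Nat.mod_eq_of_lt h4] at h3
      split_ifs with h5 <;> omega
  · rintro rfl
    split_ifs with h5
    · refine ⟨⟨by omega, by omega⟩, ?_⟩
      have he : b + P - a = P + P * k := by omega
      rw [he, Nat.add_mul_mod_self_left, Nat.mod_self, h5]
    · refine ⟨⟨by omega, by omega⟩, ?_⟩
      have he : b + r - a = r + P * k := by omega
      rw [he, Nat.add_mul_mod_self_left, Nat.mod_eq_of_lt hr]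

lemma count_multi (P r : ℕ) (hP : 0 < P) (hr : r < P) (a : ℕ) :
    ∀ c : ℕ, ((Finset.Ioc a (a + c * P)).filter (fun e => (e - a) % P = r)).card = c := by
  intro c
  induction c with
  | zero => simp
  | succ c ih =>
    have h1 : a + (c + 1) * P = (a + c * P) + P := by ring
    rw [h1, ← Finset.Ioc_union_Ioc_eq_Ioc (by omega : a ≤ a + c * P) (by omega : a + c * P ≤ a + c * P + P),
      Finset.filter_union, Finset.card_union_of_disjoint]
    · rw [ih, count_one P r a (a + c * P) hP hr (by omega)
        (by rw [Nat.add_sub_cancel_left]; exact dvd_mul_left P c)]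
    · apply Finset.disjoint_filter_filter
      rw [Finset.disjoint_left]
      intro x hx hx'
      simp only [Finset.mem_Ioc] at hx hx'
      omega

lemma count_left (P r i N : ℕ) (hP : 0 < P) (hiN : i ≤ N) :
    ((Finset.Icc 1 N).filter (fun j => j ≤ i ∧ (i - j) % P = r)).card ≤ N / P + 1 := by
  have h : ((Finset.Icc 1 N).filter (fun j => j ≤ i ∧ (i - j) % P = r)).card
      ≤ (Finset.Icc 0 (N / P)).card := by
    apply Finset.card_le_card_of_injOn (fun j => (i - j) / P)
    · intro j hj
      simp only [Finset.mem_coe, Finset.mem_filter, Finset.mem_Icc] at hj ⊢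
      exact ⟨Nat.zero_le _, Nat.div_le_div_right (by omega)⟩
    · intro j1 h1 j2 h2 h12
      simp only [Finset.mem_coe, Finset.mem_filter, Finset.mem_Icc] at h1 h2
      have e1 := Nat.div_add_mod (i - j1) P
      have e2 := Nat.div_add_mod (i - j2) P
      simp only at h12
      rw [h12] at e1
      omega
  simpa [Nat.card_Icc] using h

lemma count_right (P r i N : ℕ) (hP : 0 < P) (hi : 1 ≤ i) :
    ((Finset.Icc 1 N).filter (fun j => i ≤ j ∧ (j + 1 - i) % P = r)).card ≤ N / P + 1 := by
  have h : ((Finset.Icc 1 N).filter (fun j => i ≤ j ∧ (j + 1 - i) % P = r)).card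
      ≤ (Finset.Icc 0 (N / P)).card := by
    apply Finset.card_le_card_of_injOn (fun j => (j + 1 - i) / P)
    · intro j hj
      simp only [Finset.mem_coe, Finset.mem_filter, Finset.mem_Icc] at hj ⊢
      exact ⟨Nat.zero_le _, Nat.div_le_div_right (by omega)⟩
    · intro j1 h1 j2 h2 h12
      simp only [Finset.mem_coe, Finset.mem_filter, Finset.mem_Icc] at h1 h2
      have e1 := Nat.div_add_mod (j1 + 1 - i) P
      have e2 := Nat.div_add_mod (j2 + 1 - i) P
      simp only at h12
      rw [h12] at e1
      omega
  simpa [Nat.card_Icc] using h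

lemma tc_eq (n N s : ℕ) :
    tripleCount n N s =
      ∑ i ∈ (Finset.Icc 1 N).filter (fun i => i + s ≤ N),
        ((Finset.Icc 1 N).filter (fun j => psi n N i j = psi n N j (i + s))).card ^ 2 := by
  have hsym : ∀ i l : ℕ, (psi n N (i + s) l = psi n N l i) ↔ (psi n N i l = psi n N l (i + s)) := by
    intro i l
    rw [psi_symm n N (i + s) l, psi_symm n N l i]
    exact eq_comm
  unfold tripleCount
  rw [Finset.card_filter, Finset.sum_product]
  rw [Finset.sum_filter]
  apply Finset.sum_congr rfl
  intro i _
  by_cases hA : i + s ≤ N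
  · simp only [hA, if_true, true_and]
    rw [Finset.sum_product]
    have key : ∀ j l : ℕ,
        (if psi n N i j = psi n N j (i + s) ∧ psi n N (i + s) l = psi n N l i then (1:ℕ) else 0)
        = (if psi n N i j = psi n N j (i + s) then (1:ℕ) else 0) *
          (if psi n N i l = psi n N l (i + s) then (1:ℕ) else 0) := by
      intro j l
      simp only [hsym]
      by_cases h1 : psi n N i j = psi n N j (i + s) <;>
        by_cases h2 : psi n N i l = psi n N l (i + s) <;> simp [h1, h2]
    calc (∑ j ∈ Finset.Icc 1 N, ∑ l ∈ Finset.Icc 1 N,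
            if psi n N i j = psi n N j (i + s) ∧ psi n N (i + s) l = psi n N l i then (1:ℕ) else 0)
        = ∑ j ∈ Finset.Icc 1 N, ∑ l ∈ Finset.Icc 1 N,
            ((if psi n N i j = psi n N j (i + s) then (1:ℕ) else 0) *
             (if psi n N i l = psi n N l (i + s) then (1:ℕ) else 0)) := by
          exact Finset.sum_congr rfl fun j _ => Finset.sum_congr rfl fun l _ => key j l
      _ = (∑ j ∈ Finset.Icc 1 N, if psi n N i j = psi n N j (i + s) then (1:ℕ) else 0) *
          (∑ l ∈ Finset.Icc 1 N, if psi n N i l = psi n N l (i + s) then (1:ℕ) else 0) := by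
          rw [Finset.sum_mul_sum]
      _ = ((Finset.Icc 1 N).filter (fun j => psi n N i j = psi n N j (i + s))).card ^ 2 := by
          rw [← Finset.card_filter, sq]
  · simp [hA]

section cases
variable {n N P Q : ℕ}

lemma case1count (hP : N / 2 ^ n = P) (hPQ : P = 2 * Q) (hQ : 0 < Q)
    (hN : N = 2 ^ n * P) (c : ℕ) (hc : c < 2 ^ n) :
    tripleCount n N (c * P) = (N - c * P) * (N - (c * P - 2 * c)) ^ 2 := by
  have hPpos : 0 < P := by omega
  have hcP : c * P ≤ N := by
    rw [hN]; exact Nat.mul_le_mul_right P (le_of_lt hc)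
  rw [tc_eq]
  have hfilter : (Finset.Icc 1 N).filter (fun i => i + c * P ≤ N)
      = Finset.Icc 1 (N - c * P) := by
    ext i; simp only [Finset.mem_filter, Finset.mem_Icc]; omega
  rw [hfilter]
  have fcard : ∀ i ∈ Finset.Icc 1 (N - c * P),
      ((Finset.Icc 1 N).filter (fun j => psi n N i j = psi n N j (i + c * P))).card
        = N - (c * P - 2 * c) := by
    intro i hi
    rw [Finset.mem_Icc] at hi
    have hi1 : 1 ≤ i := hi.1
    have hiN : i + c * P ≤ N := by omega
    have hset : (Finset.Icc 1 N).filter (fun j => psi n N i j = psi n N j (i + c * P))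
        = Finset.Icc 1 N \
          ((Finset.Ioc i (i + c * P)).filter
            (fun j => ¬((j - i) % P = 0 ∨ (j - i) % P = Q))) := by
      ext j
      simp only [Finset.mem_filter, Finset.mem_sdiff, Finset.mem_Icc, Finset.mem_Ioc,
        charA hP hPQ hQ c i j]
      omega
    rw [hset, Finset.card_sdiff_of_subset]
    · rw [Finset.filter_not, Finset.card_sdiff_of_subset (Finset.filter_subset _ _)]
      rw [Finset.filter_or, Finset.card_union_of_disjoint]
      · rw [count_multi P 0 hPpos (by omega) i c, count_multi P Q hPpos (by omega) i c]
        simp only [Nat.card_Ioc, Nat.card_Icc]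
        omega
      · rw [Finset.disjoint_left]
        intro x hx hx'
        simp only [Finset.mem_filter] at hx hx'
        omega
    · intro j hj
      simp only [Finset.mem_filter, Finset.mem_Ioc] at hj
      rw [Finset.mem_Icc]
      omega
  rw [Finset.sum_congr rfl (fun i hi => by rw [fcard i hi])]
  rw [Finset.sum_const, Nat.card_Icc, smul_eq_mul]
  congr 1

lemma case2bounds (hP : N / 2 ^ n = P) (hPQ : P = 2 * Q) (hQ : 0 < Q)
    (hN : N = 2 ^ n * P) (c : ℕ) (hc1 : 1 ≤ c) (hc : c < 2 ^ n) :
    (N - c * P + 1) * (c * P - 1) ^ 2 ≤ tripleCount n N (c * P - 1) ∧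
    tripleCount n N (c * P - 1) ≤ (N - c * P + 1) * (c * P - 1 + (4 * 2 ^ n + 4)) ^ 2 := by
  have hPpos : 0 < P := by omega
  have hcP : c * P ≤ N := by
    rw [hN]; exact Nat.mul_le_mul_right P (le_of_lt hc)
  have hPcP : P ≤ c * P := by
    calc P = 1 * P := (one_mul P).symm
    _ ≤ c * P := Nat.mul_le_mul_right P hc1
  have hNP : N / P = 2 ^ n := by rw [hN, Nat.mul_div_cancel _ hPpos]
  rw [tc_eq]
  have hfilter : (Finset.Icc 1 N).filter (fun i => i + (c * P - 1) ≤ N)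
      = Finset.Icc 1 (N - c * P + 1) := by
    ext i; simp only [Finset.mem_filter, Finset.mem_Icc]; omega
  rw [hfilter]
  constructor
  · -- lower bound
    calc (N - c * P + 1) * (c * P - 1) ^ 2
        = ∑ _i ∈ Finset.Icc 1 (N - c * P + 1), (c * P - 1) ^ 2 := by
          rw [Finset.sum_const, Nat.card_Icc, smul_eq_mul] <;> congr 1 <;> omega
      _ ≤ ∑ i ∈ Finset.Icc 1 (N - c * P + 1),
            ((Finset.Icc 1 N).filter
              (fun j => psi n N i j = psi n N j (i + (c * P - 1)))).card ^ 2 := by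
          apply Finset.sum_le_sum
          intro i hi
          rw [Finset.mem_Icc] at hi
          apply Nat.pow_le_pow_left
          have hsub : Finset.Ioc i (i + (c * P - 1)) ⊆
              (Finset.Icc 1 N).filter
                (fun j => psi n N i j = psi n N j (i + (c * P - 1))) := by
            intro j hj
            rw [Finset.mem_Ioc] at hj
            rw [Finset.mem_filter, Finset.mem_Icc]
            refine ⟨⟨by omega, by omega⟩, ?_⟩
            rw [charB hP hPQ hQ c i j hc1 hi.1]
            omega
          calc c * P - 1 = (Finset.Ioc i (i + (c * P - 1))).card := by
                rw [Nat.card_Ioc]; omega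
            _ ≤ _ := Finset.card_le_card hsub
  · -- upper bound
    calc (∑ i ∈ Finset.Icc 1 (N - c * P + 1),
            ((Finset.Icc 1 N).filter
              (fun j => psi n N i j = psi n N j (i + (c * P - 1)))).card ^ 2)
        ≤ ∑ _i ∈ Finset.Icc 1 (N - c * P + 1), (c * P - 1 + (4 * 2 ^ n + 4)) ^ 2 := by
          apply Finset.sum_le_sum
          intro i hi
          rw [Finset.mem_Icc] at hi
          apply Nat.pow_le_pow_left
          have hsub : (Finset.Icc 1 N).filter
                (fun j => psi n N i j = psi n N j (i + (c * P - 1)))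
              ⊆ Finset.Ioc i (i + (c * P - 1))
                ∪ ((Finset.Icc 1 N).filter (fun j => j ≤ i ∧ (i - j) % P = 0)
                  ∪ (Finset.Icc 1 N).filter (fun j => j ≤ i ∧ (i - j) % P = Q))
                ∪ ((Finset.Icc 1 N).filter (fun j => i ≤ j ∧ (j + 1 - i) % P = 0)
                  ∪ (Finset.Icc 1 N).filter (fun j => i ≤ j ∧ (j + 1 - i) % P = Q)) := by
            intro j hj
            rw [Finset.mem_filter, Finset.mem_Icc] at hj
            obtain ⟨hj1, hj2⟩ := hj
            rw [charB hP hPQ hQ c i j hc1 hi.1] at hj2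
            simp only [Finset.mem_union, Finset.mem_filter, Finset.mem_Ioc, Finset.mem_Icc]
            omega
          calc ((Finset.Icc 1 N).filter
                (fun j => psi n N i j = psi n N j (i + (c * P - 1)))).card
              ≤ _ := Finset.card_le_card hsub
            _ ≤ (Finset.Ioc i (i + (c * P - 1))).card
                + (((Finset.Icc 1 N).filter (fun j => j ≤ i ∧ (i - j) % P = 0)).card
                  + ((Finset.Icc 1 N).filter (fun j => j ≤ i ∧ (i - j) % P = Q)).card)
                + (((Finset.Icc 1 N).filter (fun j => i ≤ j ∧ (j + 1 - i) % P = 0)).card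
                  + ((Finset.Icc 1 N).filter (fun j => i ≤ j ∧ (j + 1 - i) % P = Q)).card) := by
              refine le_trans (Finset.card_union_le _ _)
                (add_le_add
                  (le_trans (Finset.card_union_le _ _)
                    (add_le_add_right (Finset.card_union_le _ _) _))
                  (Finset.card_union_le _ _))
            _ ≤ (c * P - 1) + ((N / P + 1) + (N / P + 1)) + ((N / P + 1) + (N / P + 1)) := by
              gcongr
              · rw [Nat.card_Ioc]; omega
              · exact count_left P 0 i N hPpos (by omega)
              · exact count_left P Q i N hPpos (by omega)
              · exact count_right P 0 i N hPpos hi.1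
              · exact count_right P Q i N hPpos hi.1
            _ = c * P - 1 + (4 * 2 ^ n + 4) := by rw [hNP]; ring
      _ = (N - c * P + 1) * (c * P - 1 + (4 * 2 ^ n + 4)) ^ 2 := by
          rw [Finset.sum_const, Nat.card_Icc, smul_eq_mul] <;> congr 1 <;> omega

end cases

lemma ineq1 (a u B : ℝ) (ha1 : 1 ≤ a) (hau : a ≤ u) (hB1 : 1 ≤ B) (hN1 : 1 ≤ u) :
    a^2*(u-a) - (u - a + 1) * (a - 1)^2 ≤ 200*B^2*u^2 := by
  nlinarith [mul_le_mul_of_nonneg_left hau (by linarith : (0:ℝ) ≤ u), sq_nonneg a,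
    mul_nonneg (by linarith : (0:ℝ) ≤ u - a) (by linarith : (0:ℝ) ≤ a),
    sq_nonneg u, sq_nonneg (B*u), mul_le_mul_of_nonneg_right (by nlinarith : (1:ℝ) ≤ B^2) (sq_nonneg u)]

lemma ineq2 (a u B : ℝ) (ha1 : 1 ≤ a) (hau : a ≤ u) (hB1 : 1 ≤ B) (hN1 : 1 ≤ u) :
    (u - a + 1) * (a - 1 + (4*B+4))^2 - a^2*(u-a) ≤ 200*B^2*u^2 := by
  have hB0 : (0:ℝ) ≤ B := by linarith
  have hu0 : (0:ℝ) ≤ u := by linarith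
  have hBu : (1:ℝ) ≤ B*u := by nlinarith
  have h1 : (u - a + 1) * (a - 1 + (4*B+4))^2 - a^2*(u-a)
      = (u-a)*((4*B+3)*((a+(4*B+3))+a)) + (a+(4*B+3))^2 := by ring
  have hterm1 : (u-a)*((4*B+3)*((a+(4*B+3))+a)) ≤ u*((7*B)*((u+(7*B))+u)) := by
    gcongr <;> nlinarith
  have hterm2 : (a+(4*B+3))^2 ≤ (u+7*B)^2 := by
    have h : a+(4*B+3) ≤ u+7*B := by nlinarith
    exact pow_le_pow_left₀ (by positivity) h 2
  have hM1 : B*u^2 ≤ B^2*u^2 := by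
    linarith [mul_nonneg (mul_nonneg hB0 (by linarith : (0:ℝ) ≤ B - 1)) (sq_nonneg u)]
  have hM2 : B^2*u ≤ B^2*u^2 := by
    linarith [mul_nonneg (sq_nonneg B) (by nlinarith : (0:ℝ) ≤ u^2 - u)]
  have hM3 : B*u ≤ B^2*u^2 := by
    linarith [mul_nonneg (by nlinarith : (0:ℝ) ≤ B*u) (by nlinarith : (0:ℝ) ≤ B*u - 1)]
  have hM4 : B^2 ≤ B^2*u^2 := by
    linarith [mul_nonneg (sq_nonneg B) (by nlinarith : (0:ℝ) ≤ u^2 - 1)]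
  have hM5 : u^2 ≤ B^2*u^2 := by
    linarith [mul_nonneg (by nlinarith : (0:ℝ) ≤ B^2 - 1) (sq_nonneg u)]
  linarith [h1, hterm1, hterm2, hM1, hM2, hM3, hM4, hM5]


/-- for `k = i + cP` (`0 ≤ c < 2^n`) the number of good matchings is
`((2^n - c)/2^n)³ N³ + O_n(N²)`, and for `k = i + cP - 1` (`1 ≤ c < 2^n`) it is
`((2^n c² - c³)/2^{3n}) N³ + O_n(N²)`. -/
theorem stmt13 (n : ℕ) :
    ∃ K : ℝ, ∀ N : ℕ, 0 < N → 2 ^ (n + 1) ∣ N →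
      (∀ c : ℕ, c < 2 ^ n →
        |(tripleCount n N (c * (N / 2 ^ n)) : ℝ) -
            ((((2 : ℝ) ^ n - c) / 2 ^ n) ^ 3) * (N : ℝ) ^ 3| ≤ K * (N : ℝ) ^ 2) ∧
      (∀ c : ℕ, 1 ≤ c → c < 2 ^ n →
        |(tripleCount n N (c * (N / 2 ^ n) - 1) : ℝ) -
            ((((2 : ℝ) ^ n * c ^ 2 - (c : ℝ) ^ 3) / 2 ^ (3 * n))) * (N : ℝ) ^ 3|
          ≤ K * (N : ℝ) ^ 2) := by
  refine ⟨200 * 4 ^ n, ?_⟩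
  intro N hN0 hdvd
  obtain ⟨m, hm⟩ := hdvd
  have hm0 : 0 < m := by
    rcases Nat.eq_zero_or_pos m with rfl | h
    · simp [hm] at hN0
    · exact h
  set P := N / 2 ^ n with hPdef
  have hP : N / 2 ^ n = P := rfl
  have hN2 : N = 2 ^ n * (2 * m) := by rw [hm, pow_succ]; ring
  have hPm : P = 2 * m := by
    rw [hPdef, hN2, Nat.mul_div_cancel_left _ (pow_pos two_pos n)]
  have hNP : N = 2 ^ n * P := by rw [hPm]; exact hN2
  have hPpos : 0 < P := by omega
  have hP2 : 2 ≤ P := by omega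
  have hB1 : (1:ℝ) ≤ 2 ^ n := one_le_pow₀ (by norm_num : (1:ℝ) ≤ 2)
  have h4n : (4:ℝ) ^ n = ((2:ℝ) ^ n) ^ 2 := by
    rw [show (4:ℝ) = 2 ^ 2 by norm_num, ← pow_mul, ← pow_mul, mul_comm]
  have hNR : (N:ℝ) = 2 ^ n * P := by exact_mod_cast hNP
  have hN1 : (1:ℝ) ≤ (N:ℝ) := by exact_mod_cast hN0
  constructor
  · -- case 1
    intro c hc
    have hcP : c * P ≤ N := by
      rw [hNP]; exact Nat.mul_le_mul_right P (le_of_lt hc)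
    have h2c : 2 * c ≤ c * P := by
      calc 2 * c = c * 2 := by ring
      _ ≤ c * P := Nat.mul_le_mul (le_refl c) hP2
    have key := case1count hP hPm hm0 hNP c hc
    have hAc : (N - (c * P - 2 * c) : ℕ) = (N - c * P) + 2 * c := by omega
    rw [key, hAc]
    have hAR : ((N - c * P : ℕ) : ℝ) = ((2:ℝ) ^ n - c) / 2 ^ n * N := by
      rw [Nat.cast_sub hcP]
      push_cast
      rw [hNR]
      field_simp
    have htar : (((2:ℝ) ^ n - c) / 2 ^ n) ^ 3 * (N:ℝ) ^ 3
        = ((N - c * P : ℕ) : ℝ) ^ 3 := by rw [hAR]; ring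
    rw [htar]
    push_cast
    set A := ((N - c * P : ℕ) : ℝ) with hA
    have hA0 : 0 ≤ A := Nat.cast_nonneg _
    have hAN : A ≤ (N:ℝ) := by
      rw [hA]; exact_mod_cast Nat.sub_le N (c * P)
    have hcB : (c:ℝ) ≤ 2 ^ n := by exact_mod_cast le_of_lt hc
    have hc0 : (0:ℝ) ≤ c := Nat.cast_nonneg _
    have hdiff : A * (A + 2 * c) ^ 2 - A ^ 3 = 4 * c * A ^ 2 + 4 * c ^ 2 * A := by ring
    have hnn : (0:ℝ) ≤ 4 * (c:ℝ) * A ^ 2 + 4 * (c:ℝ) ^ 2 * A := by positivity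
    rw [abs_of_nonneg (by linarith)]
    rw [h4n]
    have e1 : 4 * (c:ℝ) * A ^ 2 ≤ 4 * 2 ^ n * (N:ℝ) ^ 2 := by gcongr
    have e2 : 4 * (c:ℝ) ^ 2 * A ≤ 4 * ((2:ℝ) ^ n) ^ 2 * ((N:ℝ) ^ 2) := by
      have hNN2 : (N:ℝ) ≤ (N:ℝ) ^ 2 := by nlinarith
      calc 4 * (c:ℝ) ^ 2 * A ≤ 4 * ((2:ℝ) ^ n) ^ 2 * (N:ℝ) := by gcongr
      _ ≤ 4 * ((2:ℝ) ^ n) ^ 2 * (N:ℝ) ^ 2 := by gcongr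
    have e3 : 4 * (2:ℝ) ^ n * (N:ℝ) ^ 2 ≤ 4 * ((2:ℝ) ^ n) ^ 2 * (N:ℝ) ^ 2 := by
      linarith [mul_nonneg (mul_nonneg (by linarith : (0:ℝ) ≤ (2:ℝ) ^ n)
        (by linarith : (0:ℝ) ≤ (2:ℝ) ^ n - 1)) (sq_nonneg (N:ℝ))]
    have hpos : (0:ℝ) ≤ ((2:ℝ) ^ n) ^ 2 * (N:ℝ) ^ 2 := by positivity
    linarith [hdiff, e1, e2, e3, hpos]
  · -- case 2
    intro c hc1 hc
    have hcP : c * P ≤ N := by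
      rw [hNP]; exact Nat.mul_le_mul_right P (le_of_lt hc)
    have hPcP : P ≤ c * P := by
      calc P = 1 * P := (one_mul P).symm
      _ ≤ c * P := Nat.mul_le_mul_right P hc1
    have hc1' : 1 ≤ c * P := by omega
    obtain ⟨hlow, hup⟩ := case2bounds hP hPm hm0 hNP c hc1 hc
    set a := ((c * P : ℕ) : ℝ) with ha
    have ha1 : (1:ℝ) ≤ a := by
      rw [ha]; exact_mod_cast hc1'
    have hau : a ≤ (N:ℝ) := by rw [ha]; exact_mod_cast hcP
    have htar : ((2:ℝ) ^ n * c ^ 2 - (c:ℝ) ^ 3) / 2 ^ (3 * n) * (N:ℝ) ^ 3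
        = a ^ 2 * ((N:ℝ) - a) := by
      have h2 : (2:ℝ) ^ (3 * n) = ((2:ℝ) ^ n) ^ 3 := by
        rw [← pow_mul, mul_comm]
      have hne : ((2:ℝ) ^ n) ≠ 0 := by positivity
      rw [ha]
      push_cast
      rw [h2, hNR]
      field_simp
    rw [htar]
    have hlowR : ((N - c * P + 1 : ℕ) : ℝ) * ((c * P - 1 : ℕ) : ℝ) ^ 2
        ≤ (tripleCount n N (c * P - 1) : ℝ) := by exact_mod_cast hlow
    have hupR : (tripleCount n N (c * P - 1) : ℝ)
        ≤ ((N - c * P + 1 : ℕ) : ℝ) * ((c * P - 1 + (4 * 2 ^ n + 4) : ℕ) : ℝ) ^ 2 := by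
      exact_mod_cast hup
    have hcast1 : ((N - c * P + 1 : ℕ) : ℝ) = (N:ℝ) - a + 1 := by
      rw [ha]; push_cast [hcP]; ring
    have hcast2 : ((c * P - 1 : ℕ) : ℝ) = a - 1 := by
      rw [ha]; push_cast [hc1']; ring
    have hcast3 : ((c * P - 1 + (4 * 2 ^ n + 4) : ℕ) : ℝ)
        = a - 1 + (4 * (2:ℝ) ^ n + 4) := by
      rw [ha]; push_cast [hc1']; ring
    rw [hcast1, hcast2] at hlowR
    rw [hcast1, hcast3] at hupR
    have k1 := ineq1 a (N:ℝ) ((2:ℝ)^n) ha1 hau hB1 hN1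
    have k2 := ineq2 a (N:ℝ) ((2:ℝ)^n) ha1 hau hB1 hN1
    rw [abs_le, h4n]
    constructor
    · linarith [hlowR, k1]
    · linarith [hupR, k2]
end
end

section
/- Fix integers n ≥ 0 and m ≥ 1. The variance of the empirical m-th moment tends to zero: lim_{N→∞} (E[X_{m,n;N}²] − (E[X_{m,n;N}])²) = 0, where the expectation is over b ∈ ℝ^ℕ with respect to p^{⊗ℕ} and the limit is taken over positive multiples N of 2^{n+1}. -/
open MeasureTheory Filter Finset

noncomputable section

section Trace

variable {N : ℕ} (A : Matrix (Fin N) (Fin N) ℝ)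

lemma entry_pow (m : ℕ) : ∀ (x y : Fin N), (A ^ (m+1)) x y =
    ∑ f : Fin m → Fin N,
      (∏ j : Fin m, A ((Fin.cons x f : Fin (m+1) → Fin N) j.castSucc)
          ((Fin.cons x f : Fin (m+1) → Fin N) j.succ)) *
        A ((Fin.cons x f : Fin (m+1) → Fin N) (Fin.last m)) y := by
  induction m with
  | zero =>
    intro x y
    haveI : Unique (Fin 0 → Fin N) :=
      ⟨⟨fun i => i.elim0⟩, fun f => funext fun j => j.elim0⟩
    rw [Fintype.sum_unique]
    simp [pow_one]
  | succ m ih =>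
    intro x y
    rw [pow_succ', Matrix.mul_apply]
    simp_rw [ih, Finset.mul_sum]
    rw [← Equiv.sum_comp (Fin.consEquiv (fun _ : Fin (m+1) => Fin N)), Fintype.sum_prod_type]
    apply Finset.sum_congr rfl
    intro z _
    apply Finset.sum_congr rfl
    intro f _
    have hsymm : (Fin.consEquiv (fun _ : Fin (m+1) => Fin N)) (z, f) = Fin.cons z f := rfl
    rw [hsymm]
    have hc : ∀ j : Fin (m+1), (Fin.cons x (Fin.cons z f) : Fin (m+2) → Fin N) j.succ
        = (Fin.cons z f : Fin (m+1) → Fin N) j := by intro j; simp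
    rw [Fin.prod_univ_succ]
    have h1 : (Fin.cons x (Fin.cons z f) : Fin (m+2) → Fin N) ((0 : Fin (m+1)).castSucc) = x := rfl
    have h2 : (Fin.cons x (Fin.cons z f) : Fin (m+2) → Fin N) ((0 : Fin (m+1)).succ) = z := by
      rw [hc]; rfl
    rw [h1, h2]
    have h3 : ∀ j : Fin m,
        A ((Fin.cons x (Fin.cons z f) : Fin (m+2) → Fin N) j.succ.castSucc)
          ((Fin.cons x (Fin.cons z f) : Fin (m+2) → Fin N) j.succ.succ)
        = A ((Fin.cons z f : Fin (m+1) → Fin N) j.castSucc)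
            ((Fin.cons z f : Fin (m+1) → Fin N) j.succ) := by
      intro j
      rw [← Fin.succ_castSucc, hc, hc]
    rw [Finset.prod_congr rfl (fun j _ => h3 j)]
    have h4 : (Fin.cons x (Fin.cons z f) : Fin (m+2) → Fin N) (Fin.last (m+1))
        = (Fin.cons z f : Fin (m+1) → Fin N) (Fin.last m) := by
      have : Fin.last (m+1) = (Fin.last m).succ := rfl
      rw [this, hc]
    rw [h4]; ring

lemma trace_pow_eq (m : ℕ) (hm : 1 ≤ m) :
    (A ^ m).trace = ∑ i : Fin m → Fin N, ∏ j : Fin m, A (i j) (i (cycSucc j)) := by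
  obtain ⟨k, rfl⟩ := Nat.exists_eq_add_of_le hm
  have hk : 1 + k = k + 1 := Nat.add_comm 1 k
  rw [hk]
  rw [Matrix.trace]
  simp only [Matrix.diag]
  simp_rw [entry_pow]
  rw [← Equiv.sum_comp (Fin.consEquiv (fun _ : Fin (k+1) => Fin N)), Fintype.sum_prod_type]
  apply Finset.sum_congr rfl
  intro x _
  apply Finset.sum_congr rfl
  intro f _
  have hsymm : (Fin.consEquiv (fun _ : Fin (k+1) => Fin N)) (x, f) = Fin.cons x f := rfl
  rw [hsymm, Fin.prod_univ_castSucc]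
  congr 1
  · apply Finset.prod_congr rfl
    intro j _
    congr 1
    have : cycSucc (j.castSucc : Fin (k+1)) = j.succ := by
      ext
      simp [cycSucc, Fin.castSucc, Nat.mod_eq_of_lt (Nat.succ_lt_succ j.isLt)]
    rw [this]
  · have : cycSucc (Fin.last k) = 0 := by ext; simp [cycSucc, Fin.last]
    rw [this]
    rfl


end Trace

def mom (p : Measure ℝ) (k : ℕ) : ℝ := ∫ x, x ^ k ∂p

section Prob

variable (p : Measure ℝ) [IsProbabilityMeasure p]
variable (μprod : Measure (ℕ → ℝ)) [IsProbabilityMeasure μprod]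
variable (hprod : ∀ (s : Finset ℕ) (A : ℕ → Set ℝ), (∀ i, MeasurableSet (A i)) →
      μprod {b | ∀ i ∈ s, b i ∈ A i} = ∏ i ∈ s, p (A i))

lemma restrict_measurable (s : Finset ℕ) :
    Measurable (fun (b : ℕ → ℝ) (i : s) => b i) :=
  measurable_pi_lambda _ (fun i => measurable_pi_apply (i : ℕ))

include hprod in
lemma map_restrict (s : Finset ℕ) :
    Measure.map (fun (b : ℕ → ℝ) (i : s) => b i) μprod = Measure.pi (fun _ : s => p) := by
  refine (Measure.pi_eq fun A hA => ?_).symm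
  rw [Measure.map_apply (restrict_measurable s) (MeasurableSet.univ_pi hA)]
  have hset : (fun (b : ℕ → ℝ) (i : s) => b i) ⁻¹' (Set.univ.pi A) =
      {b : ℕ → ℝ | ∀ i ∈ s, b i ∈ (fun i : ℕ => if h : i ∈ s then A ⟨i, h⟩ else Set.univ) i} := by
    ext b
    simp only [Set.mem_preimage, Set.mem_pi, Set.mem_univ, forall_true_left, Set.mem_setOf_eq]
    constructor
    · intro h i hi
      simp only [dif_pos hi]
      exact h ⟨i, hi⟩
    · intro h i
      have := h i i.2
      simpa only [dif_pos i.2] using this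
  rw [hset, hprod s _ (fun i => by
    by_cases h : i ∈ s
    · simp only [dif_pos h]; exact hA _
    · simp only [dif_neg h]; exact MeasurableSet.univ)]
  rw [← Finset.prod_attach s (fun i => p (if h : (i : ℕ) ∈ s then A ⟨i, h⟩ else Set.univ))]
  rw [Finset.univ_eq_attach]
  apply Finset.prod_congr rfl
  intro i _
  simp only [dif_pos i.2]

variable {ι : Type} [Fintype ι]

include hprod in
lemma integral_prod_eq (hfin : ∀ k : ℕ, Integrable (fun x => x ^ k) p) (v : ι → ℕ) :
    ∫ b, ∏ j, b (v j) ∂μprod =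
      ∏ ℓ ∈ univ.image v, mom p ((univ.filter fun j => v j = ℓ).card) := by
  classical
  set s := univ.image v with hs
  set g : (s → ℝ) → ℝ :=
    fun x => ∏ ℓ : s, (x ℓ) ^ ((univ.filter fun j => v j = (ℓ : ℕ)).card) with hg
  have hgmeas : Measurable g := by
    apply Finset.measurable_prod
    intro ℓ _
    exact (measurable_pi_apply ℓ).pow_const _
  have hfun : ∀ b : ℕ → ℝ, (∏ j, b (v j)) = g (fun i : s => b i) := by
    intro b
    rw [hg]
    simp only []
    rw [Finset.prod_comp (fun ℓ => b ℓ) v, ← hs]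
    rw [← Finset.prod_attach s (fun ℓ => b ℓ ^ (univ.filter fun j => v j = ℓ).card),
      Finset.univ_eq_attach]
  simp_rw [hfun]
  have := (integral_map (μ := μprod) (restrict_measurable s).aemeasurable
    (f := g) hgmeas.aestronglyMeasurable).symm
  rw [this, map_restrict p μprod hprod s]
  letI : MeasureSpace ℝ := ⟨p⟩
  haveI : IsProbabilityMeasure (volume : Measure ℝ) := ‹IsProbabilityMeasure p›
  have hvol : Measure.pi (fun _ : s => p) = (volume : Measure (s → ℝ)) := rfl
  rw [hg, hvol]
  rw [← hvol, integral_fintype_prod_eq_prod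
    (f := fun (ℓ : s) (x : ℝ) => x ^ ((univ.filter fun j => v j = (ℓ : ℕ)).card))]
  rw [← Finset.prod_attach s (fun ℓ => mom p ((univ.filter fun j => v j = ℓ).card)),
    Finset.univ_eq_attach]
  rfl

include hprod in
lemma integrable_prod (hfin : ∀ k : ℕ, Integrable (fun x => x ^ k) p) (v : ι → ℕ) :
    Integrable (fun b => ∏ j, b (v j)) μprod := by
  classical
  set s := univ.image v with hs
  set g : (s → ℝ) → ℝ :=
    fun x => ∏ ℓ : s, (x ℓ) ^ ((univ.filter fun j => v j = (ℓ : ℕ)).card) with hg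
  have hgmeas : Measurable g := by
    apply Finset.measurable_prod
    intro ℓ _
    exact (measurable_pi_apply ℓ).pow_const _
  have hfun : ∀ b : ℕ → ℝ, (∏ j, b (v j)) = g (fun i : s => b i) := by
    intro b
    rw [hg]
    simp only []
    rw [Finset.prod_comp (fun ℓ => b ℓ) v, ← hs]
    rw [← Finset.prod_attach s (fun ℓ => b ℓ ^ (univ.filter fun j => v j = ℓ).card),
      Finset.univ_eq_attach]
  have : (fun b : ℕ → ℝ => ∏ j, b (v j)) = g ∘ (fun (b : ℕ → ℝ) (i : s) => b i) := by
    funext b; exact hfun b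
  rw [this]
  rw [← integrable_map_measure hgmeas.aestronglyMeasurable (restrict_measurable s).aemeasurable]
  rw [map_restrict p μprod hprod s]
  letI : MeasureSpace ℝ := ⟨p⟩
  haveI : IsProbabilityMeasure (volume : Measure ℝ) := ‹IsProbabilityMeasure p›
  have hvol : Measure.pi (fun _ : s => p) = (volume : Measure (s → ℝ)) := rfl
  rw [hg, hvol]
  exact Integrable.fintype_prod (E := ℝ)
    (f := fun (ℓ : s) (x : ℝ) => x ^ ((univ.filter fun j => v j = (ℓ : ℕ)).card))
    (fun ℓ => hfin _)


end Prob

lemma cycSucc_eq_add_one {k : ℕ} [NeZero k] (j : Fin k) : cycSucc j = j + 1 := by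
  ext
  rw [Fin.add_def, Fin.val_one']
  simp [cycSucc, Nat.add_mod_mod]

section Count

variable {m N P : ℕ}

abbrev EE (m : ℕ) := Fin m ⊕ Fin m

def eIdx {m : ℕ} : EE m → ℕ := Sum.elim (fun j => (j : ℕ)) (fun j => m + j)

lemma eIdx_inj {m : ℕ} : Function.Injective (eIdx (m := m)) := by
  rintro (a | a) (b | b) h <;>
    simp only [eIdx, Sum.elim_inl, Sum.elim_inr] at h
  · exact congrArg Sum.inl (Fin.ext h)
  · exact absurd h (by have := a.isLt; omega)
  · exact absurd h (by have := b.isLt; omega)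
  · exact congrArg Sum.inr (Fin.ext (by omega))

def eLin (m : ℕ) : LinearOrder (EE m) := LinearOrder.lift' eIdx eIdx_inj

attribute [local instance] eLin

def gmap {m N : ℕ} (q : (Fin m → Fin N) × (Fin m → Fin N)) : EE m → ℤ :=
  Sum.elim (fun j => (q.1 (cycSucc j) : ℤ) - (q.1 j : ℤ))
    (fun j => (q.2 (cycSucc j) : ℤ) - (q.2 j : ℤ))

def fP (P : ℕ) (δ : ℤ) : ℕ := min (δ.natAbs % P) (P - 1 - δ.natAbs % P)

def vmap {m N : ℕ} (P : ℕ) (q : (Fin m → Fin N) × (Fin m → Fin N)) : EE m → ℕ :=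
  fun e => fP P (gmap q e)

def BadPred {m N : ℕ} (P : ℕ) (q : (Fin m → Fin N) × (Fin m → Fin N)) : Prop :=
  (∃ j1 j2 : Fin m, vmap P q (.inl j1) = vmap P q (.inr j2)) ∧
    ∀ e, 2 ≤ (univ.filter fun e' => vmap P q e' = vmap P q e).card

instance {m N : ℕ} (P : ℕ) (q : (Fin m → Fin N) × (Fin m → Fin N)) :
    Decidable (BadPred P q) := by unfold BadPred; infer_instance

def badSet (m N P : ℕ) : Finset ((Fin m → Fin N) × (Fin m → Fin N)) :=
  univ.filter (BadPred P)

def cmap {m N : ℕ} (P : ℕ) (q : (Fin m → Fin N) × (Fin m → Fin N)) : EE m → EE m :=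
  fun e => (univ.filter fun e' => vmap P q e' = vmap P q e).min'
    ⟨e, mem_filter.mpr ⟨mem_univ e, rfl⟩⟩

lemma vmap_cmap (P : ℕ) (q : (Fin m → Fin N) × (Fin m → Fin N)) (e : EE m) :
    vmap P q (cmap P q e) = vmap P q e :=
  (mem_filter.mp ((univ.filter fun e' => vmap P q e' = vmap P q e).min'_mem _)).2

lemma cmap_eq_iff (P : ℕ) (q : (Fin m → Fin N) × (Fin m → Fin N)) (e1 e2 : EE m) :
    cmap P q e1 = cmap P q e2 ↔ vmap P q e1 = vmap P q e2 := by
  constructor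
  · intro h
    rw [← vmap_cmap P q e1, h, vmap_cmap]
  · intro h
    unfold cmap
    congr 1
    simp_rw [h]

lemma cmap_idem (P : ℕ) (q : (Fin m → Fin N) × (Fin m → Fin N)) (e : EE m) :
    cmap P q (cmap P q e) = cmap P q e :=
  (cmap_eq_iff P q _ _).mpr (vmap_cmap P q e)

def leadersC {m : ℕ} (c : EE m → EE m) : Finset (EE m) := univ.filter fun e => c e = e

def crossC {m : ℕ} (c : EE m → EE m) : Finset (Fin m) :=
  univ.filter fun j => ∃ j2, c (.inl j) = c (.inr j2)

def jstarC {m : ℕ} (hm : 0 < m) (c : EE m → EE m) : Fin m :=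
  if h : (crossC c).Nonempty then (crossC c).min' h else ⟨0, hm⟩

def cstarC {m : ℕ} (hm : 0 < m) (c : EE m → EE m) : EE m := c (.inl (jstarC hm c))

variable {n : ℕ}

lemma leaders_partition (P : ℕ) (q : (Fin m → Fin N) × (Fin m → Fin N)) :
    m + m = ∑ ℓ ∈ leadersC (cmap P q), (univ.filter fun e => cmap P q e = ℓ).card := by
  have h := Finset.card_eq_sum_card_fiberwise
    (f := cmap P q) (s := univ) (t := leadersC (cmap P q))
    (fun e _ => mem_filter.mpr ⟨mem_univ _, cmap_idem P q e⟩)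
  rw [← h, card_univ]
  simp [Fintype.card_sum]

lemma leaders_fiber_ge (P : ℕ) {q : (Fin m → Fin N) × (Fin m → Fin N)}
    (hq : BadPred P q) :
    ∀ ℓ ∈ leadersC (cmap P q), 2 ≤ (univ.filter fun e => cmap P q e = ℓ).card := by
  intro ℓ hℓ
  have hcl : cmap P q ℓ = ℓ := (mem_filter.mp hℓ).2
  have hfil : (univ.filter fun e => cmap P q e = ℓ) =
      (univ.filter fun e => vmap P q e = vmap P q ℓ) := by
    ext e
    simp only [mem_filter, mem_univ, true_and]
    rw [← cmap_eq_iff P q e ℓ]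
    constructor
    · intro h; rw [h, hcl]
    · intro h; rw [← hcl, h]
  rw [hfil]
  exact hq.2 ℓ

lemma leaders_card_le (P : ℕ) {q : (Fin m → Fin N) × (Fin m → Fin N)}
    (hq : BadPred P q) : (leadersC (cmap P q)).card ≤ m := by
  have h1 := leaders_partition P q
  have h2 := Finset.card_nsmul_le_sum (leadersC (cmap P q)) _ 2 (leaders_fiber_ge P hq)
  simp only [smul_eq_mul] at h2
  omega

lemma leaders_fiber_eq_two (P : ℕ) {q : (Fin m → Fin N) × (Fin m → Fin N)}
    (hq : BadPred P q) (hcard : (leadersC (cmap P q)).card = m) :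
    ∀ ℓ ∈ leadersC (cmap P q), (univ.filter fun e => cmap P q e = ℓ).card = 2 := by
  intro ℓ hℓ
  have h1 := leaders_partition P q
  have h2 : ∀ ℓ' ∈ (leadersC (cmap P q)).erase ℓ,
      2 ≤ (univ.filter fun e => cmap P q e = ℓ').card :=
    fun ℓ' hℓ' => leaders_fiber_ge P hq ℓ' (Finset.mem_of_mem_erase hℓ')
  have h3 : ((leadersC (cmap P q)).erase ℓ).card • 2 ≤
      ∑ ℓ' ∈ (leadersC (cmap P q)).erase ℓ, (univ.filter fun e => cmap P q e = ℓ').card :=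
    Finset.card_nsmul_le_sum _ _ 2 h2
  have h4 : (univ.filter fun e => cmap P q e = ℓ).card +
      ∑ ℓ' ∈ (leadersC (cmap P q)).erase ℓ, (univ.filter fun e => cmap P q e = ℓ').card =
      ∑ ℓ' ∈ leadersC (cmap P q), (univ.filter fun e => cmap P q e = ℓ').card :=
    Finset.add_sum_erase _ (fun ℓ' => (univ.filter fun e => cmap P q e = ℓ').card) hℓ
  have h5 : ((leadersC (cmap P q)).erase ℓ).card = m - 1 := by
    rw [Finset.card_erase_of_mem hℓ, hcard]
  have h6 := leaders_fiber_ge P hq ℓ hℓ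
  have hm1 : 1 ≤ m := by
    have : ℓ ∈ leadersC (cmap P q) := hℓ
    have : 0 < (leadersC (cmap P q)).card := Finset.card_pos.mpr ⟨ℓ, hℓ⟩
    omega
  simp only [smul_eq_mul] at h3
  omega

lemma cross_nonempty (P : ℕ) {q : (Fin m → Fin N) × (Fin m → Fin N)}
    (hq : BadPred P q) : (crossC (cmap P q)).Nonempty := by
  obtain ⟨j1, j2, hj⟩ := hq.1
  exact ⟨j1, mem_filter.mpr ⟨mem_univ _, ⟨j2, (cmap_eq_iff P q _ _).mpr hj⟩⟩⟩

lemma cstar_mem (hm : 0 < m) (P : ℕ) (q : (Fin m → Fin N) × (Fin m → Fin N)) :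
    cstarC hm (cmap P q) ∈ leadersC (cmap P q) :=
  mem_filter.mpr ⟨mem_univ _, cmap_idem P q _⟩

lemma jstar_unique (hm : 0 < m) (P : ℕ) {q : (Fin m → Fin N) × (Fin m → Fin N)}
    (hq : BadPred P q) (hcard : (leadersC (cmap P q)).card = m) :
    ∀ j : Fin m, cmap P q (.inl j) = cstarC hm (cmap P q) → j = jstarC hm (cmap P q) := by
  intro j hj
  set c := cmap P q with hc
  have hne := cross_nonempty P hq
  have hjs : jstarC hm c = (crossC c).min' hne := by
    unfold jstarC
    rw [dif_pos hne]
  have hjmem : jstarC hm c ∈ crossC c := by rw [hjs]; exact Finset.min'_mem _ _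
  obtain ⟨j2, hj2⟩ := (mem_filter.mp hjmem).2
  -- fiber of cstar has card two and contains inl jstar and inr j2
  have hmem1 : (Sum.inl (jstarC hm c) : EE m) ∈ (univ.filter fun e => c e = cstarC hm c) :=
    mem_filter.mpr ⟨mem_univ _, rfl⟩
  have hmem2 : (Sum.inr j2 : EE m) ∈ (univ.filter fun e => c e = cstarC hm c) :=
    mem_filter.mpr ⟨mem_univ _, hj2.symm⟩
  have hcard2 : (univ.filter fun e => c e = cstarC hm c).card = 2 :=
    leaders_fiber_eq_two P hq hcard _ (cstar_mem hm P q)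
  have hpair : ({Sum.inl (jstarC hm c), Sum.inr j2} : Finset (EE m)) ⊆
      (univ.filter fun e => c e = cstarC hm c) := by
    intro x hx
    rcases Finset.mem_insert.mp hx with h | h
    · rw [h]; exact hmem1
    · rw [Finset.mem_singleton.mp h]; exact hmem2
  have hpaircard : ({Sum.inl (jstarC hm c), Sum.inr j2} : Finset (EE m)).card = 2 := by
    rw [Finset.card_insert_of_notMem (by simp), Finset.card_singleton]
  have heq : (univ.filter fun e => c e = cstarC hm c) =
      ({Sum.inl (jstarC hm c), Sum.inr j2} : Finset (EE m)) :=
    (Finset.eq_of_subset_of_card_le hpair (by omega)).symm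
  have hjmem' : (Sum.inl j : EE m) ∈ (univ.filter fun e => c e = cstarC hm c) :=
    mem_filter.mpr ⟨mem_univ _, hj⟩
  rw [heq] at hjmem'
  rcases Finset.mem_insert.mp hjmem' with h | h
  · exact Sum.inl.inj h
  · exact absurd (Finset.mem_singleton.mp h) (by simp)

lemma vmap_lt (hP : 0 < P) (q : (Fin m → Fin N) × (Fin m → Fin N)) (e : EE m) :
    vmap P q e < P :=
  lt_of_le_of_lt (min_le_left _ _) (Nat.mod_lt _ hP)

lemma residue_cases (hP : 0 < P) (δ : ℤ) :
    δ % (P : ℤ) = (fP P δ : ℤ) ∨ δ % (P : ℤ) = (fP P δ : ℤ) + 1 ∨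
    δ % (P : ℤ) = (P : ℤ) - 1 - (fP P δ : ℤ) ∨ δ % (P : ℤ) = (P : ℤ) - (fP P δ : ℤ) := by
  have hrP : δ.natAbs % P < P := Nat.mod_lt _ hP
  have hv1 : fP P δ = δ.natAbs % P ∨ fP P δ = P - 1 - δ.natAbs % P := by
    unfold fP
    rcases min_cases (δ.natAbs % P) (P - 1 - δ.natAbs % P) with ⟨h, _⟩ | ⟨h, _⟩
    · left; exact h
    · right; exact h
  have hv2 : (fP P δ : ℤ) = (δ.natAbs % P : ℕ) ∨ (fP P δ : ℤ) = (P : ℤ) - 1 - (δ.natAbs % P : ℕ) := by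
    rcases hv1 with h | h
    · left; exact_mod_cast congrArg (Nat.cast : ℕ → ℤ) h
    · right
      rw [h]
      have h1 : δ.natAbs % P ≤ P - 1 := by omega
      push_cast [h1]
      omega
  have hδ : δ % (P : ℤ) = ((δ.natAbs % P : ℕ) : ℤ) ∨
      (δ % (P : ℤ) = (P : ℤ) - ((δ.natAbs % P : ℕ) : ℤ) ∧ 0 < δ.natAbs % P) ∨
      (δ % (P : ℤ) = 0 ∧ δ.natAbs % P = 0) := by
    rcases Int.natAbs_eq δ with h | h
    · left
      conv_lhs => rw [h]
      rw [Int.natCast_mod]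
    · have hmod : δ % (P : ℤ) = (-(δ.natAbs % P : ℕ) : ℤ) % (P : ℤ) := by
        conv_lhs => rw [h]
        have hdm : (δ.natAbs : ℤ) = (P : ℤ) * (δ.natAbs / P : ℕ) + (δ.natAbs % P : ℕ) := by
          exact_mod_cast (Nat.div_add_mod δ.natAbs P).symm
        rw [show (-(δ.natAbs : ℤ)) = -((δ.natAbs % P : ℕ) : ℤ) + (P : ℤ) * (-(δ.natAbs / P : ℕ) : ℤ) by rw [hdm]; ring]
        rw [Int.add_mul_emod_self_left]
      by_cases h0 : δ.natAbs % P = 0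
      · right; right
        constructor
        · rw [hmod, h0]
          simp
        · exact h0
      · right; left
        constructor
        · rw [hmod]
          rw [show (-(↑(δ.natAbs % P) : ℤ)) = ((P : ℤ) - ↑(δ.natAbs % P)) + (P:ℤ) * (-1) by ring]
          rw [Int.add_mul_emod_self_left]
          apply Int.emod_eq_of_lt
          · omega
          · omega
        · omega
  omega

def ρmap {m N : ℕ} (P : ℕ) (q : (Fin m → Fin N) × (Fin m → Fin N)) (e : EE m) : ℤ :=
  gmap q e % (P : ℤ)

def amap {m N : ℕ} (P : ℕ) (q : (Fin m → Fin N) × (Fin m → Fin N)) (e : EE m) : Fin 4 :=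
  if ρmap P q e = (vmap P q e : ℤ) then 0
  else if ρmap P q e = (vmap P q e : ℤ) + 1 then 1
  else if ρmap P q e = (P : ℤ) - 1 - (vmap P q e : ℤ) then 2 else 3

def εv : Fin 4 → ℤ := ![1, 1, -1, -1]

def ηv (P : ℕ) : Fin 4 → ℤ := ![0, 1, (P : ℤ) - 1, (P : ℤ)]

lemma rho_eq (hP : 0 < P) (q : (Fin m → Fin N) × (Fin m → Fin N)) (e : EE m) :
    ρmap P q e = εv (amap P q e) * (vmap P q e : ℤ) + ηv P (amap P q e) := by
  have hcases := residue_cases hP (gmap q e)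
  have hv : vmap P q e = fP P (gmap q e) := rfl
  unfold amap
  split_ifs with h1 h2 h3
  · simp only [εv, ηv, Matrix.cons_val_zero]
    rw [h1]; ring
  · simp only [εv, ηv, Matrix.cons_val_one, Matrix.head_cons, Matrix.cons_val_zero]
    rw [h2]; ring
  · simp only [εv, ηv]
    norm_num [show ((2:Fin 4)) = ⟨2, by norm_num⟩ from rfl]
    simp only [Matrix.cons_val]
    rw [h3]; ring
  · simp only [εv, ηv]
    norm_num [show ((3:Fin 4)) = ⟨3, by norm_num⟩ from rfl]
    simp only [Matrix.cons_val]
    unfold ρmap at h1 h2 h3 ⊢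
    rw [← hv] at hcases
    rcases hcases with h | h | h | h
    · exact absurd h h1
    · exact absurd h h2
    · exact absurd h h3
    · rw [h]; ring

lemma eps_sq (a : Fin 4) : εv a * εv a = 1 := by
  fin_cases a <;> simp [εv]

lemma rho_lt (hP : 0 < P) (q : (Fin m → Fin N) × (Fin m → Fin N)) (e : EE m) :
    0 ≤ ρmap P q e ∧ ρmap P q e < (P : ℤ) := by
  constructor
  · exact Int.emod_nonneg _ (by exact_mod_cast hP.ne')
  · exact Int.emod_lt_of_pos _ (by exact_mod_cast hP)

def zm {m N : ℕ} (P : ℕ) (q : (Fin m → Fin N) × (Fin m → Fin N)) (e : EE m) : ℤ :=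
  gmap q e / (P : ℤ)

lemma g_decomp (P : ℕ) (q : (Fin m → Fin N) × (Fin m → Fin N)) (e : EE m) :
    gmap q e = (P : ℤ) * zm P q e + ρmap P q e :=
  (Int.mul_ediv_add_emod _ _).symm

lemma g_bound (q : (Fin m → Fin N) × (Fin m → Fin N)) (e : EE m) :
    -(N : ℤ) < gmap q e ∧ gmap q e < (N : ℤ) := by
  cases e with
  | inl j =>
    have h1 := (q.1 (cycSucc j)).isLt
    have h2 := (q.1 j).isLt
    unfold gmap
    simp only [Sum.elim_inl]
    omega
  | inr j =>
    have h1 := (q.2 (cycSucc j)).isLt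
    have h2 := (q.2 j).isLt
    unfold gmap
    simp only [Sum.elim_inr]
    omega

lemma zm_bound (hP : 0 < P) (hN : N = 2 ^ n * P) (q : (Fin m → Fin N) × (Fin m → Fin N))
    (e : EE m) : 0 ≤ zm P q e + 2 ^ n ∧ zm P q e + 2 ^ n ≤ 2 ^ (n + 1) := by
  have hg := g_bound q e
  have hPz : (0 : ℤ) < (P : ℤ) := by exact_mod_cast hP
  have hub : zm P q e ≤ 2 ^ n := by
    have h1 : gmap q e ≤ (2 ^ n : ℤ) * (P : ℤ) := by
      have : (N : ℤ) = 2 ^ n * (P : ℤ) := by exact_mod_cast congrArg (Nat.cast : ℕ → ℤ) hN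
      omega
    calc zm P q e = gmap q e / (P : ℤ) := rfl
      _ ≤ ((2 ^ n : ℤ) * (P : ℤ)) / (P : ℤ) := Int.ediv_le_ediv hPz h1
      _ = 2 ^ n := Int.mul_ediv_cancel _ hPz.ne'
  have hlb : -(2 ^ n : ℤ) ≤ zm P q e := by
    have h1 : -((2 ^ n : ℤ) * (P : ℤ)) ≤ gmap q e := by
      have : (N : ℤ) = 2 ^ n * (P : ℤ)  := by exact_mod_cast congrArg (Nat.cast : ℕ → ℤ) hN
      omega
    calc (-(2 ^ n : ℤ)) = (-((2 ^ n : ℤ) * (P : ℤ))) / (P : ℤ) := by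
          rw [show (-((2 ^ n : ℤ) * (P : ℤ))) = (-(2 ^ n : ℤ)) * (P : ℤ) by ring,
            Int.mul_ediv_cancel _ hPz.ne']
      _ ≤ gmap q e / (P : ℤ) := Int.ediv_le_ediv hPz h1
  constructor
  · omega
  · have : (2 ^ (n + 1) : ℤ) = 2 ^ n + 2 ^ n := by ring
    omega

lemma sum_gmap_inl (q : (Fin m → Fin N) × (Fin m → Fin N)) :
    ∑ j : Fin m, gmap q (.inl j) = 0 := by
  unfold gmap
  simp only [Sum.elim_inl]
  rw [Finset.sum_sub_distrib]
  rcases Nat.eq_zero_or_pos m with hm | hm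
  · subst hm; simp
  · haveI : NeZero m := ⟨hm.ne'⟩
    have : ∑ j : Fin m, ((q.1 (cycSucc j) : ℤ)) = ∑ j : Fin m, ((q.1 j : ℤ)) := by
      rw [show (fun j : Fin m => ((q.1 (cycSucc j) : ℤ))) = fun j => ((q.1 (j + 1) : ℤ)) by
        funext j; rw [cycSucc_eq_add_one]]
      exact Equiv.sum_comp (Equiv.addRight (1 : Fin m)) (fun j => ((q.1 j : ℤ)))
    rw [this, sub_self]

lemma sum_gmap_inr (q : (Fin m → Fin N) × (Fin m → Fin N)) :
    ∑ j : Fin m, gmap q (.inr j) = 0 := by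
  unfold gmap
  simp only [Sum.elim_inr]
  rw [Finset.sum_sub_distrib]
  rcases Nat.eq_zero_or_pos m with hm | hm
  · subst hm; simp
  · haveI : NeZero m := ⟨hm.ne'⟩
    have : ∑ j : Fin m, ((q.2 (cycSucc j) : ℤ)) = ∑ j : Fin m, ((q.2 j : ℤ)) := by
      rw [show (fun j : Fin m => ((q.2 (cycSucc j) : ℤ))) = fun j => ((q.2 (j + 1) : ℤ)) by
        funext j; rw [cycSucc_eq_add_one]]
      exact Equiv.sum_comp (Equiv.addRight (1 : Fin m)) (fun j => ((q.2 j : ℤ)))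
    rw [this, sub_self]

lemma tuple_eq_of_diff (hm : 0 < m) (i1 i2 : Fin m → Fin N)
    (h0 : i1 ⟨0, hm⟩ = i2 ⟨0, hm⟩)
    (hd : ∀ j : Fin m, (i1 (cycSucc j) : ℤ) - (i1 j : ℤ) =
      (i2 (cycSucc j) : ℤ) - (i2 j : ℤ)) : i1 = i2 := by
  suffices h : ∀ jv (hj : jv < m), i1 ⟨jv, hj⟩ = i2 ⟨jv, hj⟩ by
    funext j
    have := h j.val j.isLt
    simpa using this
  intro jv
  induction jv with
  | zero => intro hj; exact h0
  | succ k ih =>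
    intro hj
    have hk : k < m := Nat.lt_of_succ_lt hj
    have hik := ih hk
    have hcyc : cycSucc ⟨k, hk⟩ = ⟨k + 1, hj⟩ := by
      ext; simp [cycSucc, Nat.mod_eq_of_lt hj]
    have hdk := hd ⟨k, hk⟩
    rw [hcyc, hik] at hdk
    have hval : ((i1 ⟨k + 1, hj⟩ : ℕ) : ℤ) = ((i2 ⟨k + 1, hj⟩ : ℕ) : ℤ) := by omega
    exact Fin.ext (by exact_mod_cast hval)

lemma vmap_jstar_det (hm : 0 < m) (hP : 0 < P)
    {q1 q2 : (Fin m → Fin N) × (Fin m → Fin N)}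
    (h1 : BadPred P q1) (h2 : BadPred P q2)
    (hc : cmap P q1 = cmap P q2)
    (ha : amap P q1 = amap P q2)
    (hcard : (leadersC (cmap P q1)).card = m)
    (hw : ∀ e ∈ (leadersC (cmap P q1)).erase (cstarC hm (cmap P q1)),
      vmap P q1 e = vmap P q2 e) :
    vmap P q1 (.inl (jstarC hm (cmap P q1))) = vmap P q2 (.inl (jstarC hm (cmap P q1))) := by
  have hcq2 : cmap P q2 = cmap P q1 := hc.symm
  set j0 := jstarC hm (cmap P q1) with hj0
  have key : ∀ q : (Fin m → Fin N) × (Fin m → Fin N), BadPred P q →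
      ρmap P q (.inl j0) = (-(∑ j ∈ univ.erase j0, ρmap P q (.inl j))) % (P : ℤ) := by
    intro q hq
    have hsum : ∑ j : Fin m, gmap q (.inl j) = 0 := sum_gmap_inl q
    have hdecomp : ∑ j : Fin m, gmap q (.inl j) =
        (P : ℤ) * (∑ j : Fin m, zm P q (.inl j)) + ∑ j : Fin m, ρmap P q (.inl j) := by
      rw [Finset.mul_sum, ← Finset.sum_add_distrib]
      exact Finset.sum_congr rfl fun j _ => g_decomp P q _
    have hsplit : ρmap P q (.inl j0) + ∑ j ∈ univ.erase j0, ρmap P q (.inl j) =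
        ∑ j : Fin m, ρmap P q (.inl j) :=
      Finset.add_sum_erase _ (fun j => ρmap P q (.inl j)) (mem_univ j0)
    have hr := rho_lt hP q (Sum.inl j0)
    have hz0 : (P : ℤ) * (∑ j : Fin m, zm P q (.inl j)) +
        (ρmap P q (.inl j0) + ∑ j ∈ univ.erase j0, ρmap P q (.inl j)) = 0 := by
      rw [hsplit, ← hdecomp, hsum]
    have heq : ρmap P q (.inl j0) =
        -(∑ j ∈ univ.erase j0, ρmap P q (.inl j)) +
          (P : ℤ) * (-(∑ j : Fin m, zm P q (.inl j))) := by linarith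
    have hself : ρmap P q (.inl j0) % (P : ℤ) = ρmap P q (.inl j0) :=
      Int.emod_eq_of_lt hr.1 hr.2
    rw [← hself]
    conv_lhs => rw [heq]
    rw [Int.add_mul_emod_self_left]
  have hKeq : ∑ j ∈ univ.erase j0, ρmap P q1 (.inl j) =
      ∑ j ∈ univ.erase j0, ρmap P q2 (.inl j) := by
    apply Finset.sum_congr rfl
    intro j hj
    have hjne : j ≠ j0 := Finset.ne_of_mem_erase hj
    have hlead : cmap P q1 (.inl j) ∈ (leadersC (cmap P q1)).erase (cstarC hm (cmap P q1)) := by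
      apply Finset.mem_erase.mpr
      refine ⟨fun hcontra => hjne (jstar_unique hm P h1 hcard j hcontra), ?_⟩
      exact mem_filter.mpr ⟨mem_univ _, cmap_idem P q1 _⟩
    have hveq : vmap P q1 (.inl j) = vmap P q2 (.inl j) := by
      rw [← vmap_cmap P q1 (.inl j), hw _ hlead]
      conv_rhs => rw [← vmap_cmap P q2 (.inl j), hcq2]
    rw [rho_eq hP q1, rho_eq hP q2, ha, hveq]
  have hρ : ρmap P q1 (.inl j0) = ρmap P q2 (.inl j0) := by
    rw [key q1 h1, key q2 h2, hKeq]
  have h1' := rho_eq hP q1 (Sum.inl j0)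
  have h2' := rho_eq hP q2 (Sum.inl j0)
  rw [ha] at h1'
  have hmul : εv (amap P q2 (Sum.inl j0)) * (vmap P q1 (Sum.inl j0) : ℤ) =
      εv (amap P q2 (Sum.inl j0)) * (vmap P q2 (Sum.inl j0) : ℤ) := by linarith
  have hε : εv (amap P q2 (Sum.inl j0)) ≠ 0 := by
    intro h
    have := eps_sq (amap P q2 (Sum.inl j0))
    rw [h] at this
    simp at this
  have := mul_left_cancel₀ hε hmul
  exact_mod_cast this

lemma bad_inj (hm : 0 < m) (hP : 0 < P) (hN : N = 2 ^ n * P)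
    {q1 q2 : (Fin m → Fin N) × (Fin m → Fin N)}
    (h1 : BadPred P q1) (h2 : BadPred P q2)
    (hc : cmap P q1 = cmap P q2) (ha : amap P q1 = amap P q2)
    (hz : zm P q1 = zm P q2)
    (h01 : q1.1 ⟨0, hm⟩ = q2.1 ⟨0, hm⟩) (h02 : q1.2 ⟨0, hm⟩ = q2.2 ⟨0, hm⟩)
    (hw : ∀ e ∈ (if (leadersC (cmap P q1)).card = m
        then (leadersC (cmap P q1)).erase (cstarC hm (cmap P q1))
        else leadersC (cmap P q1)), vmap P q1 e = vmap P q2 e) :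
    q1 = q2 := by
  have hcq2 : cmap P q2 = cmap P q1 := hc.symm
  have hv : ∀ e, vmap P q1 e = vmap P q2 e := by
    intro e
    have hv1 : vmap P q1 e = vmap P q1 (cmap P q1 e) := (vmap_cmap P q1 e).symm
    have hv2 : vmap P q2 e = vmap P q2 (cmap P q1 e) := by
      conv_lhs => rw [← vmap_cmap P q2 e, hcq2]
    rw [hv1, hv2]
    have hlead : cmap P q1 e ∈ leadersC (cmap P q1) :=
      mem_filter.mpr ⟨mem_univ _, cmap_idem P q1 e⟩
    by_cases hcard : (leadersC (cmap P q1)).card = m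
    · by_cases hcs : cmap P q1 e = cstarC hm (cmap P q1)
      · rw [hcs]
        have hx1 : vmap P q1 (cstarC hm (cmap P q1)) =
            vmap P q1 (.inl (jstarC hm (cmap P q1))) := vmap_cmap P q1 _
        have hx2 : vmap P q2 (cstarC hm (cmap P q1)) =
            vmap P q2 (.inl (jstarC hm (cmap P q1))) := by
          have hcst : cstarC hm (cmap P q1) = cmap P q2 (.inl (jstarC hm (cmap P q1))) := by
            rw [hcq2]; rfl
          rw [hcst]
          exact vmap_cmap P q2 _
        rw [hx1, hx2]
        exact vmap_jstar_det hm hP h1 h2 hc ha hcard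
          (by rw [if_pos hcard] at hw; exact hw)
      · exact hw _ (by rw [if_pos hcard]; exact Finset.mem_erase.mpr ⟨hcs, hlead⟩)
    · exact hw _ (by rw [if_neg hcard]; exact hlead)
  have hρ : ∀ e, ρmap P q1 e = ρmap P q2 e := by
    intro e
    rw [rho_eq hP q1 e, rho_eq hP q2 e, ha, hv e]
  have hg : ∀ e, gmap q1 e = gmap q2 e := by
    intro e
    rw [g_decomp P q1 e, g_decomp P q2 e, hρ e, hz]
  have hfst : q1.1 = q2.1 := tuple_eq_of_diff hm _ _ h01 (fun j => by
    have := hg (.inl j); unfold gmap at this; simpa using this)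
  have hsnd : q1.2 = q2.2 := tuple_eq_of_diff hm _ _ h02 (fun j => by
    have := hg (.inr j); unfold gmap at this; simpa using this)
  exact Prod.ext hfst hsnd

theorem badSet_card_le (hm : 0 < m) (hP : 0 < P) (hN : N = 2 ^ n * P) :
    (badSet m N P).card ≤
      (m + m) ^ (m + m) *
        (4 ^ (m + m) * ((2 ^ (n + 1) + 1) ^ (m + m) * (N ^ 2 * P ^ (m - 1)))) := by
  classical
  have hpart := Finset.card_eq_sum_card_fiberwise
    (f := fun q => cmap P q) (s := badSet m N P) (t := univ) (fun q _ => mem_univ _)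
  rw [hpart]
  have hbound : ∀ c : EE m → EE m,
      ((badSet m N P).filter fun q => cmap P q = c).card ≤
        4 ^ (m + m) * ((2 ^ (n + 1) + 1) ^ (m + m) * (N ^ 2 * P ^ (m - 1))) := by
    intro c
    rcases Finset.eq_empty_or_nonempty ((badSet m N P).filter fun q => cmap P q = c)
      with he | ⟨q0, hq0⟩
    · rw [he]; simp
    obtain ⟨hq0bad', hq0c⟩ := Finset.mem_filter.mp hq0
    have hq0bad : BadPred P q0 := (Finset.mem_filter.mp hq0bad').2
    set L' : Finset (EE m) := if (leadersC c).card = m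
      then (leadersC c).erase (cstarC hm c) else leadersC c with hL'
    have hL'card : L'.card ≤ m - 1 := by
      have hcle : (leadersC c).card ≤ m := by
        rw [← hq0c]; exact leaders_card_le P hq0bad
      rw [hL']
      split_ifs with h
      · rw [Finset.card_erase_of_mem (by rw [← hq0c]; exact cstar_mem hm P q0), h]
      · have hne : (leadersC c).card ≠ m := h
        omega
    set Φ : ((Fin m → Fin N) × (Fin m → Fin N)) →
        ((EE m → Fin 4) × (EE m → Fin (2 ^ (n + 1) + 1)) × (Fin N × Fin N) × (↥L' → Fin P)) :=
      fun q =>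
        (amap P q,
         fun e => ⟨(zm P q e + 2 ^ n).toNat, by
            have hb := zm_bound hP hN q e
            have hcast : ((2 : ℤ) ^ (n + 1)) = ((2 ^ (n + 1) : ℕ) : ℤ) := by push_cast; ring
            omega⟩,
         (q.1 ⟨0, hm⟩, q.2 ⟨0, hm⟩),
         fun e => ⟨vmap P q (e : EE m), vmap_lt hP q _⟩) with hΦ
    have hinj : Set.InjOn Φ ↑((badSet m N P).filter fun q => cmap P q = c) := by
      intro x hx y hy hxy
      obtain ⟨hxbad', hxc⟩ := Finset.mem_filter.mp (Finset.mem_coe.mp hx)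
      obtain ⟨hybad', hyc⟩ := Finset.mem_filter.mp (Finset.mem_coe.mp hy)
      have hxbad : BadPred P x := (Finset.mem_filter.mp hxbad').2
      have hybad : BadPred P y := (Finset.mem_filter.mp hybad').2
      rw [hΦ] at hxy
      simp only [Prod.mk.injEq] at hxy
      obtain ⟨ha, hβ, ⟨h01, h02⟩, hwf⟩ := hxy
      have hz : zm P x = zm P y := by
        funext e
        have h1 := congrFun hβ e
        have hb1 := zm_bound hP hN x e
        have hb2 := zm_bound hP hN y e
        have h2 : (zm P x e + 2 ^ n).toNat = (zm P y e + 2 ^ n).toNat := by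
          exact congrArg Fin.val h1
        omega
      apply bad_inj hm hP hN hxbad hybad (by rw [hxc, hyc]) ha hz h01 h02
      intro e he
      have he' : e ∈ L' := by
        rw [hL']
        rw [hxc] at he
        exact he
      have := congrFun hwf ⟨e, he'⟩
      exact congrArg Fin.val this
    have hcard := Finset.card_le_card_of_injOn Φ (fun a _ => mem_univ _) hinj
    rw [Finset.card_univ] at hcard
    refine le_trans hcard ?_
    rw [Fintype.card_prod, Fintype.card_prod, Fintype.card_prod,
      Fintype.card_fun, Fintype.card_fun, Fintype.card_fun,
      Fintype.card_fin, Fintype.card_fin, Fintype.card_fin,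
      Fintype.card_sum, Fintype.card_fin, Fintype.card_coe]
    have hPpow : P ^ L'.card ≤ P ^ (m - 1) :=
      Nat.pow_le_pow_right hP hL'card
    calc 4 ^ (m + m) * ((2 ^ (n + 1) + 1) ^ (m + m) * (Fintype.card (Fin N × Fin N) * P ^ L'.card))
        ≤ 4 ^ (m + m) * ((2 ^ (n + 1) + 1) ^ (m + m) * (Fintype.card (Fin N × Fin N) * P ^ (m - 1))) := by
          apply Nat.mul_le_mul_left
          apply Nat.mul_le_mul_left
          exact Nat.mul_le_mul_left _ hPpow
      _ = 4 ^ (m + m) * ((2 ^ (n + 1) + 1) ^ (m + m) * (N ^ 2 * P ^ (m - 1))) := by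
          rw [Fintype.card_prod, Fintype.card_fin]
          ring_nf
  calc ∑ c ∈ (univ : Finset (EE m → EE m)),
        ((badSet m N P).filter fun q => cmap P q = c).card
      ≤ ∑ _c ∈ (univ : Finset (EE m → EE m)),
          (4 ^ (m + m) * ((2 ^ (n + 1) + 1) ^ (m + m) * (N ^ 2 * P ^ (m - 1)))) :=
        Finset.sum_le_sum fun c _ => hbound c
    _ = (m + m) ^ (m + m) *
          (4 ^ (m + m) * ((2 ^ (n + 1) + 1) ^ (m + m) * (N ^ 2 * P ^ (m - 1)))) := by
        rw [Finset.sum_const, Finset.card_univ, Fintype.card_fun, Fintype.card_sum,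
          Fintype.card_fin, smul_eq_mul]


end Count

section Assembly

variable {n m : ℕ}
variable (p : Measure ℝ) [IsProbabilityMeasure p]
variable (μprod : Measure (ℕ → ℝ)) [IsProbabilityMeasure μprod]

/-- A uniform bound for moment products. -/
def Mb (p : Measure ℝ) (m : ℕ) : ℝ := 1 + ∑ i ∈ Finset.range (m + m + 1), |mom p i|

lemma Mb_one_le : 1 ≤ Mb p m :=
  le_add_of_nonneg_right (Finset.sum_nonneg fun _ _ => abs_nonneg _)

lemma mom_le_Mb {k : ℕ} (hk : k ≤ m + m) : |mom p k| ≤ Mb p m := by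
  have h1 : |mom p k| ≤ ∑ i ∈ Finset.range (m + m + 1), |mom p i| :=
    Finset.single_le_sum (f := fun i => |mom p i|) (fun _ _ => abs_nonneg _)
      (Finset.mem_range.mpr (by omega))
  have h2 : (0 : ℝ) ≤ 1 := zero_le_one
  unfold Mb
  linarith

lemma prod_mom_bound (s : Finset ℕ) (k : ℕ → ℕ) (hcard : s.card ≤ m + m)
    (hk : ∀ ℓ ∈ s, k ℓ ≤ m + m) :
    |∏ ℓ ∈ s, mom p (k ℓ)| ≤ (Mb p m) ^ (m + m) := by
  rw [Finset.abs_prod]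
  calc ∏ ℓ ∈ s, |mom p (k ℓ)| ≤ ∏ _ℓ ∈ s, Mb p m :=
      Finset.prod_le_prod (fun _ _ => abs_nonneg _) (fun ℓ hℓ => mom_le_Mb p (hk ℓ hℓ))
    _ = (Mb p m) ^ s.card := by rw [Finset.prod_const]
    _ ≤ (Mb p m) ^ (m + m) := pow_le_pow_right₀ (Mb_one_le p) hcard

lemma cov_vanish (hmean : ∫ x, x ∂p = 0) (v1 v2 : Fin m → ℕ)
    (hnb : ¬((∃ j1 j2 : Fin m, v1 j1 = v2 j2) ∧
      ∀ e : EE m, 2 ≤ (univ.filter fun e' => Sum.elim v1 v2 e' = Sum.elim v1 v2 e).card)) :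
    ∏ ℓ ∈ univ.image (Sum.elim v1 v2),
        mom p ((univ.filter fun e : EE m => Sum.elim v1 v2 e = ℓ).card) =
      (∏ ℓ ∈ univ.image v1, mom p ((univ.filter fun j => v1 j = ℓ).card)) *
        (∏ ℓ ∈ univ.image v2, mom p ((univ.filter fun j => v2 j = ℓ).card)) := by
  classical
  have hmom1 : mom p 1 = 0 := by
    unfold mom
    simpa using hmean
  have hsplit : ∀ ℓ, (univ.filter fun e : EE m => Sum.elim v1 v2 e = ℓ).card =
      (univ.filter fun j => v1 j = ℓ).card + (univ.filter fun j => v2 j = ℓ).card := by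
    intro ℓ
    have hds : (univ.filter fun e : EE m => Sum.elim v1 v2 e = ℓ) =
        (univ.filter fun j => v1 j = ℓ).disjSum (univ.filter fun j => v2 j = ℓ) := by
      ext e
      cases e <;> simp
    rw [hds, Finset.card_disjSum]
  have himg : univ.image (Sum.elim v1 v2) = univ.image v1 ∪ univ.image v2 := by
    ext ℓ
    simp only [mem_image, mem_union, mem_univ, true_and]
    constructor
    · rintro ⟨e, he⟩
      cases e with
      | inl j => exact Or.inl ⟨j, he⟩
      | inr j => exact Or.inr ⟨j, he⟩
    · rintro (⟨j, hj⟩ | ⟨j, hj⟩)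
      exacts [⟨.inl j, hj⟩, ⟨.inr j, hj⟩]
  by_cases hdis : ∃ j1 j2, v1 j1 = v2 j2
  · have h2 : ∃ e : EE m,
        (univ.filter fun e' => Sum.elim v1 v2 e' = Sum.elim v1 v2 e).card < 2 := by
      by_contra hno
      push_neg at hno
      exact hnb ⟨hdis, fun e => hno e⟩
    obtain ⟨e, he⟩ := h2
    have hmem : e ∈ (univ.filter fun e' => Sum.elim v1 v2 e' = Sum.elim v1 v2 e) :=
      mem_filter.mpr ⟨mem_univ _, rfl⟩
    have hone : (univ.filter fun e' => Sum.elim v1 v2 e' = Sum.elim v1 v2 e).card = 1 := by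
      have := Finset.card_pos.mpr ⟨e, hmem⟩
      omega
    have hLHS : ∏ ℓ ∈ univ.image (Sum.elim v1 v2),
        mom p ((univ.filter fun e : EE m => Sum.elim v1 v2 e = ℓ).card) = 0 :=
      Finset.prod_eq_zero (Finset.mem_image_of_mem _ (mem_univ e)) (by rw [hone]; exact hmom1)
    rw [hLHS]
    symm
    cases e with
    | inl j =>
      have hone' : (univ.filter fun e : EE m => Sum.elim v1 v2 e = v1 j).card = 1 := hone
      have hs := hsplit (v1 j)
      have hj1 : 1 ≤ (univ.filter fun j' => v1 j' = v1 j).card :=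
        Finset.card_pos.mpr ⟨j, mem_filter.mpr ⟨mem_univ _, rfl⟩⟩
      have h1 : (univ.filter fun j' => v1 j' = v1 j).card = 1 := by omega
      rw [Finset.prod_eq_zero (Finset.mem_image_of_mem v1 (mem_univ j))
        (by rw [h1]; exact hmom1), zero_mul]
    | inr j =>
      have hone' : (univ.filter fun e : EE m => Sum.elim v1 v2 e = v2 j).card = 1 := hone
      have hs := hsplit (v2 j)
      have hj1 : 1 ≤ (univ.filter fun j' => v2 j' = v2 j).card :=
        Finset.card_pos.mpr ⟨j, mem_filter.mpr ⟨mem_univ _, rfl⟩⟩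
      have h1 : (univ.filter fun j' => v2 j' = v2 j).card = 1 := by omega
      rw [Finset.prod_eq_zero (Finset.mem_image_of_mem v2 (mem_univ j))
        (by rw [h1]; exact hmom1), mul_zero]
  · have hdisj : Disjoint (univ.image v1) (univ.image v2) := by
      rw [Finset.disjoint_left]
      rintro ℓ h1 h2
      obtain ⟨j1, _, hj1⟩ := mem_image.mp h1
      obtain ⟨j2, _, hj2⟩ := mem_image.mp h2
      exact hdis ⟨j1, j2, by rw [hj1, hj2]⟩
    rw [himg, Finset.prod_union hdisj]
    congr 1
    · apply Finset.prod_congr rfl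
      intro ℓ hℓ
      rw [hsplit]
      have hzero : (univ.filter fun j => v2 j = ℓ).card = 0 := by
        rw [Finset.card_eq_zero, Finset.filter_eq_empty_iff]
        intro j _
        obtain ⟨j1, _, hj1⟩ := mem_image.mp hℓ
        intro hj
        exact hdis ⟨j1, j, by rw [hj1, hj]⟩
      rw [hzero, add_zero]
    · apply Finset.prod_congr rfl
      intro ℓ hℓ
      rw [hsplit]
      have hzero : (univ.filter fun j => v1 j = ℓ).card = 0 := by
        rw [Finset.card_eq_zero, Finset.filter_eq_empty_iff]
        intro j _
        obtain ⟨j2, _, hj2⟩ := mem_image.mp hℓ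
        intro hj
        exact hdis ⟨j, j2, by rw [hj2, hj]⟩
      rw [hzero, zero_add]

lemma vmap_eq_edgePsi {N P : ℕ} (hNP : N = 2 ^ n * P)
    (q : (Fin m → Fin N) × (Fin m → Fin N)) :
    vmap P q = Sum.elim (edgePsi n N q.1) (edgePsi n N q.2) := by
  have hdiv : N / 2 ^ n = P := by
    rw [hNP]
    exact Nat.mul_div_cancel_left _ (by positivity)
  funext e
  cases e with
  | inl j =>
    show fP P (gmap q (.inl j)) = edgePsi n N q.1 j
    unfold edgePsi psi fP gmap
    rw [hdiv]
    simp only [Sum.elim_inl]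
    have habs : ((((q.1 j : ℕ) + 1 : ℕ) : ℤ) - (((q.1 (cycSucc j) : ℕ) + 1 : ℕ) : ℤ)).natAbs =
        ((q.1 (cycSucc j) : ℤ) - (q.1 j : ℤ)).natAbs := by
      rw [show ((((q.1 j : ℕ) + 1 : ℕ) : ℤ) - (((q.1 (cycSucc j) : ℕ) + 1 : ℕ) : ℤ)) =
        -(((q.1 (cycSucc j) : ℤ)) - ((q.1 j : ℤ))) by push_cast; ring, Int.natAbs_neg]
    rw [habs]
  | inr j =>
    show fP P (gmap q (.inr j)) = edgePsi n N q.2 j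
    unfold edgePsi psi fP gmap
    rw [hdiv]
    simp only [Sum.elim_inr]
    have habs : ((((q.2 j : ℕ) + 1 : ℕ) : ℤ) - (((q.2 (cycSucc j) : ℕ) + 1 : ℕ) : ℤ)).natAbs =
        ((q.2 (cycSucc j) : ℤ) - (q.2 j : ℤ)).natAbs := by
      rw [show ((((q.2 j : ℕ) + 1 : ℕ) : ℤ) - (((q.2 (cycSucc j) : ℕ) + 1 : ℕ) : ℤ)) =
        -(((q.2 (cycSucc j) : ℤ)) - ((q.2 j : ℤ))) by push_cast; ring, Int.natAbs_neg]
    rw [habs]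

lemma variance_bound
    (hprod : ∀ (s : Finset ℕ) (A : ℕ → Set ℝ), (∀ i, MeasurableSet (A i)) →
      μprod {b | ∀ i ∈ s, b i ∈ A i} = ∏ i ∈ s, p (A i))
    (hmean : ∫ x, x ∂p = 0)
    (hfin : ∀ k : ℕ, Integrable (fun x => x ^ k) p)
    (hm : 1 ≤ m) {N P : ℕ} (hP : 0 < P) (hNP : N = 2 ^ n * P) :
    |(∫ b, (empMoment n N m b) ^ 2 ∂μprod) - (∫ b, empMoment n N m b ∂μprod) ^ 2|
      ≤ (((N : ℝ) ^ ((m : ℝ) / 2 + 1))⁻¹) ^ 2 *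
          ((badSet m N P).card * (2 * ((Mb p m) ^ (m + m)) ^ 2)) := by
  classical
  set c0 : ℝ := ((N : ℝ) ^ ((m : ℝ) / 2 + 1))⁻¹ with hc0
  have hexp : ∀ b : ℕ → ℝ, empMoment n N m b
      = c0 * ∑ i : Fin m → Fin N, ∏ j : Fin m, b (edgePsi n N i j) := by
    intro b
    unfold empMoment
    rw [trace_pow_eq _ m hm]
    rfl
  have hint1 : ∀ i : Fin m → Fin N,
      Integrable (fun b => ∏ j : Fin m, b (edgePsi n N i j)) μprod :=
    fun i => integrable_prod p μprod hprod hfin _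
  set Mv : (Fin m → Fin N) → ℝ := fun i =>
    ∏ ℓ ∈ univ.image (edgePsi n N i),
      mom p ((univ.filter fun j => edgePsi n N i j = ℓ).card) with hMv
  have hEX : ∫ b, empMoment n N m b ∂μprod = c0 * ∑ i : Fin m → Fin N, Mv i := by
    simp_rw [hexp]
    rw [integral_const_mul, integral_finset_sum univ (fun i _ => hint1 i)]
    congr 1
    exact Finset.sum_congr rfl fun i _ => integral_prod_eq p μprod hprod hfin _
  set Pm : ((Fin m → Fin N) × (Fin m → Fin N)) → ℝ := fun q =>
    ∏ ℓ ∈ univ.image (vmap P q),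
      mom p ((univ.filter fun e : EE m => vmap P q e = ℓ).card) with hPm
  have hsq : ∀ b : ℕ → ℝ, (empMoment n N m b) ^ 2 =
      c0 ^ 2 * ∑ q : (Fin m → Fin N) × (Fin m → Fin N), ∏ e : EE m, b (vmap P q e) := by
    intro b
    rw [hexp, mul_pow,
      sq (∑ i : Fin m → Fin N, ∏ j : Fin m, b (edgePsi n N i j)),
      Finset.sum_mul_sum, Fintype.sum_prod_type]
    congr 1
    apply Finset.sum_congr rfl
    intro i _
    apply Finset.sum_congr rfl
    intro i' _
    rw [vmap_eq_edgePsi hNP (i, i'), Fintype.prod_sum_type]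
    rfl
  have hint2 : ∀ q : (Fin m → Fin N) × (Fin m → Fin N),
      Integrable (fun b => ∏ e : EE m, b (vmap P q e)) μprod :=
    fun q => integrable_prod p μprod hprod hfin _
  have hEX2 : ∫ b, (empMoment n N m b) ^ 2 ∂μprod =
      c0 ^ 2 * ∑ q : (Fin m → Fin N) × (Fin m → Fin N), Pm q := by
    simp_rw [hsq]
    rw [integral_const_mul, integral_finset_sum univ (fun q _ => hint2 q)]
    congr 1
    exact Finset.sum_congr rfl fun q _ => integral_prod_eq p μprod hprod hfin _
  have hEXsq : (∫ b, empMoment n N m b ∂μprod) ^ 2 =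
      c0 ^ 2 * ∑ q : (Fin m → Fin N) × (Fin m → Fin N), Mv q.1 * Mv q.2 := by
    rw [hEX, mul_pow, sq (∑ i : Fin m → Fin N, Mv i), Finset.sum_mul_sum,
      Fintype.sum_prod_type]
  have hdiff : (∫ b, (empMoment n N m b) ^ 2 ∂μprod) -
      (∫ b, empMoment n N m b ∂μprod) ^ 2 =
      c0 ^ 2 * ∑ q : (Fin m → Fin N) × (Fin m → Fin N), (Pm q - Mv q.1 * Mv q.2) := by
    rw [hEX2, hEXsq, ← mul_sub, ← Finset.sum_sub_distrib]
  have hvan : ∀ q ∈ (univ : Finset ((Fin m → Fin N) × (Fin m → Fin N))),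
      q ∉ badSet m N P → Pm q - Mv q.1 * Mv q.2 = 0 := by
    intro q _ hq
    have hnb : ¬ BadPred P q := by
      intro hb
      exact hq (Finset.mem_filter.mpr ⟨mem_univ _, hb⟩)
    have hveq := vmap_eq_edgePsi (n := n) hNP q
    have hPMeq : Pm q = Mv q.1 * Mv q.2 := by
      simp only [hPm, hMv]
      rw [hveq]
      exact cov_vanish p hmean (edgePsi n N q.1) (edgePsi n N q.2)
        (fun hx => hnb (by unfold BadPred; rw [hveq]; exact hx))
    rw [hPMeq, sub_self]
  have hsum0 : ∑ q : (Fin m → Fin N) × (Fin m → Fin N), (Pm q - Mv q.1 * Mv q.2) =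
      ∑ q ∈ badSet m N P, (Pm q - Mv q.1 * Mv q.2) :=
    (Finset.sum_subset (Finset.subset_univ _) hvan).symm
  have hbnd : ∀ q : (Fin m → Fin N) × (Fin m → Fin N),
      |Pm q - Mv q.1 * Mv q.2| ≤ 2 * ((Mb p m) ^ (m + m)) ^ 2 := by
    intro q
    have h1 : |Pm q| ≤ (Mb p m) ^ (m + m) := by
      simp only [hPm]
      apply prod_mom_bound
      · exact le_trans (Finset.card_image_le) (by simp [Fintype.card_sum])
      · intro ℓ _
        exact le_trans (Finset.card_filter_le _ _) (by simp [Fintype.card_sum])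
    have h2 : ∀ i : Fin m → Fin N, |Mv i| ≤ (Mb p m) ^ (m + m) := by
      intro i
      simp only [hMv]
      apply prod_mom_bound
      · exact le_trans (Finset.card_image_le)
          (by simp only [Finset.card_univ, Fintype.card_fin]; omega)
      · intro ℓ _
        exact le_trans (Finset.card_filter_le _ _)
          (by simp only [Finset.card_univ, Fintype.card_fin]; omega)
    have hMb1 : (1 : ℝ) ≤ (Mb p m) ^ (m + m) := one_le_pow₀ (Mb_one_le p)
    calc |Pm q - Mv q.1 * Mv q.2| ≤ |Pm q| + |Mv q.1 * Mv q.2| := by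
          rw [sub_eq_add_neg]
          exact le_trans (abs_add_le _ _) (by rw [abs_neg])
      _ = |Pm q| + |Mv q.1| * |Mv q.2| := by rw [abs_mul]
      _ ≤ (Mb p m) ^ (m + m) + (Mb p m) ^ (m + m) * (Mb p m) ^ (m + m) := by
          apply add_le_add h1
          exact mul_le_mul (h2 q.1) (h2 q.2) (abs_nonneg _) (le_trans zero_le_one hMb1)
      _ ≤ 2 * ((Mb p m) ^ (m + m)) ^ 2 := by nlinarith
  have hc0nn : 0 ≤ c0 := by
    rw [hc0]
    positivity
  rw [hdiff, hsum0, abs_mul, abs_pow, abs_of_nonneg hc0nn]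
  apply mul_le_mul_of_nonneg_left ?_ (pow_nonneg hc0nn 2)
  calc |∑ q ∈ badSet m N P, (Pm q - Mv q.1 * Mv q.2)|
      ≤ ∑ q ∈ badSet m N P, |Pm q - Mv q.1 * Mv q.2| := Finset.abs_sum_le_sum_abs _ _
    _ ≤ ∑ _q ∈ badSet m N P, (2 * ((Mb p m) ^ (m + m)) ^ 2) :=
        Finset.sum_le_sum fun q _ => hbnd q
    _ = (badSet m N P).card * (2 * ((Mb p m) ^ (m + m)) ^ 2) := by
        rw [Finset.sum_const, nsmul_eq_mul]



end Assembly

/-- the variance of the empirical `m`-th moment tends to zero: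
`lim_{N→∞} (E[X_{m,n;N}²] - E[X_{m,n;N}]²) = 0` (limit over positive multiples
`N` of `2^(n+1)`). -/
theorem stmt19 (n m : ℕ) (hm : 1 ≤ m) (p : Measure ℝ) [IsProbabilityMeasure p]
    (hmean : ∫ x, x ∂p = 0) (hvar : ∫ x, x ^ 2 ∂p = 1)
    (hfin : ∀ k : ℕ, Integrable (fun x => x ^ k) p)
    (μprod : Measure (ℕ → ℝ)) [IsProbabilityMeasure μprod]
    (hprod : ∀ (s : Finset ℕ) (A : ℕ → Set ℝ), (∀ i, MeasurableSet (A i)) →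
      μprod {b | ∀ i ∈ s, b i ∈ A i} = ∏ i ∈ s, p (A i)) :
    Tendsto (fun t : ℕ =>
        (∫ b, (empMoment n (2 ^ (n + 1) * (t + 1)) m b) ^ 2 ∂μprod) -
          (∫ b, empMoment n (2 ^ (n + 1) * (t + 1)) m b ∂μprod) ^ 2)
      atTop (nhds 0) := by
  classical
  set K : ℕ := (m + m) ^ (m + m) * 4 ^ (m + m) * (2 ^ (n + 1) + 1) ^ (m + m) with hK
  set CM : ℝ := 2 * ((Mb p m) ^ (m + m)) ^ 2 with hCM
  have hCMnn : 0 ≤ CM := by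
    rw [hCM]
    positivity
  set D : ℝ := (K : ℝ) * CM with hD
  have hDnn : 0 ≤ D := mul_nonneg (Nat.cast_nonneg _) hCMnn
  have key : ∀ t : ℕ,
      |(∫ b, (empMoment n (2 ^ (n + 1) * (t + 1)) m b) ^ 2 ∂μprod) -
          (∫ b, empMoment n (2 ^ (n + 1) * (t + 1)) m b ∂μprod) ^ 2|
        ≤ D * (((t : ℝ) + 1))⁻¹ := by
    intro t
    set N : ℕ := 2 ^ (n + 1) * (t + 1) with hNdef
    set P : ℕ := 2 * (t + 1) with hPdef
    have hP : 0 < P := by positivity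
    have hNP : N = 2 ^ n * P := by
      rw [hNdef, hPdef, pow_succ]
      ring
    have hN0 : 0 < N := by positivity
    have hNpos : (0 : ℝ) < (N : ℝ) := by exact_mod_cast hN0
    have hb := variance_bound p μprod hprod hmean hfin hm hP hNP
    have hcard := badSet_card_le (m := m) (N := N) (P := P) (n := n) hm hP hNP
    have hcard2 : (badSet m N P).card ≤ K * N ^ (m + 1) := by
      have hPN : P ≤ N := by
        rw [hNP]
        exact Nat.le_mul_of_pos_left _ (by positivity)
      have h1 : P ^ (m - 1) ≤ N ^ (m - 1) := Nat.pow_le_pow_left hPN _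
      have h2 : N ^ 2 * P ^ (m - 1) ≤ N ^ (m + 1) := by
        calc N ^ 2 * P ^ (m - 1) ≤ N ^ 2 * N ^ (m - 1) := Nat.mul_le_mul_left _ h1
          _ = N ^ (2 + (m - 1)) := (pow_add N 2 (m - 1)).symm
          _ = N ^ (m + 1) := by congr 1; omega
      calc (badSet m N P).card
          ≤ (m + m) ^ (m + m) * (4 ^ (m + m) * ((2 ^ (n + 1) + 1) ^ (m + m)
              * (N ^ 2 * P ^ (m - 1)))) := hcard
        _ = K * (N ^ 2 * P ^ (m - 1)) := by rw [hK]; ring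
        _ ≤ K * N ^ (m + 1) := Nat.mul_le_mul_left _ h2
    have hrpow : (((N : ℝ) ^ ((m : ℝ) / 2 + 1))⁻¹) ^ 2 * ((N : ℝ) ^ (m + 1 : ℕ)) =
        ((N : ℝ))⁻¹ := by
      have h1 : (((N : ℝ) ^ ((m : ℝ) / 2 + 1))⁻¹) ^ 2 =
          (N : ℝ) ^ (-((m : ℝ) / 2 + 1) * 2) := by
        rw [← Real.rpow_neg hNpos.le,
          ← Real.rpow_natCast ((N : ℝ) ^ (-((m : ℝ) / 2 + 1))) 2,
          ← Real.rpow_mul hNpos.le]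
        norm_num
      rw [h1, ← Real.rpow_natCast (N : ℝ) (m + 1), ← Real.rpow_add hNpos,
        show (-((m : ℝ) / 2 + 1) * 2 + ((m + 1 : ℕ) : ℝ)) = -1 by push_cast; ring]
      exact Real.rpow_neg_one _
    have hstep : (((N : ℝ) ^ ((m : ℝ) / 2 + 1))⁻¹) ^ 2 * ((badSet m N P).card * CM)
        ≤ D * ((N : ℝ))⁻¹ := by
      have hcastle : ((badSet m N P).card : ℝ) ≤ (K : ℝ) * (N : ℝ) ^ (m + 1 : ℕ) := by
        have := hcard2
        exact_mod_cast this
      have hc0nn : (0 : ℝ) ≤ (((N : ℝ) ^ ((m : ℝ) / 2 + 1))⁻¹) ^ 2 := by positivity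
      calc (((N : ℝ) ^ ((m : ℝ) / 2 + 1))⁻¹) ^ 2 * ((badSet m N P).card * CM)
          ≤ (((N : ℝ) ^ ((m : ℝ) / 2 + 1))⁻¹) ^ 2 * (((K : ℝ) * (N : ℝ) ^ (m + 1 : ℕ)) * CM) := by
            apply mul_le_mul_of_nonneg_left _ hc0nn
            exact mul_le_mul_of_nonneg_right hcastle hCMnn
        _ = ((((N : ℝ) ^ ((m : ℝ) / 2 + 1))⁻¹) ^ 2 * ((N : ℝ) ^ (m + 1 : ℕ))) * ((K : ℝ) * CM) := by
            ring
        _ = D * ((N : ℝ))⁻¹ := by rw [hrpow, hD]; ring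
    have hNt : ((N : ℝ))⁻¹ ≤ (((t : ℝ) + 1))⁻¹ := by
      have h1 : ((t : ℝ) + 1) ≤ (N : ℝ) := by
        have : t + 1 ≤ N := by
          rw [hNdef]
          have : 1 ≤ 2 ^ (n + 1) := Nat.one_le_two_pow
          nlinarith
        exact_mod_cast this
      have h2 : (0 : ℝ) < (t : ℝ) + 1 := by positivity
      exact inv_anti₀ h2 h1
    calc |(∫ b, (empMoment n N m b) ^ 2 ∂μprod) - (∫ b, empMoment n N m b ∂μprod) ^ 2|
        ≤ (((N : ℝ) ^ ((m : ℝ) / 2 + 1))⁻¹) ^ 2 * ((badSet m N P).card * CM) := hb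
      _ ≤ D * ((N : ℝ))⁻¹ := hstep
      _ ≤ D * (((t : ℝ) + 1))⁻¹ := mul_le_mul_of_nonneg_left hNt hDnn
  apply squeeze_zero_norm (a := fun t : ℕ => D * (((t : ℝ) + 1))⁻¹)
  · intro t
    rw [Real.norm_eq_abs]
    exact key t
  · have h0 : Tendsto (fun t : ℕ => D * (1 / ((t : ℝ) + 1))) atTop (nhds (D * 0)) :=
      tendsto_one_div_add_atTop_nhds_zero_nat.const_mul D
    simp only [mul_zero] at h0
    simp_rw [one_div] at h0
    exact h0
end
end
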